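/- arXiv:1202.3963 — 10 statements merged into one kernel-verified Lean document; each statement's English description precedes it below -/
import Mathlib

section
/- Let H be a complex Hilbert space, n ≥ 2 an integer, and T a bounded linear operator on H with T^n = 0. Then the numerical radius of T satisfies w(T) ≤ ‖T‖ · cos(π/(n+1)). -/
open Finset

lemma contr_cs {H : Type*} [NormedAddCommGroup H] [InnerProductSpace ℂ H]
    (S : H →L[ℂ] H) (hS : ∀ u, ‖S u‖ ≤ ‖u‖) (u v : H) :
    ‖(inner ℂ u v : ℂ) - inner ℂ (S u) (S v)‖
      ≤ Real.sqrt (‖u‖ ^ 2 - ‖S u‖ ^ 2) * Real.sqrt (‖v‖ ^ 2 - ‖S v‖ ^ 2) := by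
  set B : ℂ := (inner ℂ u v : ℂ) - inner ℂ (S u) (S v) with hB
  set α : ℝ := ‖u‖ ^ 2 - ‖S u‖ ^ 2 with hα'
  set β : ℝ := ‖v‖ ^ 2 - ‖S v‖ ^ 2 with hβ'
  have hα : 0 ≤ α := by nlinarith [hS u, norm_nonneg u, norm_nonneg (S u)]
  have hβ : 0 ≤ β := by nlinarith [hS v, norm_nonneg v, norm_nonneg (S v)]
  by_cases hB0 : B = 0
  · rw [hB0]; simp; positivity
  · set p : ℝ := ‖B‖ with hp'
    have hp : 0 < p := norm_pos_iff.mpr hB0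
    set φ : ℂ := (starRingEnd ℂ) B / (p : ℂ) with hφ'
    have hφB : φ * B = (p : ℂ) := by
      rw [hφ', div_mul_eq_mul_div, Complex.conj_mul', ← hp', sq, mul_div_assoc,
        div_self (by exact_mod_cast hp.ne'), mul_one]
    have hφnorm : ‖φ‖ = 1 := by
      rw [hφ', norm_div, RCLike.norm_conj, Complex.norm_real, Real.norm_eq_abs,
        abs_of_pos hp, ← hp', div_self hp.ne']
    have expand : ∀ (a b : H) (t : ℝ), ‖a - (t * φ) • b‖ ^ 2
        = ‖a‖ ^ 2 - 2 * (t * (φ * (inner ℂ a b : ℂ)).re) + t ^ 2 * ‖b‖ ^ 2 := by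
      intro a b t
      rw [norm_sub_sq (𝕜 := ℂ), inner_smul_right]
      congr 2
      · simp [Complex.mul_re]
        ring
      · rw [norm_smul, norm_mul, hφnorm, mul_one, Complex.norm_real,
          Real.norm_eq_abs, mul_pow, sq_abs]
    have hre : (φ * (inner ℂ u v : ℂ)).re - (φ * (inner ℂ (S u) (S v) : ℂ)).re = p := by
      have h1 : φ * (inner ℂ u v : ℂ) - φ * (inner ℂ (S u) (S v) : ℂ) = (p : ℂ) := by
        rw [← mul_sub, ← hB, hφB]
      have h2 := congrArg Complex.re h1
      simpa using h2
    have hquad : ∀ t : ℝ, 0 ≤ β * (t * t) + (-(2 * p)) * t + α := by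
      intro t
      have h0 : 0 ≤ ‖u - (t * φ) • v‖ ^ 2 - ‖S u - (t * φ) • S v‖ ^ 2 := by
        have h1 := hS (u - (t * φ) • v)
        have h2 : S (u - (t * φ) • v) = S u - (t * φ) • S v := by
          simp [map_sub, map_smul]
        rw [h2] at h1
        nlinarith [norm_nonneg (u - (t * φ) • v), norm_nonneg (S u - (t * φ) • S v)]
      rw [expand u v t, expand (S u) (S v) t] at h0
      have hkey : t * ((φ * (inner ℂ u v : ℂ)).re - (φ * (inner ℂ (S u) (S v) : ℂ)).re)
          = t * p := by rw [hre]
      rw [hα', hβ']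
      nlinarith [h0, hkey]
    have hd := discrim_le_zero hquad
    rw [discrim] at hd
    have hple : p ^ 2 ≤ α * β := by nlinarith
    calc p = Real.sqrt (p ^ 2) := (Real.sqrt_sq hp.le).symm
      _ ≤ Real.sqrt (α * β) := Real.sqrt_le_sqrt hple
      _ = Real.sqrt α * Real.sqrt β := Real.sqrt_mul hα β

lemma path_sum_le (n : ℕ) (hn : 1 ≤ n) (a : ℕ → ℝ) (han : a n = 0) :
    ∑ k ∈ Finset.range n, a k * a (k + 1)
      ≤ Real.cos (Real.pi / ((n : ℝ) + 1)) * ∑ k ∈ Finset.range n, a k ^ 2 := by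
  set θ : ℝ := Real.pi / ((n : ℝ) + 1) with hθ
  have hn1 : (0:ℝ) < (n:ℝ) + 1 := by positivity
  have hθpos : 0 < θ := by rw [hθ]; positivity
  set s : ℕ → ℝ := fun j => Real.sin ((j : ℝ) * θ) with hs
  have hrec : ∀ j : ℕ, s (j + 2) + s j = 2 * Real.cos θ * s (j + 1) := by
    intro j
    have e1 : ((j : ℝ) + 2) * θ = ((j : ℝ) + 1) * θ + θ := by ring
    have e2 : (j : ℝ) * θ = ((j : ℝ) + 1) * θ - θ := by ring
    simp only [hs]
    push_cast
    rw [e1, e2, Real.sin_add, Real.sin_sub]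
    ring
  have hspos : ∀ j : ℕ, j < n → 0 < s (j + 1) := by
    intro j hj
    have hj' : ((j : ℝ) + 1) < (n : ℝ) + 1 := by exact_mod_cast Nat.succ_lt_succ hj
    apply Real.sin_pos_of_pos_of_lt_pi
    · push_cast; positivity
    · push_cast
      calc ((j : ℝ) + 1) * θ < ((n : ℝ) + 1) * θ :=
            mul_lt_mul_of_pos_right hj' hθpos
        _ = Real.pi := by rw [hθ]; field_simp
  have hsn1 : s (n + 1) = 0 := by
    simp only [hs]
    push_cast
    rw [show ((n : ℝ) + 1) * θ = Real.pi by rw [hθ]; field_simp]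
    exact Real.sin_pi
  have hs0 : s 0 = 0 := by simp [hs]
  -- per-term inequality
  have hkey : ∀ k ∈ range n, a k * a (k + 1)
      ≤ s (k + 2) / (2 * s (k + 1)) * a k ^ 2
        + s (k + 1) / (2 * s (k + 2)) * a (k + 1) ^ 2 := by
    intro k hk
    rw [mem_range] at hk
    rcases lt_or_eq_of_le (Nat.succ_le_of_lt hk) with h | h
    · have h1 := hspos k hk
      have h2 := hspos (k + 1) h
      have h2' : s (k + 1 + 1) = s (k + 2) := by norm_num
      rw [h2'] at h2
      rw [div_mul_eq_mul_div, div_mul_eq_mul_div,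
        div_add_div _ _ (by positivity) (by positivity), le_div_iff₀ (by positivity)]
      nlinarith [sq_nonneg (s (k + 2) * a k - s (k + 1) * a (k + 1)), mul_pos h1 h2]
    · have h2 : s (k + 2) = 0 := by rw [show k + 2 = n + 1 by omega]; exact hsn1
      have h3 : a (k + 1) = 0 := by rw [show k + 1 = n from h]; exact han
      rw [h2, h3]
      simp
  have hsum := Finset.sum_le_sum hkey
  -- split the RHS sum
  rw [Finset.sum_add_distrib] at hsum
  -- reindex the second sum
  have hre2 : ∑ k ∈ range n, s (k + 1) / (2 * s (k + 2)) * a (k + 1) ^ 2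
      = ∑ k ∈ range n, s k / (2 * s (k + 1)) * a k ^ 2 := by
    have h := Finset.sum_range_succ' (fun j => s j / (2 * s (j + 1)) * a j ^ 2) n
    rw [Finset.sum_range_succ (fun j => s j / (2 * s (j + 1)) * a j ^ 2) n] at h
    simp only [hs0, han] at h
    simp only [zero_div, zero_mul, mul_zero, add_zero, ne_eq] at h
    -- h : ∑_{k<n} f k + f n-term = ∑_{k<n} f (k+1) + 0
    linarith [h]
  rw [hre2] at hsum
  rw [← Finset.sum_add_distrib] at hsum
  refine hsum.trans ?_
  rw [Finset.mul_sum]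
  apply Finset.sum_le_sum
  intro k hk
  rw [mem_range] at hk
  have h1 := hspos k hk
  have hr := hrec k
  have : s (k + 2) / (2 * s (k + 1)) * a k ^ 2 + s k / (2 * s (k + 1)) * a k ^ 2
      = (s (k + 2) + s k) / (2 * s (k + 1)) * a k ^ 2 := by ring
  have h2 : 2 * Real.cos θ * s (k + 1) / (2 * s (k + 1)) = Real.cos θ := by
    field_simp
  rw [this, hr, h2]


/-- **Haagerup–de la Harpe inequality.** If `T` is a bounded operator on a complex
Hilbert space with `T ^ n = 0` for some `n ≥ 2`, then the numerical radius of `T`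
satisfies `w(T) ≤ ‖T‖ · cos (π / (n+1))`. -/
theorem numRadius_le_of_nilpotent {H : Type*} [NormedAddCommGroup H]
    [InnerProductSpace ℂ H] [CompleteSpace H]
    (n : ℕ) (hn : 2 ≤ n) (T : H →L[ℂ] H) (hT : T ^ n = 0) :
    sSup { r : ℝ | ∃ x : H, ‖x‖ = 1 ∧ r = ‖(inner ℂ (T x) x : ℂ)‖ }
      ≤ ‖T‖ * Real.cos (Real.pi / ((n : ℝ) + 1)) := by
  have hn1 : (0:ℝ) < (n:ℝ) + 1 := by positivity
  have hcos : 0 ≤ Real.cos (Real.pi / ((n : ℝ) + 1)) := by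
    apply Real.cos_nonneg_of_mem_Icc
    constructor
    · have : (0:ℝ) ≤ Real.pi / ((n : ℝ) + 1) := by positivity
      linarith [Real.pi_pos]
    · rw [div_le_div_iff₀ hn1 (by norm_num)]
      have : (2:ℝ) ≤ (n:ℝ) + 1 := by
        have : (1:ℝ) ≤ (n:ℝ) := by exact_mod_cast Nat.one_le_of_lt hn
        linarith
      nlinarith [Real.pi_pos]
  have hrhs : 0 ≤ ‖T‖ * Real.cos (Real.pi / ((n : ℝ) + 1)) :=
    mul_nonneg (norm_nonneg T) hcos
  apply Real.sSup_le _ hrhs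
  rintro r ⟨x, hx, rfl⟩
  by_cases hT0 : T = 0
  · simpa [hT0] using hrhs
  · have hTpos : 0 < ‖T‖ := norm_pos_iff.mpr hT0
    set S : H →L[ℂ] H := ‖T‖⁻¹ • T with hSdef
    have hS : ∀ u, ‖S u‖ ≤ ‖u‖ := by
      intro u
      have h1 : ‖S u‖ = ‖T‖⁻¹ * ‖T u‖ := by
        rw [hSdef, ContinuousLinearMap.smul_apply, norm_smul, Real.norm_eq_abs,
          abs_of_pos (inv_pos.mpr hTpos)]
      rw [h1, inv_mul_le_iff₀ hTpos]
      exact T.le_opNorm u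
    have hSn : S ^ n = 0 := by
      rw [hSdef, smul_pow, hT, smul_zero]
    set y : ℕ → H := fun k => (S ^ k) x with hy'
    have hy : ∀ k, y (k + 1) = S (y k) := by
      intro k
      simp only [hy', pow_succ']
      rfl
    have hy0 : y 0 = x := by simp [hy']
    have hyn : y n = 0 := by simp only [hy']; rw [hSn]; simp
    have hyn1 : y (n + 1) = 0 := by rw [hy, hyn, map_zero]
    have hmono : ∀ k, ‖y (k + 1)‖ ≤ ‖y k‖ := fun k => by rw [hy]; exact hS _
    set d : ℕ → ℝ := fun k => Real.sqrt (‖y k‖ ^ 2 - ‖y (k + 1)‖ ^ 2) with hd'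
    have hd2 : ∀ k, d k ^ 2 = ‖y k‖ ^ 2 - ‖y (k + 1)‖ ^ 2 := by
      intro k
      apply Real.sq_sqrt
      nlinarith [hmono k, norm_nonneg (y k), norm_nonneg (y (k + 1))]
    have hdn : d n = 0 := by simp [hd', hyn, hyn1]
    have hsum2 : ∑ k ∈ range n, d k ^ 2 = 1 := by
      have : ∀ k ∈ range n, d k ^ 2 = ‖y k‖ ^ 2 - ‖y (k + 1)‖ ^ 2 :=
        fun k _ => hd2 k
      rw [Finset.sum_congr rfl this,
        Finset.sum_range_sub' (fun k => ‖y k‖ ^ 2) n, hy0, hyn, hx]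
      norm_num
    have htel : (inner ℂ (S x) x : ℂ)
        = ∑ k ∈ range n, ((inner ℂ (y (k + 1)) (y k) : ℂ) - inner ℂ (y (k + 2)) (y (k + 1))) := by
      rw [Finset.sum_range_sub' (fun k => (inner ℂ (y (k + 1)) (y k) : ℂ)) n]
      simp [hy0, hyn, hyn1, hy 0]
    have hterm : ∀ k ∈ range n,
        ‖(inner ℂ (y (k + 1)) (y k) : ℂ) - inner ℂ (y (k + 2)) (y (k + 1))‖ ≤ d k * d (k + 1) := by
      intro k _
      have h := contr_cs S hS (y (k + 1)) (y k)
      rw [← hy k, ← hy (k + 1)] at h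
      calc ‖(inner ℂ (y (k + 1)) (y k) : ℂ) - inner ℂ (y (k + 2)) (y (k + 1))‖
          ≤ Real.sqrt (‖y (k + 1)‖ ^ 2 - ‖y (k + 2)‖ ^ 2)
            * Real.sqrt (‖y k‖ ^ 2 - ‖y (k + 1)‖ ^ 2) := h
        _ = d k * d (k + 1) := by rw [hd']; ring
    have hSbound : ‖(inner ℂ (S x) x : ℂ)‖ ≤ Real.cos (Real.pi / ((n : ℝ) + 1)) := by
      calc ‖(inner ℂ (S x) x : ℂ)‖
          = ‖∑ k ∈ range n, ((inner ℂ (y (k + 1)) (y k) : ℂ) - inner ℂ (y (k + 2)) (y (k + 1)))‖ := by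
            rw [htel]
        _ ≤ ∑ k ∈ range n, ‖(inner ℂ (y (k + 1)) (y k) : ℂ) - inner ℂ (y (k + 2)) (y (k + 1))‖ :=
            norm_sum_le _ _
        _ ≤ ∑ k ∈ range n, d k * d (k + 1) := Finset.sum_le_sum hterm
        _ ≤ Real.cos (Real.pi / ((n : ℝ) + 1)) * ∑ k ∈ range n, d k ^ 2 :=
            path_sum_le n (by omega) d hdn
        _ = Real.cos (Real.pi / ((n : ℝ) + 1)) := by rw [hsum2, mul_one]
    have hTx : (inner ℂ (T x) x : ℂ) = (‖T‖ : ℂ) * inner ℂ (S x) x := by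
      have hTS : T = (‖T‖ : ℝ) • S := by
        rw [hSdef, smul_smul, mul_inv_cancel₀ hTpos.ne', one_smul]
      conv_lhs => rw [hTS]
      rw [ContinuousLinearMap.smul_apply,
        RCLike.real_smul_eq_coe_smul (K := ℂ), inner_smul_left]
      simp
    rw [hTx, norm_mul, Complex.norm_real, Real.norm_eq_abs, abs_of_pos hTpos]
    exact mul_le_mul_of_nonneg_left hSbound hTpos.le
end

section
/- Let n ≥ 2 and let F(e^{it}) = ∑_{j=-(n-1)}^{n-1} c_j e^{ijt} be a trigonometric polynomial with complex coefficients satisfying F(e^{it}) ≥ 0 for all real t. Then for every integer k with 1 ≤ k ≤ n−1 one has |c_k| ≤ c_0 · cos( π / (⌊(n−1)/k⌋ + 2) ), where ⌊·⌋ denotes the integer part. -/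
open Complex Finset

lemma es_dft (M : ℕ) (hM : 0 < M) (j : ℤ) :
    ∑ l ∈ Finset.range M, Complex.exp (2 * (Real.pi : ℂ) * Complex.I * j * l / M) =
      if (M : ℤ) ∣ j then (M : ℂ) else 0 := by
  have hM0 : (M : ℂ) ≠ 0 := Nat.cast_ne_zero.mpr hM.ne'
  set z : ℂ := Complex.exp (2 * (Real.pi : ℂ) * Complex.I * j / M) with hz
  have hterm : ∀ l : ℕ, Complex.exp (2 * (Real.pi : ℂ) * Complex.I * j * l / M) = z ^ l := by
    intro l
    rw [hz, ← Complex.exp_nat_mul]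
    ring_nf
  have hzM : z ^ M = 1 := by
    rw [hz, ← Complex.exp_nat_mul]
    have h : (M : ℂ) * (2 * (Real.pi : ℂ) * Complex.I * j / M) = (j : ℂ) * (2 * Real.pi * Complex.I) := by
      field_simp
    rw [h, Complex.exp_int_mul_two_pi_mul_I]
  simp only [hterm]
  by_cases hdvd : (M : ℤ) ∣ j
  · obtain ⟨e, rfl⟩ := hdvd
    have hz1 : z = 1 := by
      rw [hz]
      have h : 2 * (Real.pi : ℂ) * Complex.I * (((M : ℤ) * e : ℤ) : ℂ) / M
          = (e : ℂ) * (2 * Real.pi * Complex.I) := by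
        push_cast; field_simp
      rw [h, Complex.exp_int_mul_two_pi_mul_I]
    simp [hz1]
  · have hz1 : z ≠ 1 := by
      intro h
      rw [hz, Complex.exp_eq_one_iff] at h
      obtain ⟨e, he⟩ := h
      apply hdvd
      refine ⟨e, ?_⟩
      have : (j : ℂ) = (M : ℂ) * e := by
        have hpi : (Real.pi : ℂ) ≠ 0 := Complex.ofReal_ne_zero.mpr Real.pi_ne_zero
        have hI : Complex.I ≠ 0 := Complex.I_ne_zero
        field_simp at he
        -- he should be linear; solve via linear_combination
        have h2 : 2 * (Real.pi:ℂ) * Complex.I ≠ 0 := by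
          intro h
          rcases mul_eq_zero.mp h with h' | h'
          · rcases mul_eq_zero.mp h' with h'' | h''
            · norm_num at h''
            · exact hpi h''
          · exact hI h'
        apply mul_left_cancel₀ h2
        linear_combination (2 * (Real.pi:ℂ) * Complex.I) * he
      exact_mod_cast this
    rw [geom_sum_eq hz1, hzM]
    simp [hdvd]

lemma es_inv (n : ℕ) (hn : 2 ≤ n) (c : ℤ → ℂ)
    (j₀ : ℤ) (hj₀ : j₀ ∈ Finset.Icc (-(n : ℤ) + 1) ((n : ℤ) - 1)) :
    ∑ l ∈ Finset.range (2 * n - 1),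
      (∑ j ∈ Finset.Icc (-(n : ℤ) + 1) ((n : ℤ) - 1),
          c j * Complex.exp (Complex.I * (j : ℂ) * ((2 * Real.pi * l / (2 * n - 1 : ℕ) : ℝ) : ℂ)))
        * Complex.exp (-(Complex.I * (j₀ : ℂ) * ((2 * Real.pi * l / (2 * n - 1 : ℕ) : ℝ) : ℂ)))
      = ((2 * n - 1 : ℕ) : ℂ) * c j₀ := by
  set M : ℕ := 2 * n - 1 with hMdef
  have hM : 0 < M := by omega
  have hMZ : (M : ℤ) = 2 * (n : ℤ) - 1 := by
    have : (2 : ℤ) ≤ (n : ℤ) := by exact_mod_cast hn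
    omega
  simp only [Finset.sum_mul]
  rw [Finset.sum_comm]
  have hterm : ∀ j ∈ Finset.Icc (-(n : ℤ) + 1) ((n : ℤ) - 1), ∀ l ∈ Finset.range M,
      c j * Complex.exp (Complex.I * (j : ℂ) * ((2 * Real.pi * l / (M : ℕ) : ℝ) : ℂ))
        * Complex.exp (-(Complex.I * (j₀ : ℂ) * ((2 * Real.pi * l / (M : ℕ) : ℝ) : ℂ)))
      = c j * Complex.exp (2 * (Real.pi : ℂ) * Complex.I * ((j - j₀ : ℤ) : ℂ) * l / M) := by
    intro j _ l _
    rw [mul_assoc, ← Complex.exp_add]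
    congr 2
    have hM0 : (M : ℂ) ≠ 0 := Nat.cast_ne_zero.mpr hM.ne'
    push_cast
    field_simp
    ring
  calc ∑ j ∈ Finset.Icc (-(n : ℤ) + 1) ((n : ℤ) - 1), ∑ l ∈ Finset.range M,
        c j * Complex.exp (Complex.I * (j : ℂ) * ((2 * Real.pi * l / (M : ℕ) : ℝ) : ℂ))
          * Complex.exp (-(Complex.I * (j₀ : ℂ) * ((2 * Real.pi * l / (M : ℕ) : ℝ) : ℂ)))
      = ∑ j ∈ Finset.Icc (-(n : ℤ) + 1) ((n : ℤ) - 1),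
          c j * ∑ l ∈ Finset.range M, Complex.exp (2 * (Real.pi : ℂ) * Complex.I * ((j - j₀ : ℤ) : ℂ) * l / M) := by
        refine Finset.sum_congr rfl fun j hj => ?_
        rw [Finset.mul_sum]
        exact Finset.sum_congr rfl fun l hl => hterm j hj l hl
    _ = ∑ j ∈ Finset.Icc (-(n : ℤ) + 1) ((n : ℤ) - 1),
          (if j = j₀ then c j * (M : ℂ) else 0) := by
        refine Finset.sum_congr rfl fun j hj => ?_
        rw [es_dft M hM (j - j₀)]
        simp only [Finset.mem_Icc] at hj hj₀
        by_cases hjj : j = j₀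
        · simp [hjj]
        · have hnd : ¬ ((M : ℤ) ∣ (j - j₀)) := by
            intro ⟨e, he⟩
            have he0 : e ≠ 0 := by
              intro h; rw [h, mul_zero] at he; exact hjj (by omega)
            have : (M : ℤ) * 1 ≤ |(M : ℤ) * e| := by
              rw [abs_mul, abs_of_nonneg (by positivity : (0:ℤ) ≤ (M:ℤ))]
              have : 1 ≤ |e| := Int.one_le_abs he0
              nlinarith [Int.natCast_pos.mpr hM]
            rw [← he] at this
            have : |j - j₀| ≤ 2 * (n:ℤ) - 2 := by
              rw [abs_le]; omega
            omega
          simp [hjj, hnd]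
    _ = (M : ℂ) * c j₀ := by
        rw [Finset.sum_ite_eq' _ j₀]
        simp [hj₀, mul_comm]

lemma es_sym (n : ℕ) (hn : 2 ≤ n) (c : ℤ → ℂ)
    (him : ∀ t : ℝ,
      (∑ j ∈ Finset.Icc (-(n : ℤ) + 1) ((n : ℤ) - 1),
          c j * Complex.exp (Complex.I * (j : ℂ) * (t : ℂ))).im = 0)
    (j₀ : ℤ) (hj₀ : j₀ ∈ Finset.Icc (-(n : ℤ) + 1) ((n : ℤ) - 1)) :
    c (-j₀) = (starRingEnd ℂ) (c j₀) := by
  have hj₀' : -j₀ ∈ Finset.Icc (-(n : ℤ) + 1) ((n : ℤ) - 1) := by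
    simp only [Finset.mem_Icc] at hj₀ ⊢; omega
  have hM : (0:ℝ) < ((2 * n - 1 : ℕ) : ℝ) := by
    have : 0 < 2 * n - 1 := by omega
    positivity
  have h1 := es_inv n hn c (-j₀) hj₀'
  have h2 := es_inv n hn c j₀ hj₀
  -- take conj of h2
  have h3 := congrArg (starRingEnd ℂ) h2
  rw [map_sum, map_mul] at h3
  have hF : ∀ t : ℝ, (starRingEnd ℂ)
      (∑ j ∈ Finset.Icc (-(n : ℤ) + 1) ((n : ℤ) - 1),
          c j * Complex.exp (Complex.I * (j : ℂ) * (t : ℂ)))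
      = ∑ j ∈ Finset.Icc (-(n : ℤ) + 1) ((n : ℤ) - 1),
          c j * Complex.exp (Complex.I * (j : ℂ) * (t : ℂ)) :=
    fun t => Complex.conj_eq_iff_im.mpr (him t)
  have h4 : ∀ l ∈ Finset.range (2 * n - 1),
      (starRingEnd ℂ) ((∑ j ∈ Finset.Icc (-(n : ℤ) + 1) ((n : ℤ) - 1),
          c j * Complex.exp (Complex.I * (j : ℂ) * ((2 * Real.pi * l / (2 * n - 1 : ℕ) : ℝ) : ℂ)))
        * Complex.exp (-(Complex.I * (j₀ : ℂ) * ((2 * Real.pi * l / (2 * n - 1 : ℕ) : ℝ) : ℂ))))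
      = (∑ j ∈ Finset.Icc (-(n : ℤ) + 1) ((n : ℤ) - 1),
          c j * Complex.exp (Complex.I * (j : ℂ) * ((2 * Real.pi * l / (2 * n - 1 : ℕ) : ℝ) : ℂ)))
        * Complex.exp (-(Complex.I * ((-j₀ : ℤ) : ℂ) * ((2 * Real.pi * l / (2 * n - 1 : ℕ) : ℝ) : ℂ))) := by
    intro l _
    rw [map_mul, hF, ← Complex.exp_conj]
    congr 2
    simp only [map_neg, map_mul, Complex.conj_I, Complex.conj_ofReal, map_intCast]
    push_cast
    ring
  rw [Finset.sum_congr rfl h4] at h3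
  rw [h1] at h3
  have hMc : ((2 * n - 1 : ℕ) : ℂ) ≠ 0 := by
    exact_mod_cast Nat.cast_ne_zero.mpr (by omega : 2 * n - 1 ≠ 0)
  have : (starRingEnd ℂ) ((2 * n - 1 : ℕ) : ℂ) = ((2 * n - 1 : ℕ) : ℂ) := by
    simp
  rw [this] at h3
  have := mul_left_cancel₀ hMc h3
  exact this

lemma es_small_dvd (M : ℕ) (p : ℤ) (h1 : |p| < M) : ((M:ℤ) ∣ p ↔ p = 0) := by
  constructor
  · rintro ⟨e, rfl⟩
    rcases eq_or_ne e 0 with rfl | he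
    · simp
    · exfalso
      have h2 : (M:ℤ) * 1 ≤ |(M:ℤ) * e| := by
        rw [abs_mul, abs_of_nonneg (by positivity : (0:ℤ) ≤ (M:ℤ))]
        have : 1 ≤ |e| := Int.one_le_abs he
        have hM0 : (0:ℤ) ≤ (M:ℤ) := by positivity
        nlinarith
      omega
  · rintro rfl; simp

lemma es_cos (y : ℝ) : ((Real.cos y : ℝ) : ℂ)
    = (Complex.exp ((y:ℂ) * Complex.I) + Complex.exp (-((y:ℂ) * Complex.I))) / 2 := by
  rw [Complex.ofReal_cos]
  rw [show Complex.cos (y:ℂ)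
      = (Complex.exp ((y:ℂ) * Complex.I) + Complex.exp (-(y:ℂ) * Complex.I)) / 2 from rfl]
  rw [neg_mul]

lemma es_W (N : ℕ) (hN : 2 ≤ N) (q : ℤ) (hq1 : -(N:ℤ) + 2 ≤ q) (hq2 : q ≤ (N:ℤ) - 2) :
    ∑ s ∈ Finset.range N,
      ((Real.cos (Real.pi/N) - Real.cos ((2*s+1)*(Real.pi/N)) : ℝ) : ℂ)
        * Complex.exp (2 * (Real.pi:ℂ) * Complex.I * q * s / N)
    = if q = 0 then (N:ℂ) * (Real.cos (Real.pi/N) : ℝ)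
      else if q = 1 then -(N:ℂ) * Complex.exp (-(((Real.pi/N : ℝ):ℂ) * Complex.I)) / 2
      else if q = -1 then -(N:ℂ) * Complex.exp (((Real.pi/N : ℝ):ℂ) * Complex.I) / 2
      else 0 := by
  have hN0 : 0 < N := by omega
  set α : ℝ := Real.pi / N with hα
  have hterm : ∀ s ∈ Finset.range N,
      ((Real.cos α - Real.cos ((2*s+1)*α) : ℝ) : ℂ)
        * Complex.exp (2 * (Real.pi:ℂ) * Complex.I * q * s / N)
      = ((Real.cos α : ℝ) : ℂ) * Complex.exp (2 * (Real.pi:ℂ) * Complex.I * q * s / N)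
        - Complex.exp (((α:ℝ):ℂ) * Complex.I) / 2
            * Complex.exp (2 * (Real.pi:ℂ) * Complex.I * ((q+1 : ℤ) : ℂ) * s / N)
        - Complex.exp (-(((α:ℝ):ℂ) * Complex.I)) / 2
            * Complex.exp (2 * (Real.pi:ℂ) * Complex.I * ((q-1 : ℤ) : ℂ) * s / N) := by
    intro s _
    have hc : ((Real.cos ((2*s+1)*α) : ℝ) : ℂ)
        = (Complex.exp (((α:ℝ):ℂ) * Complex.I) * Complex.exp (2 * (Real.pi:ℂ) * Complex.I * ((1:ℤ):ℂ) * s / N)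
          + Complex.exp (-(((α:ℝ):ℂ) * Complex.I)) * Complex.exp (2 * (Real.pi:ℂ) * Complex.I * ((-1:ℤ):ℂ) * s / N)) / 2 := by
      rw [es_cos]
      rw [← Complex.exp_add, ← Complex.exp_add]
      congr 2
      · rw [hα]; push_cast; ring
      · rw [hα]; push_cast; ring
    rw [Complex.ofReal_sub, hc]
    rw [show Complex.exp (2 * (Real.pi:ℂ) * Complex.I * ((q+1 : ℤ) : ℂ) * s / N)
        = Complex.exp (2 * (Real.pi:ℂ) * Complex.I * ((1:ℤ):ℂ) * s / N)
          * Complex.exp (2 * (Real.pi:ℂ) * Complex.I * q * s / N) by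
      rw [← Complex.exp_add]; congr 1; push_cast; ring]
    rw [show Complex.exp (2 * (Real.pi:ℂ) * Complex.I * ((q-1 : ℤ) : ℂ) * s / N)
        = Complex.exp (2 * (Real.pi:ℂ) * Complex.I * ((-1:ℤ):ℂ) * s / N)
          * Complex.exp (2 * (Real.pi:ℂ) * Complex.I * q * s / N) by
      rw [← Complex.exp_add]; congr 1; push_cast; ring]
    ring
  rw [Finset.sum_congr rfl hterm]
  rw [Finset.sum_sub_distrib, Finset.sum_sub_distrib, ← Finset.mul_sum, ← Finset.mul_sum, ← Finset.mul_sum]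
  rw [es_dft N hN0 q, es_dft N hN0 (q+1), es_dft N hN0 (q-1)]
  simp only [es_small_dvd N q (by rw [abs_lt]; omega),
      es_small_dvd N (q+1) (by rw [abs_lt]; omega),
      es_small_dvd N (q-1) (by rw [abs_lt]; omega)]
  rcases eq_or_ne q 0 with rfl | h0
  · norm_num [mul_comm]
  · rcases eq_or_ne q 1 with rfl | h1
    · norm_num
      ring
    · rcases eq_or_ne q (-1) with rfl | hm1
      · norm_num
        ring
      · have : ¬ (q + 1 = 0) := by omega
        have : ¬ (q - 1 = 0) := by omega
        simp_all

lemma es_exp_split (k N : ℕ) (q : ℤ) (s : ℕ) (x α : ℝ)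
    (hk : (k:ℂ) ≠ 0) (hN : (N:ℂ) ≠ 0) (hNα : Real.pi = (N:ℝ) * α) :
    Complex.I * (((k:ℤ)*q : ℤ):ℂ) * (((x + 2*(s:ℝ)*α) : ℝ):ℂ) / k
    = Complex.I * (q:ℂ) * (x:ℂ) + 2*(Real.pi:ℂ)*Complex.I*q*s/N := by
  have hπ : (Real.pi : ℂ) = (N:ℂ) * (α:ℂ) := by
    rw [hNα]; push_cast; ring
  rw [hπ]
  push_cast
  field_simp

/-- **Egerváry–Szász inequality.** If `∑_{j=-(n-1)}^{n-1} c_j e^{ijt}` is a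
trigonometric polynomial which is nonnegative on the torus, then for `1 ≤ k ≤ n-1`
one has `|c_k| ≤ c_0 · cos (π / (⌊(n-1)/k⌋ + 2))`. -/
theorem egervary_szasz (n : ℕ) (hn : 2 ≤ n) (c : ℤ → ℂ)
    (hpos : ∀ t : ℝ,
      (∑ j ∈ Finset.Icc (-(n : ℤ) + 1) ((n : ℤ) - 1),
          c j * Complex.exp (Complex.I * (j : ℂ) * (t : ℂ))).im = 0 ∧
      0 ≤ (∑ j ∈ Finset.Icc (-(n : ℤ) + 1) ((n : ℤ) - 1),
          c j * Complex.exp (Complex.I * (j : ℂ) * (t : ℂ))).re)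
    (k : ℕ) (hk1 : 1 ≤ k) (hkn : k ≤ n - 1) :
    ‖c k‖ ≤ (c 0).re * Real.cos (Real.pi / (((n - 1) / k : ℕ) + 2)) := by
  classical
  have hk : 0 < k := hk1
  have hkZ : (0:ℤ) < (k:ℤ) := by exact_mod_cast hk
  have hkC : (k:ℂ) ≠ 0 := Nat.cast_ne_zero.mpr hk.ne'
  set m : ℕ := (n - 1) / k with hmdef
  have hm1 : 1 ≤ m := (Nat.one_le_div_iff hk).mpr hkn
  set N : ℕ := m + 2 with hNdef
  have hN2 : 2 ≤ N := by omega
  have hN0 : 0 < N := by omega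
  have hNC : (N:ℂ) ≠ 0 := Nat.cast_ne_zero.mpr hN0.ne'
  set α : ℝ := Real.pi / N with hα
  have hαpos : 0 < α := by
    rw [hα]; positivity
  set θ : ℝ := (c k).arg with hθ
  set x : ℝ := α - θ with hx
  set w : ℕ → ℝ := fun s => Real.cos α - Real.cos ((2*s+1)*α) with hw
  set T : ℕ → ℕ → ℝ := fun s r => (x + 2*s*α + 2*Real.pi*r)/k with hT
  set F : ℝ → ℂ := fun t => ∑ j ∈ Finset.Icc (-(n : ℤ) + 1) ((n : ℤ) - 1),
      c j * Complex.exp (Complex.I * (j : ℂ) * (t : ℂ)) with hF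
  set E : ℤ → ℂ := fun j => ∑ s ∈ Finset.range N, ∑ r ∈ Finset.range k,
      ((w s : ℝ) : ℂ) * Complex.exp (Complex.I * (j : ℂ) * ((T s r : ℝ) : ℂ)) with hE
  set S : ℂ := ∑ s ∈ Finset.range N, ∑ r ∈ Finset.range k,
      ((w s : ℝ) : ℂ) * F (T s r) with hS
  -- nonnegativity of weights
  have hw_nonneg : ∀ s ∈ Finset.range N, 0 ≤ w s := by
    intro s hs
    rw [Finset.mem_range] at hs
    rw [hw]
    simp only
    rw [Real.cos_sub_cos]
    have h1 : (α + (2*(s:ℝ)+1)*α)/2 = ((s:ℝ)+1)*α := by ring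
    have h2 : (α - (2*(s:ℝ)+1)*α)/2 = -((s:ℝ)*α) := by ring
    rw [h1, h2, Real.sin_neg]
    have hsle : (s:ℝ) + 1 ≤ (N:ℝ) := by
      have : s + 1 ≤ N := hs
      exact_mod_cast this
    have hNα : (N:ℝ) * α = Real.pi := by
      rw [hα]
      field_simp
    have hs1 : 0 ≤ Real.sin (((s:ℝ)+1)*α) := by
      apply Real.sin_nonneg_of_nonneg_of_le_pi
      · positivity
      · nlinarith
    have hs2 : 0 ≤ Real.sin ((s:ℝ)*α) := by
      apply Real.sin_nonneg_of_nonneg_of_le_pi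
      · positivity
      · nlinarith
    nlinarith
  -- Part 1 : 0 ≤ S.re
  have hSre : 0 ≤ S.re := by
    rw [hS, Complex.re_sum]
    apply Finset.sum_nonneg
    intro s hs
    rw [Complex.re_sum]
    apply Finset.sum_nonneg
    intro r _
    rw [Complex.re_ofReal_mul]
    exact mul_nonneg (hw_nonneg s hs) (hpos (T s r)).2
  -- swap sums
  have hswap : S = ∑ j ∈ Finset.Icc (-(n : ℤ) + 1) ((n : ℤ) - 1), c j * E j := by
    rw [hS]
    calc ∑ s ∈ Finset.range N, ∑ r ∈ Finset.range k, ((w s : ℝ) : ℂ) * F (T s r)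
        = ∑ s ∈ Finset.range N, ∑ r ∈ Finset.range k,
            ∑ j ∈ Finset.Icc (-(n : ℤ) + 1) ((n : ℤ) - 1),
              c j * (((w s : ℝ) : ℂ) * Complex.exp (Complex.I * (j : ℂ) * ((T s r : ℝ) : ℂ))) := by
          refine Finset.sum_congr rfl fun s _ => Finset.sum_congr rfl fun r _ => ?_
          rw [hF]
          simp only
          rw [Finset.mul_sum]
          exact Finset.sum_congr rfl fun j _ => by ring
      _ = ∑ s ∈ Finset.range N, ∑ j ∈ Finset.Icc (-(n : ℤ) + 1) ((n : ℤ) - 1),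
            ∑ r ∈ Finset.range k,
              c j * (((w s : ℝ) : ℂ) * Complex.exp (Complex.I * (j : ℂ) * ((T s r : ℝ) : ℂ))) := by
          exact Finset.sum_congr rfl fun s _ => Finset.sum_comm
      _ = ∑ j ∈ Finset.Icc (-(n : ℤ) + 1) ((n : ℤ) - 1), ∑ s ∈ Finset.range N,
            ∑ r ∈ Finset.range k,
              c j * (((w s : ℝ) : ℂ) * Complex.exp (Complex.I * (j : ℂ) * ((T s r : ℝ) : ℂ))) :=
          Finset.sum_comm
      _ = ∑ j ∈ Finset.Icc (-(n : ℤ) + 1) ((n : ℤ) - 1), c j * E j := by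
          refine Finset.sum_congr rfl fun j _ => ?_
          rw [hE]
          simp only
          rw [Finset.mul_sum]
          refine Finset.sum_congr rfl fun s _ => ?_
          rw [Finset.mul_sum]
  -- inner r-sum
  have hr : ∀ (j : ℤ) (s : ℕ),
      ∑ r ∈ Finset.range k, Complex.exp (Complex.I * (j : ℂ) * ((T s r : ℝ) : ℂ))
      = Complex.exp (Complex.I * (j : ℂ) * (((x + 2*(s:ℝ)*α) : ℝ) : ℂ) / k)
          * (if (k:ℤ) ∣ j then (k:ℂ) else 0) := by
    intro j s
    rw [← es_dft k hk j, Finset.mul_sum]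
    refine Finset.sum_congr rfl fun r _ => ?_
    rw [← Complex.exp_add]
    congr 1
    simp only [hT]
    push_cast
    field_simp
  -- E at multiples of k
  have hEdvd : ∀ q : ℤ, -(m:ℤ) ≤ q → q ≤ (m:ℤ) →
      E ((k:ℤ) * q) = (k:ℂ) * Complex.exp (Complex.I * (q:ℂ) * (x:ℂ)) *
        (if q = 0 then (N:ℂ) * ((Real.cos α : ℝ) : ℂ)
          else if q = 1 then -(N:ℂ) * Complex.exp (-(((α : ℝ):ℂ) * Complex.I)) / 2
          else if q = -1 then -(N:ℂ) * Complex.exp (((α : ℝ):ℂ) * Complex.I) / 2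
          else 0) := by
    intro q hq1 hq2
    have hdvd : (k:ℤ) ∣ (k:ℤ) * q := Dvd.intro q rfl
    rw [hE]
    simp only
    calc ∑ s ∈ Finset.range N, ∑ r ∈ Finset.range k,
          ((w s : ℝ) : ℂ) * Complex.exp (Complex.I * (((k:ℤ)*q : ℤ) : ℂ) * ((T s r : ℝ) : ℂ))
        = ∑ s ∈ Finset.range N, ((w s : ℝ) : ℂ) *
            (Complex.exp (Complex.I * (((k:ℤ)*q : ℤ) : ℂ) * (((x + 2*(s:ℝ)*α) : ℝ) : ℂ) / k) * (k:ℂ)) := by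
          refine Finset.sum_congr rfl fun s _ => ?_
          rw [← Finset.mul_sum, hr ((k:ℤ)*q) s]
          simp [hdvd]
      _ = (k:ℂ) * Complex.exp (Complex.I * (q:ℂ) * (x:ℂ)) *
            ∑ s ∈ Finset.range N, ((w s : ℝ) : ℂ) *
              Complex.exp (2 * (Real.pi:ℂ) * Complex.I * q * s / N) := by
          rw [Finset.mul_sum]
          refine Finset.sum_congr rfl fun s _ => ?_
          have hexp : Complex.exp (Complex.I * (((k:ℤ)*q : ℤ) : ℂ) * (((x + 2*(s:ℝ)*α) : ℝ) : ℂ) / k)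
              = Complex.exp (Complex.I * (q:ℂ) * (x:ℂ)) *
                  Complex.exp (2 * (Real.pi:ℂ) * Complex.I * q * s / N) := by
            rw [← Complex.exp_add]
            exact congrArg Complex.exp (es_exp_split k N q s x α hkC hNC (by rw [hα]; field_simp))
          rw [hexp]
          ring
      _ = (k:ℂ) * Complex.exp (Complex.I * (q:ℂ) * (x:ℂ)) *
            (if q = 0 then (N:ℂ) * ((Real.cos α : ℝ) : ℂ)
              else if q = 1 then -(N:ℂ) * Complex.exp (-(((α : ℝ):ℂ) * Complex.I)) / 2
              else if q = -1 then -(N:ℂ) * Complex.exp (((α : ℝ):ℂ) * Complex.I) / 2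
              else 0) := by
          congr 1
          have hqa : -(N:ℤ) + 2 ≤ q := by
            have : (N:ℤ) = (m:ℤ) + 2 := by rw [hNdef]; push_cast; ring
            omega
          have hqb : q ≤ (N:ℤ) - 2 := by
            have : (N:ℤ) = (m:ℤ) + 2 := by rw [hNdef]; push_cast; ring
            omega
          have hWq := es_W N hN2 q hqa hqb
          simp only [hw]
          rw [hα]
          exact hWq
  -- special values of E
  have hmZ : 1 ≤ (m:ℤ) := by exact_mod_cast hm1
  have h1 := hEdvd 1 (by omega) (by omega)
  have h0 := hEdvd 0 (by omega) (by omega)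
  have hm1' := hEdvd (-1) (by omega) (by omega)
  rw [show ((k:ℤ) * 1 : ℤ) = (k:ℤ) by ring] at h1
  rw [show ((k:ℤ) * 0 : ℤ) = (0:ℤ) by ring] at h0
  rw [show ((k:ℤ) * (-1) : ℤ) = (-(k:ℤ)) by ring] at hm1'
  norm_num at h1 h0 hm1'
  -- vanishing of other coefficients
  have hEother : ∀ j ∈ Finset.Icc (-(n : ℤ) + 1) ((n : ℤ) - 1),
      j ∉ ({-(k:ℤ), 0, (k:ℤ)} : Finset ℤ) → E j = 0 := by
    intro j hj hnot
    by_cases hdvd : (k:ℤ) ∣ j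
    · obtain ⟨q, rfl⟩ := hdvd
      rw [Finset.mem_Icc] at hj
      have hmZ' : (m:ℤ) = ((n-1 : ℕ):ℤ) / (k:ℤ) := by
        rw [hmdef]; exact Int.natCast_div (n-1) k
      have hn1Z : ((n-1:ℕ):ℤ) = (n:ℤ) - 1 := by omega
      have hqb : q ≤ (m:ℤ) := by
        have h2 : q * (k:ℤ) ≤ ((n-1:ℕ):ℤ) := by rw [hn1Z]; nlinarith [hj.2]
        have := (Int.le_ediv_iff_mul_le hkZ).mpr h2
        omega
      have hqa : -(m:ℤ) ≤ q := by
        have h2 : (-q) * (k:ℤ) ≤ ((n-1:ℕ):ℤ) := by rw [hn1Z]; nlinarith [hj.1]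
        have := (Int.le_ediv_iff_mul_le hkZ).mpr h2
        omega
      have hq0 : q ≠ 0 := by
        rintro rfl; exact hnot (by norm_num)
      have hq1 : q ≠ 1 := by
        rintro rfl; exact hnot (by norm_num)
      have hqm1 : q ≠ -1 := by
        rintro rfl
        apply hnot
        simp only [Finset.mem_insert, Finset.mem_singleton]
        left; ring
      rw [hEdvd q hqa hqb]
      simp [hq0, hq1, hqm1]
    · rw [hE]
      simp only
      apply Finset.sum_eq_zero
      intro s _
      rw [← Finset.mul_sum, hr j s]
      simp [hdvd]
  -- collapse the sum
  have hknZ : (k:ℤ) ≤ (n:ℤ) - 1 := by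
    have : ((k:ℕ):ℤ) ≤ ((n-1:ℕ):ℤ) := by exact_mod_cast hkn
    omega
  have htriple : ({-(k:ℤ), 0, (k:ℤ)} : Finset ℤ) ⊆ Finset.Icc (-(n:ℤ)+1) ((n:ℤ)-1) := by
    intro j hj
    simp only [Finset.mem_insert, Finset.mem_singleton] at hj
    rw [Finset.mem_Icc]
    rcases hj with rfl | rfl | rfl <;> omega
  have hScollapse : S = c (-(k:ℤ)) * E (-(k:ℤ)) + (c 0 * E 0 + c (k:ℤ) * E (k:ℤ)) := by
    rw [hswap,
      (Finset.sum_subset htriple (fun j hj hnot => by rw [hEother j hj hnot, mul_zero])).symm]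
    rw [show ({-(k:ℤ), 0, (k:ℤ)} : Finset ℤ) = insert (-(k:ℤ)) (insert 0 {(k:ℤ)}) from rfl]
    rw [Finset.sum_insert (by simp only [Finset.mem_insert, Finset.mem_singleton]; push_neg; omega),
        Finset.sum_insert (by simp only [Finset.mem_singleton]; omega),
        Finset.sum_singleton]
  -- conjugate symmetry
  have hsym : c (-(k:ℤ)) = (starRingEnd ℂ) (c (k:ℤ)) :=
    es_sym n hn c (fun t => (hpos t).1) (k:ℤ) (by rw [Finset.mem_Icc]; omega)
  -- the amplitude
  set A : ℝ := ‖c (k:ℤ)‖ with hA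
  have hc1 : c (k:ℤ) * Complex.exp (-(((θ:ℝ):ℂ) * Complex.I)) = (A:ℂ) := by
    conv_lhs => rw [← Complex.norm_mul_exp_arg_mul_I (c (k:ℤ))]
    rw [mul_assoc, ← Complex.exp_add]
    rw [show ((c (k:ℤ)).arg : ℂ) * Complex.I + -(((θ:ℝ):ℂ) * Complex.I) = 0 by
      rw [hθ]; ring]
    rw [Complex.exp_zero, mul_one, hA]
  have hc2 : (starRingEnd ℂ) (c (k:ℤ)) * Complex.exp (((θ:ℝ):ℂ) * Complex.I) = (A:ℂ) := by
    have h := congrArg (starRingEnd ℂ) hc1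
    rw [map_mul, ← Complex.exp_conj] at h
    simp only [map_neg, map_mul, Complex.conj_ofReal, Complex.conj_I, mul_neg, neg_neg] at h
    rw [h]
  have e1 : Complex.exp (Complex.I * (x:ℂ)) * Complex.exp (-(((α:ℝ):ℂ) * Complex.I))
      = Complex.exp (-(((θ:ℝ):ℂ) * Complex.I)) := by
    rw [← Complex.exp_add]
    congr 1
    rw [hx]
    push_cast
    ring
  have e2 : Complex.exp (-(Complex.I * (x:ℂ))) * Complex.exp (((α:ℝ):ℂ) * Complex.I)
      = Complex.exp (((θ:ℝ):ℂ) * Complex.I) := by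
    rw [← Complex.exp_add]
    congr 1
    rw [hx]
    push_cast
    ring
  have hSval : S = (k:ℂ) * (N:ℂ) * Complex.cos ((α:ℝ):ℂ) * c 0 - (k:ℂ) * (N:ℂ) * ((A:ℝ):ℂ) := by
    rw [hScollapse, h0, h1, hm1', hsym]
    linear_combination (-((k:ℂ)*(N:ℂ))/2) * (c (k:ℤ)) * e1 + (-((k:ℂ)*(N:ℂ))/2) * hc1
      + (-((k:ℂ)*(N:ℂ))/2) * ((starRingEnd ℂ) (c (k:ℤ))) * e2 + (-((k:ℂ)*(N:ℂ))/2) * hc2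
  have hcosre : Complex.cos ((α:ℝ):ℂ) = ((Real.cos α : ℝ):ℂ) := (Complex.ofReal_cos α).symm
  rw [hcosre] at hSval
  have hz1 : (k:ℂ)*(N:ℂ)*((Real.cos α:ℝ):ℂ) = ((((k:ℝ)*(N:ℝ)*Real.cos α) : ℝ):ℂ) := by
    push_cast; ring
  have hz2 : (k:ℂ)*(N:ℂ)*((A:ℝ):ℂ) = ((((k:ℝ)*(N:ℝ)*A) : ℝ):ℂ) := by
    push_cast; ring
  rw [hz1, hz2] at hSval
  have hSre2 : S.re = ((k:ℝ)*(N:ℝ)*Real.cos α) * (c 0).re - ((k:ℝ)*(N:ℝ)*A) := by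
    rw [hSval, Complex.sub_re, Complex.re_ofReal_mul, Complex.ofReal_re]
  have hkN : (0:ℝ) < (k:ℝ)*(N:ℝ) := by positivity
  have h4 : 0 ≤ ((k:ℝ)*(N:ℝ)*Real.cos α) * (c 0).re - ((k:ℝ)*(N:ℝ)*A) := by
    rw [← hSre2]; exact hSre
  have h6 : (k:ℝ)*(N:ℝ) * A ≤ (k:ℝ)*(N:ℝ) * (Real.cos α * (c 0).re) := by
    have hassoc : (k:ℝ)*(N:ℝ) * (Real.cos α * (c 0).re)
        = ((k:ℝ)*(N:ℝ)*Real.cos α) * (c 0).re := by ring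
    linarith [h4]
  have h7 : A ≤ Real.cos α * (c 0).re := le_of_mul_le_mul_left h6 hkN
  have h8 : Real.pi / ((m:ℝ) + 2) = α := by
    rw [hα]; congr 1; rw [hNdef]; push_cast; ring
  rw [h8]
  calc A ≤ Real.cos α * (c 0).re := h7
    _ = (c 0).re * Real.cos α := mul_comm _ _
end

section
/- (Fejér) Let n ≥ 2 and let F(e^{it}) = ∑_{j=-(n-1)}^{n-1} c_j e^{ijt} be a trigonometric polynomial satisfying F(e^{it}) ≥ 0 for all real t. Then |c_1| ≤ c_0 · cos(π/(n+1)). -/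
open Complex Finset

/-- Sum of roots of unity. -/
lemma fejer_rootsum (N : ℕ) (hN : 0 < N) (j : ℤ) :
    ∑ m ∈ Finset.range N, Complex.exp (I * j * (2 * Real.pi * m / N)) =
      if (N : ℤ) ∣ j then (N : ℂ) else 0 := by
  have hNC : ((N : ℂ)) ≠ 0 := Nat.cast_ne_zero.2 hN.ne'
  have hz : ∀ m : ℕ, Complex.exp (I * j * (2 * Real.pi * m / N)) =
      (Complex.exp (I * j * (2 * Real.pi / N))) ^ m := by
    intro m
    rw [← Complex.exp_nat_mul]
    congr 1
    push_cast
    ring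
  simp only [hz]
  by_cases hdvd : (N : ℤ) ∣ j
  · rw [if_pos hdvd]
    obtain ⟨k, hk⟩ := hdvd
    have h1 : Complex.exp (I * j * (2 * Real.pi / N)) = 1 := by
      rw [Complex.exp_eq_one_iff]
      refine ⟨k, ?_⟩
      have : (j : ℂ) = (N : ℂ) * (k : ℂ) := by exact_mod_cast congrArg (Int.cast : ℤ → ℂ) hk
      field_simp [this]
      exact this
    simp [h1]
  · rw [if_neg hdvd]
    have h1 : Complex.exp (I * j * (2 * Real.pi / N)) ≠ 1 := by
      intro h
      rw [Complex.exp_eq_one_iff] at h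
      obtain ⟨k, hk⟩ := h
      apply hdvd
      refine ⟨k, ?_⟩
      have hpi : (Real.pi : ℂ) ≠ 0 := by exact_mod_cast Real.pi_ne_zero
      have : (j : ℂ) = (N : ℂ) * (k : ℂ) := by
        field_simp at hk
        have h2 : (j : ℂ) * (2 * (Real.pi : ℂ) * I) = ((N : ℂ) * k) * (2 * (Real.pi : ℂ) * I) := by
          rw [mul_comm] at hk
          linear_combination (2 * (Real.pi : ℂ) * I) * hk
        have h3 : (2 * (Real.pi : ℂ) * I) ≠ 0 := by
          simp [hpi, Complex.I_ne_zero]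
        exact mul_right_cancel₀ h3 h2
      exact_mod_cast this
    have hzN : (Complex.exp (I * j * (2 * Real.pi / N))) ^ N = 1 := by
      rw [← Complex.exp_nat_mul, Complex.exp_eq_one_iff]
      refine ⟨j, ?_⟩
      field_simp
    rw [geom_sum_eq h1, hzN]
    simp

/-- Extracting a single coefficient by sampling on a grid. -/
lemma fejer_eval (N : ℕ) (hN : 0 < N) (a b k : ℤ) (d : ℤ → ℂ) (hk : k ∈ Finset.Icc a b)
    (huniq : ∀ j ∈ Finset.Icc a b, (N : ℤ) ∣ (j - k) → j = k) :
    ∑ m ∈ Finset.range N, (Complex.exp (I * (-k : ℤ) * (2 * Real.pi * m / N)) *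
      ∑ j ∈ Finset.Icc a b, d j * Complex.exp (I * j * (2 * Real.pi * m / N)))
      = (N : ℂ) * d k := by
  have key : ∀ m ∈ Finset.range N, (Complex.exp (I * (-k : ℤ) * (2 * Real.pi * m / N)) *
      ∑ j ∈ Finset.Icc a b, d j * Complex.exp (I * j * (2 * Real.pi * m / N)))
      = ∑ j ∈ Finset.Icc a b, d j * Complex.exp (I * (j - k : ℤ) * (2 * Real.pi * m / N)) := by
    intro m _
    rw [Finset.mul_sum]
    refine Finset.sum_congr rfl fun j _ => ?_
    rw [mul_comm (Complex.exp _) _, mul_assoc, ← Complex.exp_add]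
    congr 2
    push_cast
    ring
  rw [Finset.sum_congr rfl key, Finset.sum_comm]
  have inner : ∀ j ∈ Finset.Icc a b,
      ∑ m ∈ Finset.range N, d j * Complex.exp (I * (j - k : ℤ) * (2 * Real.pi * m / N))
        = d j * (if (N : ℤ) ∣ (j - k) then (N : ℂ) else 0) := by
    intro j _
    rw [← Finset.mul_sum, fejer_rootsum N hN]
  rw [Finset.sum_congr rfl inner]
  rw [Finset.sum_eq_single_of_mem k hk]
  · simp [mul_comm]
  · intro j hj hjk
    rw [if_neg (fun h => hjk (huniq j hj h)), mul_zero]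

/-- **Fejér's inequality.** If `∑_{j=-(n-1)}^{n-1} c_j e^{ijt}` is a trigonometric
polynomial which is nonnegative on the torus, then `|c_1| ≤ c_0 · cos (π / (n+1))`. -/
theorem fejer_inequality (n : ℕ) (hn : 2 ≤ n) (c : ℤ → ℂ)
    (hpos : ∀ t : ℝ,
      (∑ j ∈ Finset.Icc (-(n : ℤ) + 1) ((n : ℤ) - 1),
          c j * Complex.exp (Complex.I * (j : ℂ) * (t : ℂ))).im = 0 ∧
      0 ≤ (∑ j ∈ Finset.Icc (-(n : ℤ) + 1) ((n : ℤ) - 1),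
          c j * Complex.exp (Complex.I * (j : ℂ) * (t : ℂ))).re) :
    ‖c 1‖ ≤ (c 0).re * Real.cos (Real.pi / ((n : ℝ) + 1)) := by
  -- symmetry of coefficients from reality of F
  have hsym : ∀ t : ℝ,
      (∑ j ∈ Finset.Icc (-(n : ℤ) + 1) ((n : ℤ) - 1), c j * Complex.exp (I * j * (t : ℂ)))
      = ∑ j ∈ Finset.Icc (-(n : ℤ) + 1) ((n : ℤ) - 1),
          (starRingEnd ℂ) (c (-j)) * Complex.exp (I * j * (t : ℂ)) := by
    intro t
    have h1 : (starRingEnd ℂ)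
        (∑ j ∈ Finset.Icc (-(n : ℤ) + 1) ((n : ℤ) - 1), c j * Complex.exp (I * j * (t : ℂ)))
        = ∑ j ∈ Finset.Icc (-(n : ℤ) + 1) ((n : ℤ) - 1), c j * Complex.exp (I * j * (t : ℂ)) :=
      Complex.conj_eq_iff_im.2 (hpos t).1
    rw [← h1, map_sum]
    refine Finset.sum_equiv (Equiv.neg ℤ) (fun i => by simp [Finset.mem_Icc]; omega) ?_
    intro i _
    rw [map_mul, ← Complex.exp_conj]
    simp only [Equiv.neg_apply, neg_neg]
    congr 1
    rw [map_mul, map_mul, Complex.conj_I, Complex.conj_ofReal, map_intCast]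
    congr 1
    push_cast
    ring
  have hpi := Real.pi_pos
  have hcast : ∀ (N m : ℕ), ((2 * Real.pi * m / N : ℝ) : ℂ) = 2 * (Real.pi : ℂ) * m / N := by
    intro N m; push_cast; ring
  have huniq : ∀ (N : ℕ) (k : ℤ), -(N : ℤ) < -(n : ℤ) + 1 - k → (n : ℤ) - 1 - k < N →
      ∀ j ∈ Finset.Icc (-(n : ℤ) + 1) ((n : ℤ) - 1), (N : ℤ) ∣ (j - k) → j = k := by
    intro N k h1 h2 j hj hdvd
    rw [Finset.mem_Icc] at hj
    have h0 : j - k = 0 := Int.eq_zero_of_abs_lt_dvd hdvd (abs_lt.2 ⟨by omega, by omega⟩)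
    omega
  have hmem : ∀ k : ℤ, -1 ≤ k → k ≤ 1 → k ∈ Finset.Icc (-(n : ℤ) + 1) ((n : ℤ) - 1) := by
    intro k h1 h2; rw [Finset.mem_Icc]; omega
  -- Step 1 : c (-1) = conj (c 1)
  have hc : c (-1) = (starRingEnd ℂ) (c 1) := by
    have hN2 : 0 < 2 * n := by omega
    have e1 := fejer_eval (2*n) hN2 _ _ 1 c (hmem 1 (by omega) le_rfl)
      (huniq (2*n) 1 (by push_cast; omega) (by push_cast; omega))
    have e2 := fejer_eval (2*n) hN2 _ _ 1 (fun j => (starRingEnd ℂ) (c (-j)))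
      (hmem 1 (by omega) le_rfl)
      (huniq (2*n) 1 (by push_cast; omega) (by push_cast; omega))
    have heq : ((2*n : ℕ) : ℂ) * c 1 = ((2*n : ℕ) : ℂ) * (starRingEnd ℂ) (c (-1)) := by
      rw [← e1, ← e2]
      refine Finset.sum_congr rfl fun m _ => ?_
      congr 1
      have h3 := hsym (2 * Real.pi * m / ((2*n : ℕ) : ℝ))
      simp only [hcast] at h3
      exact h3
    have h2n : ((2*n : ℕ) : ℂ) ≠ 0 := Nat.cast_ne_zero.2 (by omega)
    have h4 := mul_left_cancel₀ h2n heq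
    calc c (-1) = (starRingEnd ℂ) ((starRingEnd ℂ) (c (-1))) := (Complex.conj_conj _).symm
    _ = (starRingEnd ℂ) (c 1) := by rw [← h4]
  -- Step 2 : the main estimate
  set α : ℝ := Real.pi / ((n : ℝ) + 1) with hα
  set β : ℝ := -Complex.arg (c 1) - α with hβ
  have hαpos : 0 < α := div_pos hpi (by positivity)
  have hαeq : α * ((n : ℝ) + 1) = Real.pi := by rw [hα]; field_simp
  have hn' : (2 : ℝ) ≤ (n : ℝ) := by exact_mod_cast hn
  -- the weights are nonnegative
  have hw : ∀ m : ℕ, m ≤ n →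
      Real.cos (2 * Real.pi * m / ((n+1 : ℕ) : ℝ) - α) ≤ Real.cos α := by
    intro m hm
    have hx : 2 * Real.pi * m / ((n+1 : ℕ) : ℝ) - α = (2 * (m : ℝ) - 1) * α := by
      rw [hα]; push_cast; field_simp
    rw [hx]
    rcases Nat.eq_zero_or_pos m with rfl | hm1
    · rw [show (2 * ((0:ℕ) : ℝ) - 1) * α = -α by push_cast; ring, Real.cos_neg]
    · have hm1' : (1 : ℝ) ≤ (m : ℝ) := by exact_mod_cast hm1
      have hmn : (m : ℝ) ≤ (n : ℝ) := by exact_mod_cast hm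
      have hx1 : α ≤ (2 * (m : ℝ) - 1) * α := by nlinarith
      have hαπ : α ≤ Real.pi := by nlinarith
      have hx2 : (2 * (m : ℝ) - 1) * α ≤ 2 * Real.pi - α := by nlinarith
      by_cases hxπ : (2 * (m : ℝ) - 1) * α ≤ Real.pi
      · exact Real.cos_le_cos_of_nonneg_of_le_pi hαpos.le hxπ hx1
      · push_neg at hxπ
        rw [show (2 * (m : ℝ) - 1) * α
            = 2 * Real.pi - (2 * Real.pi - (2 * (m : ℝ) - 1) * α) by ring,
          Real.cos_two_pi_sub]
        exact Real.cos_le_cos_of_nonneg_of_le_pi hαpos.le (by linarith) (by linarith)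
  -- grid sums for N = n+1
  have hN1 : 0 < n + 1 := Nat.succ_pos n
  have E0 := fejer_eval (n+1) hN1 _ _ 0 (fun j => c j * Complex.exp (I * (j : ℂ) * (β : ℂ)))
    (hmem 0 (by omega) (by omega)) (huniq (n+1) 0 (by push_cast; omega) (by push_cast; omega))
  have E1 := fejer_eval (n+1) hN1 _ _ 1 (fun j => c j * Complex.exp (I * (j : ℂ) * (β : ℂ)))
    (hmem 1 (by omega) le_rfl) (huniq (n+1) 1 (by push_cast; omega) (by push_cast; omega))
  have Em1 := fejer_eval (n+1) hN1 _ _ (-1) (fun j => c j * Complex.exp (I * (j : ℂ) * (β : ℂ)))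
    (hmem (-1) le_rfl (by omega)) (huniq (n+1) (-1) (by push_cast; omega) (by push_cast; omega))
  -- cosine as exponentials
  have hcos : ∀ y : ℝ, ((Real.cos y : ℝ) : ℂ)
      = (Complex.exp (I * y) + Complex.exp (-(I * y))) / 2 := by
    intro y
    rw [Complex.ofReal_cos]
    have h2 := Complex.two_cos (y : ℂ)
    have e1 : Complex.exp (I * (y : ℂ)) = Complex.exp ((y : ℂ) * I) := by rw [mul_comm]
    have e2 : Complex.exp (-(I * (y : ℂ))) = Complex.exp (-(y : ℂ) * I) := by congr 1; ring
    rw [e1, e2, eq_div_iff (two_ne_zero)]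
    linear_combination h2
  -- the evaluated polynomial on the shifted grid
  have hFG : ∀ m : ℕ,
      (∑ j ∈ Finset.Icc (-(n : ℤ) + 1) ((n : ℤ) - 1),
        c j * Complex.exp (I * j * ((2 * Real.pi * m / ((n+1 : ℕ) : ℝ) + β : ℝ) : ℂ)))
      = ∑ j ∈ Finset.Icc (-(n : ℤ) + 1) ((n : ℤ) - 1),
          (c j * Complex.exp (I * (j : ℂ) * (β : ℂ)))
            * Complex.exp (I * j * (2 * (Real.pi : ℂ) * m / ((n+1 : ℕ) : ℂ))) := by
    intro m
    refine Finset.sum_congr rfl fun j _ => ?_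
    conv_rhs => rw [mul_assoc, ← Complex.exp_add]
    congr 1
    push_cast
    ring
  -- key phase identities
  have r1 : Complex.exp (I * (α : ℂ)) * Complex.exp (I * ((1 : ℤ) : ℂ) * (β : ℂ))
      = Complex.exp (((α + β : ℝ) : ℂ) * I) := by
    rw [← Complex.exp_add]
    congr 1
    push_cast
    ring
  have habs : c 1 * Complex.exp (((α + β : ℝ) : ℂ) * I) = (‖c 1‖ : ℂ) := by
    have h := Complex.norm_mul_exp_arg_mul_I (c 1)
    calc c 1 * Complex.exp (((α + β : ℝ) : ℂ) * I)
        = (↑(‖c 1‖) * Complex.exp (↑(Complex.arg (c 1)) * I))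
            * Complex.exp (((α + β : ℝ) : ℂ) * I) := by rw [h]
      _ = ↑(‖c 1‖)
            * Complex.exp (↑(Complex.arg (c 1)) * I + ((α + β : ℝ) : ℂ) * I) := by
          rw [mul_assoc, Complex.exp_add]
      _ = ↑(‖c 1‖) := by
          rw [show (↑(Complex.arg (c 1)) * I + ((α + β : ℝ) : ℂ) * I) = 0 by
            rw [hβ]; push_cast; ring]
          rw [Complex.exp_zero, mul_one]
  have q1 : Complex.exp (I * (α : ℂ)) * (c 1 * Complex.exp (I * ((1 : ℤ) : ℂ) * (β : ℂ)))
      = (‖c 1‖ : ℂ) := by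
    linear_combination (c 1) * r1 + habs
  have q2 : Complex.exp (-(I * (α : ℂ)))
        * (c (-1) * Complex.exp (I * ((-1 : ℤ) : ℂ) * (β : ℂ)))
      = (‖c 1‖ : ℂ) := by
    rw [hc]
    have hq : (starRingEnd ℂ) (Complex.exp (I * (α : ℂ))
        * (c 1 * Complex.exp (I * ((1 : ℤ) : ℂ) * (β : ℂ)))) = (‖c 1‖ : ℂ) := by
      rw [q1]; exact Complex.conj_ofReal _
    rw [← hq, map_mul, map_mul, ← Complex.exp_conj, ← Complex.exp_conj]
    have a1 : (starRingEnd ℂ) (I * (α : ℂ)) = -(I * (α : ℂ)) := by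
      simp [Complex.conj_ofReal]
    have a2 : (starRingEnd ℂ) (I * ((1 : ℤ) : ℂ) * (β : ℂ)) = I * ((-1 : ℤ) : ℂ) * (β : ℂ) := by
      simp only [map_mul, Complex.conj_I, map_intCast, Complex.conj_ofReal]
      push_cast
      ring
    rw [a1, a2]
  -- the main value computation
  have hval : ∑ m ∈ Finset.range (n+1),
      ((Real.cos α - Real.cos (2 * Real.pi * m / ((n+1 : ℕ) : ℝ) - α) : ℝ) : ℂ)
        * (∑ j ∈ Finset.Icc (-(n : ℤ) + 1) ((n : ℤ) - 1),
            (c j * Complex.exp (I * (j : ℂ) * (β : ℂ)))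
              * Complex.exp (I * j * (2 * (Real.pi : ℂ) * m / ((n+1 : ℕ) : ℂ))))
      = ((n+1 : ℕ) : ℂ) * ((Real.cos α : ℂ) * c 0 - (‖c 1‖ : ℂ)) := by
    have step : ∀ m ∈ Finset.range (n+1),
        ((Real.cos α - Real.cos (2 * Real.pi * m / ((n+1 : ℕ) : ℝ) - α) : ℝ) : ℂ)
          * (∑ j ∈ Finset.Icc (-(n : ℤ) + 1) ((n : ℤ) - 1),
              (c j * Complex.exp (I * (j : ℂ) * (β : ℂ)))
                * Complex.exp (I * j * (2 * (Real.pi : ℂ) * m / ((n+1 : ℕ) : ℂ))))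
        = (Real.cos α : ℂ) * (Complex.exp (I * ((-(0 : ℤ) : ℤ) : ℂ)
              * (2 * (Real.pi : ℂ) * m / ((n+1 : ℕ) : ℂ)))
            * ∑ j ∈ Finset.Icc (-(n : ℤ) + 1) ((n : ℤ) - 1),
              (c j * Complex.exp (I * (j : ℂ) * (β : ℂ)))
                * Complex.exp (I * j * (2 * (Real.pi : ℂ) * m / ((n+1 : ℕ) : ℂ))))
          - Complex.exp (-(I * (α : ℂ))) / 2 * (Complex.exp (I * ((-(-1 : ℤ) : ℤ) : ℂ)
              * (2 * (Real.pi : ℂ) * m / ((n+1 : ℕ) : ℂ)))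
            * ∑ j ∈ Finset.Icc (-(n : ℤ) + 1) ((n : ℤ) - 1),
              (c j * Complex.exp (I * (j : ℂ) * (β : ℂ)))
                * Complex.exp (I * j * (2 * (Real.pi : ℂ) * m / ((n+1 : ℕ) : ℂ))))
          - Complex.exp (I * (α : ℂ)) / 2 * (Complex.exp (I * ((-(1 : ℤ) : ℤ) : ℂ)
              * (2 * (Real.pi : ℂ) * m / ((n+1 : ℕ) : ℂ)))
            * ∑ j ∈ Finset.Icc (-(n : ℤ) + 1) ((n : ℤ) - 1),
              (c j * Complex.exp (I * (j : ℂ) * (β : ℂ)))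
                * Complex.exp (I * j * (2 * (Real.pi : ℂ) * m / ((n+1 : ℕ) : ℂ)))) := by
      intro m _
      have p0 : Complex.exp (I * ((-(0 : ℤ) : ℤ) : ℂ)
          * (2 * (Real.pi : ℂ) * m / ((n+1 : ℕ) : ℂ))) = 1 := by
        simp
      have p1 : Complex.exp (I * ((2 * Real.pi * m / ((n+1 : ℕ) : ℝ) - α : ℝ) : ℂ))
          = Complex.exp (-(I * (α : ℂ))) * Complex.exp (I * ((-(-1 : ℤ) : ℤ) : ℂ)
              * (2 * (Real.pi : ℂ) * m / ((n+1 : ℕ) : ℂ))) := by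
        rw [← Complex.exp_add]; congr 1; push_cast; ring
      have p2 : Complex.exp (-(I * ((2 * Real.pi * m / ((n+1 : ℕ) : ℝ) - α : ℝ) : ℂ)))
          = Complex.exp (I * (α : ℂ)) * Complex.exp (I * ((-(1 : ℤ) : ℤ) : ℂ)
              * (2 * (Real.pi : ℂ) * m / ((n+1 : ℕ) : ℂ))) := by
        rw [← Complex.exp_add]; congr 1; push_cast; ring
      rw [Complex.ofReal_sub, hcos (2 * Real.pi * m / ((n+1 : ℕ) : ℝ) - α)]
      set G := ∑ j ∈ Finset.Icc (-(n : ℤ) + 1) ((n : ℤ) - 1),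
              (c j * Complex.exp (I * (j : ℂ) * (β : ℂ)))
                * Complex.exp (I * j * (2 * (Real.pi : ℂ) * m / ((n+1 : ℕ) : ℂ)))
      linear_combination (-((Real.cos α : ℂ) * G)) * p0 - (G / 2) * p1 - (G / 2) * p2
    rw [Finset.sum_congr rfl step]
    rw [Finset.sum_sub_distrib, Finset.sum_sub_distrib, ← Finset.mul_sum, ← Finset.mul_sum,
      ← Finset.mul_sum, E0, Em1, E1]
    have p0' : Complex.exp (I * ((0 : ℤ) : ℂ) * (β : ℂ)) = 1 := by simp
    linear_combination (((n+1 : ℕ) : ℂ) * (Real.cos α : ℂ) * c 0) * p0'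
      - (((n+1 : ℕ) : ℂ)/2) * q2 - (((n+1 : ℕ) : ℂ)/2) * q1
  -- positivity of the weighted sum
  have hval' : ∑ m ∈ Finset.range (n+1),
      ((Real.cos α - Real.cos (2 * Real.pi * m / ((n+1 : ℕ) : ℝ) - α) : ℝ) : ℂ)
        * (∑ j ∈ Finset.Icc (-(n : ℤ) + 1) ((n : ℤ) - 1),
            c j * Complex.exp (I * j * ((2 * Real.pi * m / ((n+1 : ℕ) : ℝ) + β : ℝ) : ℂ)))
      = ((n+1 : ℕ) : ℂ) * ((Real.cos α : ℂ) * c 0 - (‖c 1‖ : ℂ)) := by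
    calc ∑ m ∈ Finset.range (n+1),
        ((Real.cos α - Real.cos (2 * Real.pi * m / ((n+1 : ℕ) : ℝ) - α) : ℝ) : ℂ)
          * (∑ j ∈ Finset.Icc (-(n : ℤ) + 1) ((n : ℤ) - 1),
              c j * Complex.exp (I * j * ((2 * Real.pi * m / ((n+1 : ℕ) : ℝ) + β : ℝ) : ℂ)))
        = ∑ m ∈ Finset.range (n+1),
          ((Real.cos α - Real.cos (2 * Real.pi * m / ((n+1 : ℕ) : ℝ) - α) : ℝ) : ℂ)
            * (∑ j ∈ Finset.Icc (-(n : ℤ) + 1) ((n : ℤ) - 1),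
                (c j * Complex.exp (I * (j : ℂ) * (β : ℂ)))
                  * Complex.exp (I * j * (2 * (Real.pi : ℂ) * m / ((n+1 : ℕ) : ℂ)))) :=
        Finset.sum_congr rfl fun m _ => by rw [hFG m]
      _ = ((n+1 : ℕ) : ℂ) * ((Real.cos α : ℂ) * c 0 - (‖c 1‖ : ℂ)) := hval
  have hre1 : ∀ (r : ℝ) (z : ℂ), ((r : ℂ) * z).re = r * z.re := fun r z => by
    simp [Complex.mul_re]
  have hSre : 0 ≤ (((n+1 : ℕ) : ℂ) * ((Real.cos α : ℂ) * c 0 - (‖c 1‖ : ℂ))).re := by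
    rw [← hval', Complex.re_sum]
    refine Finset.sum_nonneg fun m hm => ?_
    rw [hre1]
    have hm' : m ≤ n := by
      have := Finset.mem_range.1 hm
      omega
    exact mul_nonneg (by linarith [hw m hm'])
      ((hpos (2 * Real.pi * m / ((n+1 : ℕ) : ℝ) + β)).2)
  have hre2 : (((n+1 : ℕ) : ℂ) * ((Real.cos α : ℂ) * c 0 - (‖c 1‖ : ℂ))).re
      = ((n : ℝ) + 1) * (Real.cos α * (c 0).re - ‖c 1‖) := by
    simp only [Complex.mul_re, Complex.mul_im, Complex.sub_re, Complex.sub_im,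
      Complex.ofReal_re, Complex.ofReal_im, Complex.natCast_re, Complex.natCast_im]
    push_cast
    ring
  rw [hre2] at hSre
  have h9 : (0 : ℝ) < (n : ℝ) + 1 := by positivity
  have h11 : 0 ≤ Real.cos α * (c 0).re - ‖c 1‖ := by
    by_contra h
    push_neg at h
    nlinarith
  linarith [h11, mul_comm (Real.cos α) ((c 0).re)]
end

section
/- Let n ≥ 2 and 0 ≤ α < 1, and let t₁^{(n)} be the smallest zero in (0, π) of the function q_{n,α}(t) = sin((n+1)t) − 2α·sin(nt) + α²·sin((n−1)t). Then (2/(n+1))·arccos(α) ≤ t₁^{(n)} ≤ arccos(α). -/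
open Real Set

namespace SmallestZeroAux

noncomputable def r2 (α t : ℝ) : ℝ := 1 + α^2 - 2*α*Real.cos t

noncomputable def φ (α t : ℝ) : ℝ := Real.arccos ((Real.cos t - α) / Real.sqrt (r2 α t))

theorem r2_eq (α t : ℝ) : r2 α t = (Real.cos t - α)^2 + (Real.sin t)^2 := by
  have := Real.sin_sq_add_cos_sq t
  unfold r2; nlinarith

theorem r2_pos {α : ℝ} (hα0 : 0 ≤ α) (hα1 : α < 1) (t : ℝ) : 0 < r2 α t := by
  have h1 := Real.cos_le_one t
  have h2 := Real.neg_one_le_cos t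
  unfold r2; nlinarith [sq_nonneg (1 - α)]

theorem sqrt_r2_pos {α : ℝ} (hα0 : 0 ≤ α) (hα1 : α < 1) (t : ℝ) : 0 < Real.sqrt (r2 α t) :=
  Real.sqrt_pos.2 (r2_pos hα0 hα1 t)

theorem u_mem {α : ℝ} (hα0 : 0 ≤ α) (hα1 : α < 1) (t : ℝ) :
    -1 ≤ (Real.cos t - α) / Real.sqrt (r2 α t) ∧ (Real.cos t - α) / Real.sqrt (r2 α t) ≤ 1 := by
  have hs := sqrt_r2_pos hα0 hα1 t
  have hsq : (Real.sqrt (r2 α t))^2 = r2 α t := Real.sq_sqrt (r2_pos hα0 hα1 t).le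
  constructor
  · rw [le_div_iff₀ hs]; nlinarith [sq_nonneg (Real.sin t), r2_eq α t, sq_nonneg (Real.sqrt (r2 α t) + (Real.cos t - α))]
  · rw [div_le_one hs]; nlinarith [sq_nonneg (Real.sin t), r2_eq α t, sq_nonneg (Real.sqrt (r2 α t) - (Real.cos t - α))]

theorem cos_φ {α : ℝ} (hα0 : 0 ≤ α) (hα1 : α < 1) (t : ℝ) :
    Real.cos (φ α t) = (Real.cos t - α) / Real.sqrt (r2 α t) :=
  Real.cos_arccos (u_mem hα0 hα1 t).1 (u_mem hα0 hα1 t).2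

theorem sin_φ {α : ℝ} (hα0 : 0 ≤ α) (hα1 : α < 1) {t : ℝ} (ht : 0 ≤ Real.sin t) :
    Real.sin (φ α t) = Real.sin t / Real.sqrt (r2 α t) := by
  have hr := r2_pos hα0 hα1 t
  have hsq : (Real.sqrt (r2 α t))^2 = r2 α t := Real.sq_sqrt hr.le
  rw [φ, Real.sin_arccos]
  have h1 : 1 - ((Real.cos t - α) / Real.sqrt (r2 α t))^2 = (Real.sin t)^2 / r2 α t := by
    rw [div_pow, hsq]
    field_simp
    nlinarith [r2_eq α t]
  rw [h1, Real.sqrt_div (sq_nonneg _), Real.sqrt_sq ht]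


theorem q_eq {α : ℝ} (hα0 : 0 ≤ α) (hα1 : α < 1) (m : ℝ) {t : ℝ} (ht : 0 ≤ Real.sin t) :
    Real.sin ((m + 1) * t) - 2 * α * Real.sin (m * t) + α ^ 2 * Real.sin ((m - 1) * t)
      = r2 α t * Real.sin (2 * φ α t + (m - 1) * t) := by
  have hr := r2_pos hα0 hα1 t
  have hsq : (Real.sqrt (r2 α t))^2 = r2 α t := Real.sq_sqrt hr.le
  have hsn : Real.sqrt (r2 α t) ≠ 0 := (sqrt_r2_pos hα0 hα1 t).ne'
  have e1 : (m + 1) * t = (m - 1) * t + 2 * t := by ring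
  have e2 : m * t = (m - 1) * t + t := by ring
  rw [e1, e2, Real.sin_add, Real.sin_add, Real.sin_add (2 * φ α t)]
  rw [Real.sin_two_mul, Real.cos_two_mul, Real.sin_two_mul (φ α t), Real.cos_two_mul (φ α t),
    sin_φ hα0 hα1 ht, cos_φ hα0 hα1]
  have hpy := Real.sin_sq_add_cos_sq t
  have hr2 : r2 α t = (Real.cos t - α)^2 + (Real.sin t)^2 := r2_eq α t
  field_simp
  unfold r2
  unfold r2 at hsq
  linear_combination (2 * Real.sin ((m - 1) * t) * (Real.cos t - α)^2 + 2 * Real.cos ((m - 1) * t) * Real.sin t * (Real.cos t - α)) * hsq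


theorem continuous_φ {α : ℝ} (hα0 : 0 ≤ α) (hα1 : α < 1) : Continuous (φ α) := by
  apply Real.continuous_arccos.comp
  exact Continuous.div (Real.continuous_cos.sub continuous_const)
    (Real.continuous_sqrt.comp (by unfold r2; fun_prop))
    (fun t => (sqrt_r2_pos hα0 hα1 t).ne')

theorem φ_zero {α : ℝ} (hα0 : 0 ≤ α) (hα1 : α < 1) : φ α 0 = 0 := by
  have h : r2 α 0 = (1-α)^2 := by unfold r2; rw [Real.cos_zero]; ring
  rw [φ, Real.cos_zero, h, Real.sqrt_sq (by linarith), div_self (by linarith : (1:ℝ) - α ≠ 0),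
    Real.arccos_one]

theorem φ_arccos {α : ℝ} (hα0 : 0 ≤ α) (hα1 : α < 1) : φ α (Real.arccos α) = Real.pi/2 := by
  rw [φ, Real.cos_arccos (by linarith) (by linarith), sub_self, zero_div, Real.arccos_zero]

theorem hasDerivAt_φ {α : ℝ} (hα0 : 0 ≤ α) (hα1 : α < 1) {t : ℝ} (hs : 0 < Real.sin t) :
    HasDerivAt (φ α) ((1 - α * Real.cos t) / r2 α t) t := by
  have hr := r2_pos hα0 hα1 t
  have hsqpos := sqrt_r2_pos hα0 hα1 t
  have hsq : (Real.sqrt (r2 α t))^2 = r2 α t := Real.sq_sqrt hr.le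
  have hult : ((Real.cos t - α) / Real.sqrt (r2 α t))^2 < 1 := by
    rw [div_pow, hsq, div_lt_one hr]
    nlinarith [r2_eq α t]
  have hne1 : (Real.cos t - α) / Real.sqrt (r2 α t) ≠ -1 := by
    intro h; rw [h] at hult; norm_num at hult
  have hne2 : (Real.cos t - α) / Real.sqrt (r2 α t) ≠ 1 := by
    intro h; rw [h] at hult; norm_num at hult
  have hr2' : HasDerivAt (fun x => r2 α x) (2*α*Real.sin t) t := by
    have h := ((Real.hasDerivAt_cos t).const_mul (2*α)).const_sub (1 + α^2)
    simpa [r2, mul_comm] using h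
  have hsqrt : HasDerivAt (fun x => Real.sqrt (r2 α x))
      (1/(2*Real.sqrt (r2 α t)) * (2*α*Real.sin t)) t :=
    (Real.hasDerivAt_sqrt hr.ne').comp t hr2'
  have hu : HasDerivAt (fun x => (Real.cos x - α)/Real.sqrt (r2 α x))
      (((-Real.sin t) * Real.sqrt (r2 α t)
        - (Real.cos t - α) * (1/(2*Real.sqrt (r2 α t)) * (2*α*Real.sin t)))
        / (Real.sqrt (r2 α t))^2) t :=
    ((Real.hasDerivAt_cos t).sub_const α).div hsqrt hsqpos.ne'
  have harc := (Real.hasDerivAt_arccos hne1 hne2).comp t hu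
  have hsin1 : Real.sqrt (1 - ((Real.cos t - α) / Real.sqrt (r2 α t))^2)
      = Real.sin t / Real.sqrt (r2 α t) := by
    rw [← Real.sin_arccos]; exact sin_φ hα0 hα1 hs.le
  have : HasDerivAt (φ α)
      (-(1 / Real.sqrt (1 - ((Real.cos t - α) / Real.sqrt (r2 α t)) ^ 2)) *
        (((-Real.sin t) * Real.sqrt (r2 α t)
          - (Real.cos t - α) * (1/(2*Real.sqrt (r2 α t)) * (2*α*Real.sin t)))
          / (Real.sqrt (r2 α t))^2)) t := harc
  convert this using 1
  rw [hsin1, hsq]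
  field_simp
  unfold r2 at hsq ⊢
  linear_combination (-1 : ℝ) * hsq

end SmallestZeroAux

open SmallestZeroAux

/-- For `n ≥ 2` and `0 ≤ α < 1`, the smallest zero `t₁` in `(0, π)` of
`q_{n,α}(t) = sin((n+1)t) − 2α sin(nt) + α² sin((n−1)t)` satisfies
`(2/(n+1))·arccos α ≤ t₁ ≤ arccos α`. -/
theorem smallest_zero_bounds (n : ℕ) (hn : 2 ≤ n) (α : ℝ) (hα0 : 0 ≤ α) (hα1 : α < 1)
    (t₁ : ℝ)
    (ht₁ : IsLeast {t : ℝ | t ∈ Set.Ioo 0 Real.pi ∧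
      Real.sin (((n : ℝ) + 1) * t) - 2 * α * Real.sin ((n : ℝ) * t)
        + α ^ 2 * Real.sin (((n : ℝ) - 1) * t) = 0} t₁) :
    (2 / ((n : ℝ) + 1)) * Real.arccos α ≤ t₁ ∧ t₁ ≤ Real.arccos α := by
  obtain ⟨⟨⟨ht₁0, ht₁π⟩, hq⟩, hlb⟩ := ht₁
  set θ := Real.arccos α with hθdef
  have hθ0 : 0 < θ := Real.arccos_pos.2 hα1
  have hθ2 : θ ≤ Real.pi/2 := Real.arccos_le_pi_div_two.2 hα0
  have hcosθ : Real.cos θ = α := Real.cos_arccos (by linarith) hα1.le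
  have hπ : 0 < Real.pi := Real.pi_pos
  have hn2 : (2:ℝ) ≤ (n:ℝ) := by exact_mod_cast hn
  set g : ℝ → ℝ := fun t => 2 * φ α t + ((n:ℝ) - 1) * t with hg
  have hφc : Continuous (φ α) := continuous_φ hα0 hα1
  have hgc : Continuous g := by rw [hg]; fun_prop
  have hsinpos : ∀ t ∈ Set.Ioo (0:ℝ) θ, 0 < Real.sin t := fun t ht =>
    Real.sin_pos_of_pos_of_lt_pi ht.1 (lt_of_lt_of_le ht.2 (by linarith))
  -- strict monotonicity of g on [0, θ]
  have hgmono : StrictMonoOn g (Set.Icc 0 θ) := by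
    apply strictMonoOn_of_hasDerivWithinAt_pos (convex_Icc 0 θ) hgc.continuousOn
      (f' := fun x => 2 * ((1 - α*Real.cos x)/r2 α x) + ((n:ℝ)-1))
    · intro x hx
      rw [interior_Icc] at hx
      have h2 : HasDerivAt (fun x : ℝ => ((n:ℝ)-1) * x) ((n:ℝ)-1) x := by
        simpa using (hasDerivAt_id x).const_mul ((n:ℝ)-1)
      have h := ((hasDerivAt_φ hα0 hα1 (hsinpos x hx)).const_mul 2).add h2
      rw [hg]
      exact h.hasDerivWithinAt
    · intro x hx
      have hr := r2_pos hα0 hα1 x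
      have hc := Real.cos_le_one x
      have h1 : 0 < 1 - α*Real.cos x := by nlinarith
      have := div_pos h1 hr
      nlinarith
  -- φ(t) - t is monotone on [0, θ]
  have hφmono : MonotoneOn (fun t => φ α t - t) (Set.Icc 0 θ) := by
    apply monotoneOn_of_hasDerivWithinAt_nonneg (convex_Icc 0 θ)
      (((continuous_φ hα0 hα1).sub continuous_id).continuousOn)
      (f' := fun x => (1 - α*Real.cos x)/r2 α x - 1)
    · intro x hx
      rw [interior_Icc] at hx
      exact ((hasDerivAt_φ hα0 hα1 (hsinpos x hx)).sub (hasDerivAt_id x)).hasDerivWithinAt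
    · intro x hx
      rw [interior_Icc] at hx
      have hr := r2_pos hα0 hα1 x
      have hcx : α ≤ Real.cos x := by
        rw [← hcosθ]
        exact Real.cos_le_cos_of_nonneg_of_le_pi hx.1.le (by linarith) hx.2.le
      have h2 : r2 α x ≤ 1 - α*Real.cos x := by unfold r2; nlinarith
      have := (one_le_div hr).2 h2
      linarith
  -- Upper bound: there is a zero in (0, θ]
  have hg0 : g 0 = 0 := by simp [hg, φ_zero hα0 hα1]
  have hgθ : g θ = Real.pi + ((n:ℝ)-1)*θ := by
    simp only [hg]; rw [φ_arccos hα0 hα1]; ring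
  have hπmem : Real.pi ∈ Set.Icc (g 0) (g θ) := by
    rw [hg0, hgθ]; constructor <;> nlinarith
  obtain ⟨ts, htsmem, hts⟩ := intermediate_value_Icc hθ0.le hgc.continuousOn hπmem
  have hts0 : 0 < ts := by
    rcases lt_or_eq_of_le htsmem.1 with h | h
    · exact h
    · exfalso; rw [← h] at hts; rw [hg0] at hts; exact hπ.ne hts
  have htsπ : ts < Real.pi := by
    have := htsmem.2; linarith
  have hqts : Real.sin (((n:ℝ) + 1) * ts) - 2 * α * Real.sin ((n:ℝ) * ts)
      + α ^ 2 * Real.sin (((n:ℝ) - 1) * ts) = 0 := by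
    rw [q_eq hα0 hα1 (n:ℝ) (Real.sin_nonneg_of_nonneg_of_le_pi hts0.le htsπ.le)]
    have : 2 * φ α ts + ((n:ℝ) - 1) * ts = Real.pi := hts
    rw [this, Real.sin_pi, mul_zero]
  have hub : t₁ ≤ θ := le_trans (hlb ⟨⟨hts0, htsπ⟩, hqts⟩) htsmem.2
  refine ⟨?_, hub⟩
  -- Lower bound
  by_contra hcon
  push_neg at hcon
  set t₀ : ℝ := 2 / ((n:ℝ) + 1) * θ with ht₀def
  have hn1 : (0:ℝ) < (n:ℝ) + 1 := by linarith
  have ht₀θ : t₀ ≤ θ := by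
    rw [ht₀def, div_mul_eq_mul_div, div_le_iff₀ hn1]; nlinarith
  have ht₀pos : 0 < t₀ := by positivity
  have ht₁mem : t₁ ∈ Set.Icc (0:ℝ) θ := ⟨ht₁0.le, hub⟩
  have ht₀mem : t₀ ∈ Set.Icc (0:ℝ) θ := ⟨ht₀pos.le, ht₀θ⟩
  have hθmem : θ ∈ Set.Icc (0:ℝ) θ := ⟨hθ0.le, le_refl _⟩
  -- g t₀ ≤ π
  have hφt₀ : φ α t₀ - t₀ ≤ φ α θ - θ := hφmono ht₀mem hθmem ht₀θ
  have hsum : ((n:ℝ)+1) * t₀ = 2 * θ := by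
    rw [ht₀def]; field_simp
  have hgt₀ : g t₀ ≤ Real.pi := by
    have hφθ : φ α θ = Real.pi/2 := φ_arccos hα0 hα1
    rw [hφθ] at hφt₀
    simp only [hg]
    linarith
  -- 0 < g t₁ < π
  have hgt₁lt : g t₁ < Real.pi := lt_of_lt_of_le (hgmono ht₁mem ht₀mem hcon) hgt₀
  have hgt₁pos : 0 < g t₁ := by
    have h1 : 0 ≤ φ α t₁ := Real.arccos_nonneg _
    have h2 : 0 < ((n:ℝ) - 1) * t₁ := mul_pos (by linarith) ht₁0
    simp only [hg]; linarith
  have hsin1 : Real.sin (g t₁) = 0 := by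
    have := hq
    rw [q_eq hα0 hα1 (n:ℝ) (Real.sin_nonneg_of_nonneg_of_le_pi ht₁0.le ht₁π.le)] at this
    rcases mul_eq_zero.1 this with h | h
    · exact absurd h (r2_pos hα0 hα1 t₁).ne'
    · exact h
  exact (Real.sin_pos_of_pos_of_lt_pi hgt₁pos hgt₁lt).ne' hsin1
end

section
/- Let n ≥ 2 and 0 ≤ α < 1. For every integer k with 1 ≤ k ≤ n, the function q_{n,α}(t) = sin((n+1)t) − 2α·sin(nt) + α²·sin((n−1)t) has a zero t in the interval ((k−1)π/(n+1), kπ/(n+1)]; in particular q_{n,α} has at least n zeros in (0, π). -/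
open Real Set Filter Topology

set_option maxHeartbeats 1000000 in
/-- For `n ≥ 2`, `0 ≤ α < 1` and each `1 ≤ k ≤ n`, the function
`q_{n,α}(t) = sin((n+1)t) − 2α sin(nt) + α² sin((n−1)t)` has a zero in the
interval `((k−1)π/(n+1), kπ/(n+1)]`; in particular it has at least `n` zeros
in `(0, π)`. -/
theorem zero_in_each_interval (n : ℕ) (hn : 2 ≤ n) (α : ℝ) (hα0 : 0 ≤ α) (hα1 : α < 1)
    (k : ℕ) (hk1 : 1 ≤ k) (hkn : k ≤ n) :
    ∃ t ∈ Set.Ioc (((k : ℝ) - 1) * Real.pi / ((n : ℝ) + 1))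
        ((k : ℝ) * Real.pi / ((n : ℝ) + 1)),
      Real.sin (((n : ℝ) + 1) * t) - 2 * α * Real.sin ((n : ℝ) * t)
        + α ^ 2 * Real.sin (((n : ℝ) - 1) * t) = 0 := by
  have hπ := Real.pi_pos
  have hN1 : (0:ℝ) < (n:ℝ) + 1 := by positivity
  set q : ℝ → ℝ := fun t => Real.sin (((n : ℝ) + 1) * t) - 2 * α * Real.sin ((n : ℝ) * t)
        + α ^ 2 * Real.sin (((n : ℝ) - 1) * t) with hq
  have hqcont : Continuous q := by fun_prop
  set a : ℝ := ((k : ℝ) - 1) * Real.pi / ((n : ℝ) + 1) with ha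
  set b : ℝ := (k : ℝ) * Real.pi / ((n : ℝ) + 1) with hb
  have hab : a < b := by
    rw [ha, hb, div_lt_div_iff₀ hN1 hN1]
    nlinarith
  -- value of q at nodes jπ/(n+1)
  have hval : ∀ j : ℕ, q ((j:ℝ) * Real.pi / ((n:ℝ)+1)) =
      (-1)^j * (2*α*Real.sin ((j:ℝ)*Real.pi/((n:ℝ)+1)) *
        (1 - α*Real.cos ((j:ℝ)*Real.pi/((n:ℝ)+1)))) := by
    intro j
    set t := (j:ℝ)*Real.pi/((n:ℝ)+1) with ht
    have e1 : ((n:ℝ)+1) * t = (j:ℝ) * Real.pi := by rw [ht]; field_simp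
    have e2 : (n:ℝ) * t = (j:ℝ) * Real.pi - t := by rw [ht]; field_simp; ring
    have e3 : ((n:ℝ)-1) * t = (j:ℝ) * Real.pi - 2*t := by rw [ht]; field_simp; ring
    simp only [hq, e1, e2, e3, Real.sin_nat_mul_pi, Real.sin_nat_mul_pi_sub,
      Real.sin_two_mul]
    ring
  -- positivity ingredients at nodes for 1 ≤ j ≤ n
  have hnode : ∀ j : ℕ, 1 ≤ j → j ≤ n →
      0 < Real.sin ((j:ℝ)*Real.pi/((n:ℝ)+1)) ∧
      0 < 1 - α*Real.cos ((j:ℝ)*Real.pi/((n:ℝ)+1)) := by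
    intro j hj1 hjn
    have hjn' : (j:ℝ) < (n:ℝ)+1 := by exact_mod_cast Nat.lt_succ_of_le hjn
    have hj1' : (1:ℝ) ≤ (j:ℝ) := by exact_mod_cast hj1
    have h0 : 0 < (j:ℝ)*Real.pi/((n:ℝ)+1) := by positivity
    have hlt : (j:ℝ)*Real.pi/((n:ℝ)+1) < Real.pi := by
      rw [div_lt_iff₀ hN1]; nlinarith
    refine ⟨Real.sin_pos_of_pos_of_lt_pi h0 hlt, ?_⟩
    have : α * Real.cos ((j:ℝ)*Real.pi/((n:ℝ)+1)) ≤ α :=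
      mul_le_of_le_one_right hα0 (Real.cos_le_one _)
    linarith
  -- IVT helper
  have ivt : ∀ x y : ℝ, x < y → q x * q y < 0 → ∃ t ∈ Set.Ioo x y, q t = 0 := by
    intro x y hxy hsign
    rcases lt_or_ge (q x) 0 with hx | hx
    · have hy : 0 < q y := by nlinarith
      have := intermediate_value_Ioo hxy.le hqcont.continuousOn
      obtain ⟨t, ht, hqt⟩ := this (Set.mem_Ioo.mpr ⟨hx, hy⟩)
      exact ⟨t, ht, hqt⟩
    · have hx' : 0 < q x := by
        rcases hx.lt_or_eq with h | h
        · exact h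
        · exact absurd hsign (by rw [← h]; simp)
      have hy : q y < 0 := by nlinarith
      have := intermediate_value_Ioo' hxy.le hqcont.continuousOn
      obtain ⟨t, ht, hqt⟩ := this (Set.mem_Ioo.mpr ⟨hy, hx'⟩)
      exact ⟨t, ht, hqt⟩
  rcases eq_or_lt_of_le hα0 with hα | hα
  · -- α = 0 : the node b itself is a zero
    refine ⟨b, ⟨hab, le_refl _⟩, ?_⟩
    have e1 : ((n:ℝ)+1) * b = (k:ℝ) * Real.pi := by rw [hb]; field_simp
    show q b = 0
    rw [hval k, ← hα]
    ring
  · -- α > 0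
    have hvb : q b = (-1)^k * (2*α*Real.sin b * (1 - α*Real.cos b)) := hval k
    have hQ : 0 < 2*α*Real.sin b * (1 - α*Real.cos b) := by
      obtain ⟨h1, h2⟩ := hnode k hk1 hkn
      exact mul_pos (mul_pos (by linarith) h1) h2
    rcases eq_or_lt_of_le hk1 with hk1' | hk2
    · -- k = 1 : derivative argument at 0
      have hk1'' : k = 1 := hk1'.symm
      subst hk1''
      have ha0 : a = 0 := by rw [ha]; push_cast; ring
      have hq0 : q 0 = 0 := by simp [hq]
      set c : ℝ := ((n:ℝ)+1) - 2*α*(n:ℝ) + α^2*((n:ℝ)-1) with hc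
      have hcpos : 0 < c := by
        have hn' : (2:ℝ) ≤ (n:ℝ) := by exact_mod_cast hn
        nlinarith [mul_nonneg (by linarith : (0:ℝ) ≤ (n:ℝ)) (sq_nonneg (1-α))]
      have hd : HasDerivAt q c 0 := by
        have h1 : HasDerivAt (fun t : ℝ => Real.sin (((n:ℝ)+1)*t))
            (Real.cos (((n:ℝ)+1)*0) * (((n:ℝ)+1)*1)) 0 :=
          (Real.hasDerivAt_sin _).comp 0 ((hasDerivAt_id 0).const_mul ((n:ℝ)+1))
        have h2 : HasDerivAt (fun t : ℝ => Real.sin ((n:ℝ)*t))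
            (Real.cos ((n:ℝ)*0) * ((n:ℝ)*1)) 0 :=
          (Real.hasDerivAt_sin _).comp 0 ((hasDerivAt_id 0).const_mul (n:ℝ))
        have h3 : HasDerivAt (fun t : ℝ => Real.sin (((n:ℝ)-1)*t))
            (Real.cos (((n:ℝ)-1)*0) * (((n:ℝ)-1)*1)) 0 :=
          (Real.hasDerivAt_sin _).comp 0 ((hasDerivAt_id 0).const_mul ((n:ℝ)-1))
        have H := (h1.sub (h2.const_mul (2*α))).add (h3.const_mul (α^2))
        exact H.congr_deriv (by simp [Real.cos_zero, hc])
      rw [hasDerivAt_iff_tendsto_slope] at hd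
      have hd' : Tendsto (slope q 0) (𝓝[>] 0) (𝓝 c) :=
        hd.mono_left (nhdsWithin_mono _ (fun x hx => ne_of_gt hx))
      have hev1 : ∀ᶠ t in 𝓝[>] (0:ℝ), 0 < slope q 0 t :=
        hd'.eventually (eventually_gt_nhds hcpos)
      have hb0 : 0 < b := by rw [hb]; positivity
      have hev2 : ∀ᶠ t in 𝓝[>] (0:ℝ), t ∈ Set.Ioo 0 b :=
        Filter.eventually_mem_set.mpr (Ioo_mem_nhdsGT_of_mem ⟨le_refl 0, hb0⟩)
      obtain ⟨t, hslope, ht0, htb⟩ := (hev1.and hev2).exists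
      have htq : 0 < q t := by
        rw [slope_def_field, hq0] at hslope
        have : q t = (q t - 0) / (t - 0) * t := by field_simp; ring
        rw [this]
        exact mul_pos hslope ht0
      have hqb : q b < 0 := by rw [hvb]; simp; nlinarith
      obtain ⟨t', ht', hqt'⟩ := ivt t b htb (by nlinarith)
      exact ⟨t', ⟨by rw [ha0]; exact lt_trans ht0 ht'.1, ht'.2.le⟩, hqt'⟩
    · -- k ≥ 2
      have hj1 : 1 ≤ k - 1 := by omega
      have hjn : k - 1 ≤ n := by omega
      have hcast : ((k - 1 : ℕ) : ℝ) = (k:ℝ) - 1 := by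
        push_cast [Nat.cast_sub hk1]; ring
      have hva : q a = (-1)^(k-1) * (2*α*Real.sin a * (1 - α*Real.cos a)) := by
        have := hval (k-1)
        rw [hcast] at this
        exact this
      have hP : 0 < 2*α*Real.sin a * (1 - α*Real.cos a) := by
        obtain ⟨h1, h2⟩ := hnode (k-1) hj1 hjn
        rw [hcast] at h1 h2
        exact mul_pos (mul_pos (by linarith) h1) h2
      have hpow : (-1:ℝ)^(k-1) * (-1)^k = -1 := by
        rw [← pow_add]
        have : (k-1) + k = 2*(k-1)+1 := by omega
        rw [this, pow_succ, pow_mul]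
        simp
      have hprod : q a * q b < 0 := by
        have e : q a * q b = ((-1:ℝ)^(k-1) * (-1)^k) * ((2*α*Real.sin a*(1 - α*Real.cos a)) *
            (2*α*Real.sin b*(1 - α*Real.cos b))) := by
          rw [hva, hvb]; ring
        rw [hpow] at e
        rw [e]
        linarith [mul_pos hP hQ]
      obtain ⟨t, ht, hqt⟩ := ivt a b hab hprod
      exact ⟨t, ⟨ht.1, ht.2.le⟩, hqt⟩
end

section
/- Let n ≥ 2 and 0 ≤ α < 1, and let λ₁^{(n)} be the largest eigenvalue of the real symmetric n×n matrix K_n(α) = (α^{|r−s|})_{r,s=1}^{n}. Then 1 ≤ λ₁^{(n)} ≤ (1 − α²) / (1 − 2α·cos( (2/(n+1))·arccos(α) ) + α²). -/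
open Finset

private lemma kms_amgm (wa wb a b : ℝ) (hwa : 0 < wa) (hwb : 0 < wb) :
    2 * (a * b) ≤ (wb / wa) * a ^ 2 + (wa / wb) * b ^ 2 := by
  rw [← sub_nonneg]
  have h : (wb / wa) * a ^ 2 + (wa / wb) * b ^ 2 - 2 * (a * b)
      = (wb * a - wa * b) ^ 2 / (wa * wb) := by
    field_simp
    ring
  rw [h]
  positivity

set_option maxHeartbeats 3200000 in
private lemma kms_upper (n : ℕ) (hn : 2 ≤ n) (α : ℝ)
    (hα0 : 0 ≤ α) (hα1 : α < 1) (lam : ℝ) (hlam1 : 1 ≤ lam) (v : Fin n → ℝ) (hv : v ≠ 0)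
    (heig : (Matrix.of fun r s : Fin n => α ^ ((r : ℤ) - (s : ℤ)).natAbs).mulVec v = lam • v) :
    lam ≤ (1 - α ^ 2) /
        (1 - 2 * α * Real.cos ((2 / ((n : ℝ) + 1)) * Real.arccos α) + α ^ 2) := by
  classical
  have hlam0 : (0:ℝ) < lam := lt_of_lt_of_le one_pos hlam1
  have hlamne : lam ≠ 0 := ne_of_gt hlam0
  set φ := Real.arccos α with hφ
  set θ := (2 / ((n : ℝ) + 1)) * φ with hθ
  set d := 1 - 2 * α * Real.cos θ + α ^ 2 with hd
  have hn1 : (0:ℝ) < (n:ℝ) + 1 := by positivity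
  have hn2 : (2:ℝ) ≤ (n:ℝ) := by exact_mod_cast hn
  have hφpos : 0 < φ := Real.arccos_pos.2 hα1
  have hφle : φ ≤ Real.pi / 2 := Real.arccos_le_pi_div_two.2 hα0
  have hcosθ : Real.cos θ ≤ 1 := Real.cos_le_one θ
  have hdpos : 0 < d := by nlinarith [sq_nonneg (1 - α)]
  -- weights
  set c : ℝ := ((n:ℝ) - 1) / 2 with hc
  set w : ℕ → ℝ := fun r => Real.cos (θ * ((r:ℝ) - c)) with hw
  have hθc : θ * c < Real.pi / 2 := by
    have h1 : θ * c = φ * (((n:ℝ) - 1) / ((n:ℝ) + 1)) := by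
      rw [hθ, hc]; field_simp
    have h2 : ((n:ℝ) - 1) / ((n:ℝ) + 1) < 1 := by
      rw [div_lt_one hn1]; linarith
    nlinarith
  have hwpos : ∀ r : ℕ, (r:ℝ) ≤ (n:ℝ) - 1 → 0 < w r := by
    intro r hr
    have hr0 : (0:ℝ) ≤ (r:ℝ) := Nat.cast_nonneg r
    apply Real.cos_pos_of_mem_Ioo
    constructor
    · have : θ * ((r:ℝ) - c) ≥ θ * (-c) := by
        apply mul_le_mul_of_nonneg_left _ (by positivity)
        nlinarith
      nlinarith
    · have : θ * ((r:ℝ) - c) ≤ θ * c := by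
        apply mul_le_mul_of_nonneg_left _ (by positivity)
        rw [hc]; nlinarith
      linarith
  have hwle1 : ∀ r : ℕ, w r ≤ 1 := fun r => Real.cos_le_one _
  -- the recurrence for the weights
  have hrec : ∀ x : ℝ, Real.cos (θ * (x - 1 - c)) + Real.cos (θ * (x + 1 - c))
      = 2 * Real.cos θ * Real.cos (θ * (x - c)) := by
    intro x
    rw [show θ * (x - 1 - c) = θ * (x - c) - θ from by ring,
        show θ * (x + 1 - c) = θ * (x - c) + θ from by ring,
        Real.cos_sub, Real.cos_add]
    ring
  have hbdry : Real.cos (θ * ((0:ℝ) - 1 - c)) = α := by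
    have h1 : θ * ((0:ℝ) - 1 - c) = -φ := by rw [hθ, hc]; field_simp; ring
    rw [h1, Real.cos_neg, hφ, Real.cos_arccos (by linarith) (le_of_lt hα1)]
  have hbdry2 : Real.cos (θ * ((n:ℝ) - c)) = α := by
    have h1 : θ * ((n:ℝ) - c) = φ := by rw [hθ, hc]; field_simp; ring
    rw [h1, hφ, Real.cos_arccos (by linarith) (le_of_lt hα1)]
  -- the zero-extended eigenvector
  set y : ℤ → ℝ := fun k => if h : 0 ≤ k ∧ k < (n:ℤ) then v ⟨k.toNat, by omega⟩ else 0 with hy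
  have hyv : ∀ i : Fin n, y (i : ℤ) = v i := by
    intro i
    have h : 0 ≤ (i:ℤ) ∧ (i:ℤ) < (n:ℤ) := ⟨Int.natCast_nonneg _, by exact_mod_cast i.2⟩
    simp only [hy]
    rw [dif_pos h]
    exact congrArg v (Fin.ext (by simp))
  have hy0 : ∀ k : ℤ, k < 0 ∨ (n:ℤ) ≤ k → y k = 0 := by
    intro k hk
    simp only [hy]
    rw [dif_neg (by omega)]
  -- the eigen-equation in ℤ-indexed form
  have H : ∀ r : ℤ, 0 ≤ r → r < (n:ℤ) →
      (∑ s ∈ Finset.range n, α ^ ((r - (s:ℤ)).natAbs) * y (s:ℤ)) = lam * y r := by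
    intro r hr0 hrn
    have hrn' : r.toNat < n := by omega
    have h1 := congrFun heig ⟨r.toNat, hrn'⟩
    simp only [Matrix.mulVec, dotProduct, Matrix.of_apply, Pi.smul_apply,
      smul_eq_mul] at h1
    have hcast : (((⟨r.toNat, hrn'⟩ : Fin n) : ℕ) : ℤ) = r := by
      simp [Int.toNat_of_nonneg hr0]
    rw [← Fin.sum_univ_eq_sum_range (fun s => α ^ ((r - (s:ℤ)).natAbs) * y (s:ℤ)) n]
    calc ∑ s : Fin n, α ^ ((r - ((s:ℕ):ℤ)).natAbs) * y ((s:ℕ):ℤ)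
        = ∑ s : Fin n, α ^ (((((⟨r.toNat, hrn'⟩ : Fin n) : ℕ):ℤ) - ((s:ℕ):ℤ)).natAbs) * v s := by
          refine Finset.sum_congr rfl fun s _ => ?_
          rw [hcast, hyv]
      _ = lam * v ⟨r.toNat, hrn'⟩ := h1
      _ = lam * y r := by rw [← hyv ⟨r.toNat, hrn'⟩, hcast]
  set ν := (1 - α^2)/lam with hν
  set tc : ℤ → ℝ := fun r => if r = 0 ∨ r = (n:ℤ) - 1 then 1 else 1 + α^2 with htc
  have hT : ∀ r : ℤ, 0 ≤ r → r < (n:ℤ) →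
      tc r * y r - α * y (r-1) - α * y (r+1) = ν * y r := by
    intro r h0 h1n
    have key : lam * (tc r * y r - α * y (r-1) - α * y (r+1)) = (1 - α^2) * y r := by
      rcases eq_or_ne r 0 with hr0 | hr0
      · subst hr0
        have e0 := H 0 (le_refl _) (by omega)
        have e1 := H 1 (by omega) (by omega)
        have hym : y (-1) = 0 := hy0 _ (Or.inl (by omega))
        have htc0 : tc 0 = 1 := by simp [htc]
        rw [htc0, show (0:ℤ) - 1 = -1 from by ring, hym, show (0:ℤ)+1 = 1 from by ring]
        calc lam * (1 * y 0 - α * 0 - α * y 1)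
            = (∑ s ∈ Finset.range n, α ^ (((0:ℤ) - (s:ℤ)).natAbs) * y (s:ℤ))
              - α * (∑ s ∈ Finset.range n, α ^ (((1:ℤ) - (s:ℤ)).natAbs) * y (s:ℤ)) := by
              rw [e0, e1]; ring
          _ = ∑ s ∈ Finset.range n,
                (α ^ (((0:ℤ) - (s:ℤ)).natAbs) - α * α ^ (((1:ℤ) - (s:ℤ)).natAbs)) * y (s:ℤ) := by
              rw [Finset.mul_sum, ← Finset.sum_sub_distrib]
              exact Finset.sum_congr rfl fun s _ => by ring
          _ = (1 - α^2) * y 0 := by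
              rw [Finset.sum_eq_single 0]
              · norm_num [sq]
              · intro s hs hsne
                obtain ⟨t, rfl⟩ := Nat.exists_eq_succ_of_ne_zero hsne
                have h2 : ((0:ℤ) - ((t+1:ℕ):ℤ)).natAbs = t + 1 := by omega
                have h3 : ((1:ℤ) - ((t+1:ℕ):ℤ)).natAbs = t := by omega
                rw [h2, h3, pow_succ]
                ring
              · intro h; exact absurd (Finset.mem_range.2 (by omega)) h
      · rcases eq_or_ne r ((n:ℤ) - 1) with hrn | hrn
        · subst hrn
          have e0 := H ((n:ℤ)-1) (by omega) (by omega)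
          have e1 := H ((n:ℤ)-2) (by omega) (by omega)
          have hym : y ((n:ℤ)-1+1) = 0 := hy0 _ (Or.inr (by omega))
          have htcn : tc ((n:ℤ)-1) = 1 := by simp [htc]
          rw [htcn, hym, show (n:ℤ)-1-1 = (n:ℤ)-2 from by ring]
          calc lam * (1 * y ((n:ℤ)-1) - α * y ((n:ℤ)-2) - α * 0)
              = (∑ s ∈ Finset.range n, α ^ ((((n:ℤ)-1) - (s:ℤ)).natAbs) * y (s:ℤ))
                - α * (∑ s ∈ Finset.range n, α ^ ((((n:ℤ)-2) - (s:ℤ)).natAbs) * y (s:ℤ)) := by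
                rw [e0, e1]; ring
            _ = ∑ s ∈ Finset.range n,
                  (α ^ ((((n:ℤ)-1) - (s:ℤ)).natAbs)
                    - α * α ^ ((((n:ℤ)-2) - (s:ℤ)).natAbs)) * y (s:ℤ) := by
                rw [Finset.mul_sum, ← Finset.sum_sub_distrib]
                exact Finset.sum_congr rfl fun s _ => by ring
            _ = (1 - α^2) * y ((n:ℤ)-1) := by
                rw [Finset.sum_eq_single (n-1)]
                · have h2 : (((n:ℤ)-1) - ((n-1:ℕ):ℤ)).natAbs = 0 := by omega
                  have h3 : (((n:ℤ)-2) - ((n-1:ℕ):ℤ)).natAbs = 1 := by omega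
                  have h4 : ((n-1:ℕ):ℤ) = (n:ℤ)-1 := by omega
                  rw [h2, h3, h4]; ring
                · intro s hs hsne
                  have hs' : s < n := Finset.mem_range.1 hs
                  obtain ⟨k, hk2, hk3⟩ : ∃ k, (((n:ℤ)-1) - (s:ℤ)).natAbs = k+1 ∧
                      (((n:ℤ)-2) - (s:ℤ)).natAbs = k :=
                    ⟨(((n:ℤ)-2) - (s:ℤ)).natAbs, by omega, rfl⟩
                  rw [hk2, hk3, pow_succ]; ring
                · intro h; exact absurd (Finset.mem_range.2 (by omega)) h
        · have e0 := H r h0 h1n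
          have em := H (r-1) (by omega) (by omega)
          have ep := H (r+1) (by omega) (by omega)
          have htci : tc r = 1 + α^2 := by
            simp only [htc]
            rw [if_neg (by push_neg; exact ⟨hr0, hrn⟩)]
          rw [htci]
          calc lam * ((1+α^2) * y r - α * y (r-1) - α * y (r+1))
              = (1+α^2) * (∑ s ∈ Finset.range n, α ^ ((r - (s:ℤ)).natAbs) * y (s:ℤ))
                - α * (∑ s ∈ Finset.range n, α ^ (((r-1) - (s:ℤ)).natAbs) * y (s:ℤ))
                - α * (∑ s ∈ Finset.range n, α ^ (((r+1) - (s:ℤ)).natAbs) * y (s:ℤ)) := by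
                rw [e0, em, ep]; ring
            _ = ∑ s ∈ Finset.range n,
                  ((1+α^2) * α ^ ((r - (s:ℤ)).natAbs) - α * α ^ (((r-1) - (s:ℤ)).natAbs)
                    - α * α ^ (((r+1) - (s:ℤ)).natAbs)) * y (s:ℤ) := by
                rw [Finset.mul_sum, Finset.mul_sum, Finset.mul_sum,
                  ← Finset.sum_sub_distrib, ← Finset.sum_sub_distrib]
                exact Finset.sum_congr rfl fun s _ => by ring
            _ = (1 - α^2) * y r := by
                rw [Finset.sum_eq_single r.toNat]
                · have h2 : ((r - (r.toNat:ℤ)).natAbs) = 0 := by omega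
                  have h3 : (((r-1) - (r.toNat:ℤ)).natAbs) = 1 := by omega
                  have h4 : (((r+1) - (r.toNat:ℤ)).natAbs) = 1 := by omega
                  have h5 : ((r.toNat:ℤ)) = r := by omega
                  rw [h2, h3, h4, h5]; ring
                · intro s hs hsne
                  rcases lt_or_gt_of_ne (show (s:ℤ) ≠ r from by omega) with hlt | hgt
                  · obtain ⟨k, hk1, hk2, hk3⟩ : ∃ k, ((r - (s:ℤ)).natAbs) = k+1 ∧
                        (((r-1) - (s:ℤ)).natAbs) = k ∧ (((r+1) - (s:ℤ)).natAbs) = k+2 :=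
                      ⟨((r-1) - (s:ℤ)).natAbs, by omega, rfl, by omega⟩
                    rw [hk1, hk2, hk3, pow_succ, pow_succ, pow_succ]; ring
                  · obtain ⟨k, hk1, hk2, hk3⟩ : ∃ k, ((r - (s:ℤ)).natAbs) = k+1 ∧
                        (((r+1) - (s:ℤ)).natAbs) = k ∧ (((r-1) - (s:ℤ)).natAbs) = k+2 :=
                      ⟨((r+1) - (s:ℤ)).natAbs, by omega, rfl, by omega⟩
                    rw [hk1, hk2, hk3, pow_succ, pow_succ, pow_succ]; ring
                · intro hmem; exact absurd (Finset.mem_range.2 (by omega)) hmem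
    rw [hν, div_mul_eq_mul_div, eq_div_iff hlamne]
    linarith [key]
  have hc1 : ((n-1:ℕ):ℝ) = (n:ℝ) - 1 := by
    rw [Nat.cast_sub (by omega)]; norm_num
  set S := ∑ r ∈ Finset.range n, (y (r:ℤ))^2 with hS
  have hSpos : 0 < S := by
    obtain ⟨i, hi⟩ := Function.ne_iff.1 hv
    have h1 : (y ((i:ℕ):ℤ))^2 ≤ S := by
      rw [hS]
      apply Finset.single_le_sum (f := fun r : ℕ => (y (r:ℤ))^2)
      · intro j _; exact sq_nonneg _
      · exact Finset.mem_range.2 i.2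
    have h2 : (0:ℝ) < (y ((i:ℕ):ℤ))^2 := by
      rw [hyv i]
      exact lt_of_le_of_ne (sq_nonneg _) (Ne.symm (pow_ne_zero 2 hi))
    linarith
  have hn' : n - 1 + 1 = n := by omega
  set E := ∑ r ∈ Finset.range (n-1), y (r:ℤ) * y ((r:ℤ)+1) with hE
  have hC1 : ∑ r ∈ Finset.range n, y ((r:ℤ)-1) * y (r:ℤ) = E := by
    conv_lhs => rw [← hn']
    rw [Finset.sum_range_succ']
    have h1 : ∀ r ∈ Finset.range (n-1),
        y (((r+1:ℕ):ℤ)-1) * y ((r+1:ℕ):ℤ) = y (r:ℤ) * y ((r:ℤ)+1) := by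
      intro r _
      have e1 : ((r+1:ℕ):ℤ) - 1 = (r:ℤ) := by push_cast; ring
      have e2 : ((r+1:ℕ):ℤ) = (r:ℤ)+1 := by push_cast; ring
      rw [e1, e2]
    rw [Finset.sum_congr rfl h1]
    have h2 : y (((0:ℕ):ℤ)-1) * y ((0:ℕ):ℤ) = 0 := by
      rw [hy0 (((0:ℕ):ℤ)-1) (Or.inl (by omega))]; ring
    rw [h2, add_zero, hE]
  have hC2 : ∑ r ∈ Finset.range n, y ((r:ℤ)+1) * y (r:ℤ) = E := by
    conv_lhs => rw [← hn']
    rw [Finset.sum_range_succ]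
    have hz : y (((n-1:ℕ):ℤ)+1) = 0 := by
      apply hy0; right; omega
    rw [hz, zero_mul, add_zero, hE]
    exact Finset.sum_congr rfl fun r _ => by ring
  have hQ : (∑ r ∈ Finset.range n, tc (r:ℤ) * (y (r:ℤ))^2) - 2*α*E = ν * S := by
    calc (∑ r ∈ Finset.range n, tc (r:ℤ) * (y (r:ℤ))^2) - 2*α*E
        = (∑ r ∈ Finset.range n, tc (r:ℤ) * (y (r:ℤ))^2)
          - α * (∑ r ∈ Finset.range n, y ((r:ℤ)-1) * y (r:ℤ))
          - α * (∑ r ∈ Finset.range n, y ((r:ℤ)+1) * y (r:ℤ)) := by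
          rw [hC1, hC2]; ring
      _ = ∑ r ∈ Finset.range n,
            (tc (r:ℤ) * y (r:ℤ) - α * y ((r:ℤ)-1) - α * y ((r:ℤ)+1)) * y (r:ℤ) := by
          rw [Finset.mul_sum, Finset.mul_sum,
            ← Finset.sum_sub_distrib, ← Finset.sum_sub_distrib]
          exact Finset.sum_congr rfl fun r _ => by ring
      _ = ν * S := by
          rw [hS, Finset.mul_sum]
          refine Finset.sum_congr rfl fun r hr => ?_
          rw [hT (r:ℤ) (Int.natCast_nonneg r) (by exact_mod_cast Finset.mem_range.1 hr)]
          ring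
  have hEle : 2*E ≤ (∑ r ∈ Finset.range (n-1), (w (r+1)/w r) * (y (r:ℤ))^2)
      + (∑ r ∈ Finset.range (n-1), (w r/w (r+1)) * (y ((r:ℤ)+1))^2) := by
    rw [hE, Finset.mul_sum, ← Finset.sum_add_distrib]
    apply Finset.sum_le_sum
    intro r hr
    have hr' : r < n - 1 := Finset.mem_range.1 hr
    have hw1 : 0 < w r := hwpos r (by rw [← hc1]; exact_mod_cast hr'.le)
    have hw2 : 0 < w (r+1) := hwpos (r+1) (by rw [← hc1]; exact_mod_cast hr')
    exact kms_amgm (w r) (w (r+1)) (y (r:ℤ)) (y ((r:ℤ)+1)) hw1 hw2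
  have hF1 : ∑ r ∈ Finset.range n, (if r = n-1 then 0 else (w (r+1)/w r) * (y (r:ℤ))^2)
      = ∑ r ∈ Finset.range (n-1), (w (r+1)/w r) * (y (r:ℤ))^2 := by
    conv_lhs => rw [← hn']
    rw [Finset.sum_range_succ, if_pos (show n - 1 = n - 1 + 1 - 1 by omega), add_zero]
    refine Finset.sum_congr rfl fun r hr => ?_
    rw [if_neg (show ¬ r = n - 1 + 1 - 1 by have := Finset.mem_range.1 hr; omega)]
  have hF2 : ∑ r ∈ Finset.range n, (if r = 0 then 0 else (w (r-1)/w r) * (y (r:ℤ))^2)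
      = ∑ r ∈ Finset.range (n-1), (w r/w (r+1)) * (y ((r:ℤ)+1))^2 := by
    conv_lhs => rw [← hn']
    rw [Finset.sum_range_succ', if_pos rfl, add_zero]
    refine Finset.sum_congr rfl fun r _ => ?_
    rw [if_neg (Nat.succ_ne_zero r)]
    have e1 : r + 1 - 1 = r := by omega
    have e2 : ((r+1:ℕ):ℤ) = (r:ℤ)+1 := by push_cast; ring
    rw [e1, e2]
  have hB : ∀ r ∈ Finset.range n,
      d * (y (r:ℤ))^2 ≤ tc (r:ℤ) * (y (r:ℤ))^2
        - α * (if r = n-1 then 0 else (w (r+1)/w r) * (y (r:ℤ))^2)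
        - α * (if r = 0 then 0 else (w (r-1)/w r) * (y (r:ℤ))^2) := by
    intro r hr
    have hrn : r < n := Finset.mem_range.1 hr
    rcases eq_or_ne r 0 with rfl | hr0
    · rw [if_neg (show ¬ (0:ℕ) = n-1 by omega), if_pos rfl, mul_zero, sub_zero]
      have htc0 : tc ((0:ℕ):ℤ) = 1 := by
        simp only [htc]; rw [if_pos (Or.inl (by norm_num))]
      rw [htc0]
      have hw0 : 0 < w 0 := hwpos 0 (by rw [← hc1]; exact_mod_cast Nat.zero_le (n-1))
      have hw1p : 0 < w 1 := hwpos 1 (by rw [← hc1]; exact_mod_cast (show 1 ≤ n-1 by omega))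
      have hrec0 := hrec 0
      rw [hbdry] at hrec0
      have e1 : Real.cos (θ * ((0:ℝ) + 1 - c)) = w 1 := by
        simp only [hw]; norm_num
      have e2 : Real.cos (θ * ((0:ℝ) - c)) = w 0 := by
        simp only [hw]; norm_num
      rw [e1, e2] at hrec0
      have hww : w (0+1) = w 1 := by norm_num
      rw [hww]
      have hcoef : d ≤ 1 - α * (w 1 / w 0) := by
        rw [← sub_nonneg]
        have hw1eq : w 1 = 2 * Real.cos θ * w 0 - α := by linarith [hrec0]
        have hkey : 1 - α * (w 1 / w 0) - d = α^2 * (1 - w 0) / w 0 := by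
          rw [hw1eq, hd]
          field_simp
          ring
        rw [hkey]
        exact div_nonneg (mul_nonneg (sq_nonneg α) (sub_nonneg.2 (hwle1 0))) hw0.le
      clear_value d
      linarith [mul_nonneg (sub_nonneg.2 hcoef) (sq_nonneg (y ((0:ℕ):ℤ)))]
    · rcases eq_or_ne r (n-1) with rfl | hrn1
      · rw [if_pos rfl, mul_zero, sub_zero, if_neg hr0]
        have htcn : tc ((n-1:ℕ):ℤ) = 1 := by
          simp only [htc]; rw [if_pos (Or.inr (by omega))]
        rw [htcn]
        have hwn1 : 0 < w (n-1) := hwpos (n-1) (le_of_eq hc1)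
        have hwn2 : 0 < w (n-1-1) := hwpos (n-1-1)
          (by rw [← hc1]; exact_mod_cast (by omega : n-1-1 ≤ n-1))
        have hrecn := hrec ((n:ℝ) - 1)
        have e0 : θ * ((n:ℝ) - 1 + 1 - c) = θ * ((n:ℝ) - c) := by ring
        rw [e0, hbdry2] at hrecn
        have e1 : Real.cos (θ * ((n:ℝ) - 1 - 1 - c)) = w (n-1-1) := by
          simp only [hw]; congr 2
          rw [Nat.cast_sub (by omega), Nat.cast_sub (by omega)]
          norm_num
        have e2 : Real.cos (θ * ((n:ℝ) - 1 - c)) = w (n-1) := by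
          simp only [hw]; congr 2
          rw [hc1]
        rw [e1, e2] at hrecn
        have hcoef : d ≤ 1 - α * (w (n-1-1) / w (n-1)) := by
          rw [← sub_nonneg]
          have hweq : w (n-1-1) = 2 * Real.cos θ * w (n-1) - α := by linarith [hrecn]
          have hkey : 1 - α * (w (n-1-1) / w (n-1)) - d = α^2 * (1 - w (n-1)) / w (n-1) := by
            rw [hweq, hd]
            field_simp
            ring
          rw [hkey]
          exact div_nonneg (mul_nonneg (sq_nonneg α) (sub_nonneg.2 (hwle1 (n-1)))) hwn1.le
        clear_value d
        linarith [mul_nonneg (sub_nonneg.2 hcoef) (sq_nonneg (y ((n-1:ℕ):ℤ)))]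
      · rw [if_neg hrn1, if_neg hr0]
        have h1r : 1 ≤ r := by omega
        have htci : tc (r:ℤ) = 1 + α^2 := by
          simp only [htc]; rw [if_neg (by push_neg; exact ⟨by omega, by omega⟩)]
        rw [htci]
        have hwr : 0 < w r := hwpos r (by rw [← hc1]; exact_mod_cast (by omega : r ≤ n-1))
        have hwrp : 0 < w (r+1) := hwpos (r+1)
          (by rw [← hc1]; exact_mod_cast (by omega : r+1 ≤ n-1))
        have hwrm : 0 < w (r-1) := hwpos (r-1)
          (by rw [← hc1]; exact_mod_cast (by omega : r-1 ≤ n-1))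
        have hrecr := hrec ((r:ℕ):ℝ)
        have e1 : Real.cos (θ * ((r:ℝ) - 1 - c)) = w (r-1) := by
          simp only [hw]; congr 2
          rw [Nat.cast_sub h1r]
          norm_num
        have e2 : Real.cos (θ * ((r:ℝ) + 1 - c)) = w (r+1) := by
          simp only [hw]; congr 2
          push_cast; ring
        have e3 : Real.cos (θ * ((r:ℝ) - c)) = w r := rfl
        rw [e1, e2, e3] at hrecr
        have hcoef : d ≤ 1 + α^2 - α * (w (r+1) / w r) - α * (w (r-1) / w r) := by
          rw [← sub_nonneg]
          have hweq : w (r-1) = 2 * Real.cos θ * w r - w (r+1) := by linarith [hrecr]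
          have hkey : 1 + α^2 - α * (w (r+1)/w r) - α * (w (r-1)/w r) - d = 0 := by
            rw [hweq, hd]
            field_simp
            ring
          linarith [hkey]
        clear_value d
        linarith [mul_nonneg (sub_nonneg.2 hcoef) (sq_nonneg (y (r:ℤ)))]
  have main : d * S ≤ ν * S := by
    rw [← hQ]
    have h1 : α * (2*E) ≤ α * ((∑ r ∈ Finset.range (n-1), (w (r+1)/w r) * (y (r:ℤ))^2)
        + (∑ r ∈ Finset.range (n-1), (w r/w (r+1)) * (y ((r:ℤ)+1))^2)) :=
      mul_le_mul_of_nonneg_left hEle hα0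
    rw [← hF1, ← hF2] at h1
    have h2 : d * S ≤ (∑ r ∈ Finset.range n, tc (r:ℤ) * (y (r:ℤ))^2)
        - α * (∑ r ∈ Finset.range n, (if r = n-1 then 0 else (w (r+1)/w r) * (y (r:ℤ))^2))
        - α * (∑ r ∈ Finset.range n, (if r = 0 then 0 else (w (r-1)/w r) * (y (r:ℤ))^2)) := by
      calc d * S = ∑ r ∈ Finset.range n, d * (y (r:ℤ))^2 := by rw [hS, Finset.mul_sum]
        _ ≤ ∑ r ∈ Finset.range n, (tc (r:ℤ) * (y (r:ℤ))^2
              - α * (if r = n-1 then 0 else (w (r+1)/w r) * (y (r:ℤ))^2)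
              - α * (if r = 0 then 0 else (w (r-1)/w r) * (y (r:ℤ))^2)) :=
            Finset.sum_le_sum hB
        _ = _ := by
            rw [Finset.sum_sub_distrib, Finset.sum_sub_distrib,
              Finset.mul_sum, Finset.mul_sum]
    clear_value S E ν d
    linarith
  have hdν : d ≤ ν := le_of_mul_le_mul_right main hSpos
  rw [hν] at hdν
  rw [le_div_iff₀ hdpos]
  have h3 := (le_div_iff₀ hlam0).1 hdν
  linarith

/-- Bounds on the largest eigenvalue of the Kac–Murdock–Szegő matrix
`K_n(α) = (α^{|r−s|})_{r,s}` for `n ≥ 2` and `0 ≤ α < 1`: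
`1 ≤ λ₁ ≤ (1 − α²)/(1 − 2α cos((2/(n+1)) arccos α) + α²)`. -/
theorem kms_largest_eigenvalue_bounds (n : ℕ) (hn : 2 ≤ n) (α : ℝ)
    (hα0 : 0 ≤ α) (hα1 : α < 1) (lam : ℝ)
    (hlam : IsGreatest {μ : ℝ | ∃ v : Fin n → ℝ, v ≠ 0 ∧
      (Matrix.of fun r s : Fin n => α ^ ((r : ℤ) - (s : ℤ)).natAbs).mulVec v = μ • v} lam) :
    1 ≤ lam ∧
      lam ≤ (1 - α ^ 2) /
        (1 - 2 * α * Real.cos ((2 / ((n : ℝ) + 1)) * Real.arccos α) + α ^ 2) := by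
  have h1 : 1 ≤ lam := by
    set K : Matrix (Fin n) (Fin n) ℝ :=
      Matrix.of fun r s : Fin n => α ^ ((r : ℤ) - (s : ℤ)).natAbs with hK
    have hKh : K.IsHermitian := by
      ext i j
      simp only [Matrix.conjTranspose_apply, hK, Matrix.of_apply, star_trivial]
      congr 1
      omega
    have htr : ∑ i, hKh.eigenvalues i = (n : ℝ) := by
      have h2 : K.trace = Matrix.trace
          (Matrix.diagonal (RCLike.ofReal ∘ hKh.eigenvalues) : Matrix (Fin n) (Fin n) ℝ) := by
        conv_lhs => rw [hKh.spectral_theorem]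
        rw [Unitary.conjStarAlgAut_apply, Matrix.trace_mul_cycle]
        rw [Unitary.coe_star_mul_self, Matrix.one_mul]
      have h3 : K.trace = (n : ℝ) := by
        simp [Matrix.trace, Matrix.diag, hK]
      rw [h3] at h2
      rw [Matrix.trace_diagonal] at h2
      simpa using h2.symm
    have hex : ∃ i, 1 ≤ hKh.eigenvalues i := by
      have hne : (Finset.univ : Finset (Fin n)).Nonempty := by
        simp [Finset.univ_nonempty_iff]
        exact Fin.pos_iff_nonempty.mp (by omega)
      have hsum : ∑ _i : Fin n, (1 : ℝ) ≤ ∑ i, hKh.eigenvalues i := by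
        rw [htr]; simp
      obtain ⟨i, _, hi⟩ := Finset.exists_le_of_sum_le hne hsum
      exact ⟨i, hi⟩
    obtain ⟨i, hi⟩ := hex
    refine le_trans hi (hlam.2 ?_)
    exact ⟨⇑(hKh.eigenvectorBasis i), fun h => hKh.eigenvectorBasis.orthonormal.ne_zero i
        (by simpa using congrArg (WithLp.toLp 2) h),
      hKh.mulVec_eigenvectorBasis i⟩
  refine ⟨h1, ?_⟩
  obtain ⟨v, hv0, hveig⟩ := hlam.1
  exact kms_upper n hn α hα0 hα1 lam h1 v hv0 hveig
end

section
/- Let n ≥ 2 and 0 ≤ α < 1. Then the numerical radius of J_n(α) equals the numerical radius of its real part: w(J_n(α)) = w( (J_n(α) + J_n(α)^*)/2 ). -/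
open Finset

/-- Quadratic form formula. -/
lemma inner_toEuclideanLin {n : ℕ} (A : Matrix (Fin n) (Fin n) ℂ)
    (x : EuclideanSpace ℂ (Fin n)) :
    (inner ℂ x (Matrix.toEuclideanLin A x) : ℂ)
      = ∑ i, ∑ j, (starRingEnd ℂ) (x i) * (A i j * x j) := by
  rw [Matrix.toEuclideanLin_apply]
  simp [PiLp.inner_apply, Matrix.mulVec, dotProduct, Finset.mul_sum]
  refine Finset.sum_congr rfl fun i _ => ?_
  rw [Finset.sum_mul]
  refine Finset.sum_congr rfl fun j _ => ?_
  ring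

lemma coord_le_norm {n : ℕ} (x : EuclideanSpace ℂ (Fin n)) (i : Fin n) :
    ‖x i‖ ≤ ‖x‖ := by
  rw [EuclideanSpace.norm_eq]
  have h1 : ‖x i‖ = Real.sqrt (‖x i‖ ^ 2) := by
    rw [Real.sqrt_sq (norm_nonneg _)]
  rw [h1]
  apply Real.sqrt_le_sqrt
  exact Finset.single_le_sum (f := fun j => ‖x j‖ ^ 2)
    (fun j _ => sq_nonneg _) (Finset.mem_univ i)

lemma numSet_bddAbove {n : ℕ} (A : Matrix (Fin n) (Fin n) ℂ) :
    BddAbove { r : ℝ | ∃ x : EuclideanSpace ℂ (Fin n), ‖x‖ = 1 ∧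
      r = ‖(inner ℂ x (Matrix.toEuclideanLin A x) : ℂ)‖ } := by
  refine ⟨∑ i, ∑ j, ‖A i j‖, ?_⟩
  rintro r ⟨x, hx, rfl⟩
  rw [inner_toEuclideanLin]
  refine (norm_sum_le _ _).trans (Finset.sum_le_sum fun i _ => ?_)
  refine (norm_sum_le _ _).trans (Finset.sum_le_sum fun j _ => ?_)
  have hxi : ‖x i‖ ≤ 1 := hx ▸ coord_le_norm x i
  have hxj : ‖x j‖ ≤ 1 := hx ▸ coord_le_norm x j
  calc ‖(starRingEnd ℂ) (x i) * (A i j * x j)‖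
      = ‖x i‖ * (‖A i j‖ * ‖x j‖) := by
        rw [norm_mul, norm_mul, RingHomIsometric.norm_map]
    _ ≤ 1 * (‖A i j‖ * 1) := by
        apply mul_le_mul hxi (mul_le_mul le_rfl hxj (norm_nonneg _) (norm_nonneg _))
          (by positivity) zero_le_one
    _ = ‖A i j‖ := by ring

lemma inner_conjTranspose {n : ℕ} (A : Matrix (Fin n) (Fin n) ℂ)
    (x : EuclideanSpace ℂ (Fin n)) :
    (inner ℂ x (Matrix.toEuclideanLin A.conjTranspose x) : ℂ)
      = (starRingEnd ℂ) (inner ℂ x (Matrix.toEuclideanLin A x) : ℂ) := by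
  rw [inner_toEuclideanLin, inner_toEuclideanLin, map_sum, Finset.sum_comm]
  refine Finset.sum_congr rfl fun i _ => ?_
  rw [map_sum]
  refine Finset.sum_congr rfl fun j _ => ?_
  simp only [Matrix.conjTranspose_apply, map_mul, RingHomCompTriple.comp_apply,
    RingHom.id_apply, Complex.conj_conj, ← starRingEnd_apply]
  ring

/-- The quadratic form of the real part is the real part of the quadratic form. -/
lemma inner_re_part {n : ℕ} (A : Matrix (Fin n) (Fin n) ℂ)
    (x : EuclideanSpace ℂ (Fin n)) :
    (inner ℂ x (Matrix.toEuclideanLin ((1 / 2 : ℂ) • (A + A.conjTranspose)) x) : ℂ)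
      = (((inner ℂ x (Matrix.toEuclideanLin A x) : ℂ)).re : ℂ) := by
  set z : ℂ := inner ℂ x (Matrix.toEuclideanLin A x)
  have h : (inner ℂ x (Matrix.toEuclideanLin ((1 / 2 : ℂ) • (A + A.conjTranspose)) x) : ℂ)
      = (1 / 2 : ℂ) * (z + (starRingEnd ℂ) z) := by
    rw [map_smul, map_add, LinearMap.smul_apply, LinearMap.add_apply,
      inner_smul_right, inner_add_right, inner_conjTranspose]
  rw [h, Complex.add_conj]
  push_cast
  ring

/-- The numerical radius of an `n × n` complex matrix `A`:
`w(A) = sup { |⟨Ax, x⟩| : ‖x‖ = 1 }` (standard Hermitian inner product on `ℂⁿ`). -/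
noncomputable def numRadius {n : ℕ} (A : Matrix (Fin n) (Fin n) ℂ) : ℝ :=
  sSup { r : ℝ | ∃ x : EuclideanSpace ℂ (Fin n), ‖x‖ = 1 ∧
    r = ‖(inner ℂ x (Matrix.toEuclideanLin A x) : ℂ)‖ }

/-- The strictly upper triangular KMS-type matrix `J_n(α)` with `(r,s)` entry
`α^{s−r}` for `s > r` and `0` otherwise. -/
noncomputable def Jmat (n : ℕ) (α : ℝ) : Matrix (Fin n) (Fin n) ℂ :=
  Matrix.of fun r s : Fin n => if r < s then ((α : ℂ) ^ ((s : ℕ) - (r : ℕ))) else 0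

lemma numSet_nonempty {n : ℕ} (hn : 0 < n) (A : Matrix (Fin n) (Fin n) ℂ) :
    { r : ℝ | ∃ x : EuclideanSpace ℂ (Fin n), ‖x‖ = 1 ∧
      r = ‖(inner ℂ x (Matrix.toEuclideanLin A x) : ℂ)‖ }.Nonempty := by
  refine ⟨_, ⟨EuclideanSpace.single (⟨0, hn⟩ : Fin n) (1 : ℂ), ?_, rfl⟩⟩
  rw [EuclideanSpace.norm_single, norm_one]

/-- For `n ≥ 2` and `0 ≤ α < 1`, the numerical radius of `J_n(α)` coincides with
the numerical radius of its real part `(J_n(α) + J_n(α)^*)/2`. -/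
theorem numRadius_Jmat_eq_numRadius_re (n : ℕ) (hn : 2 ≤ n) (α : ℝ)
    (hα0 : 0 ≤ α) (hα1 : α < 1) :
    numRadius (Jmat n α)
      = numRadius ((1 / 2 : ℂ) • (Jmat n α + (Jmat n α).conjTranspose)) := by
  have hn0 : 0 < n := by omega
  set A := Jmat n α with hA
  set B := (1 / 2 : ℂ) • (A + A.conjTranspose) with hB
  -- real entries of A
  set a : Fin n → Fin n → ℝ := fun i j => if i < j then α ^ ((j : ℕ) - (i : ℕ)) else 0 with ha
  have haA : ∀ i j, A i j = ((a i j : ℝ) : ℂ) := by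
    intro i j
    simp only [hA, Jmat, Matrix.of_apply, ha]
    split <;> push_cast <;> ring
  have haNN : ∀ i j, 0 ≤ a i j := by
    intro i j
    simp only [ha]
    split
    · positivity
    · exact le_rfl
  unfold numRadius
  apply le_antisymm
  · -- w(A) ≤ w(B)
    apply csSup_le (numSet_nonempty hn0 A)
    rintro r ⟨x, hx, rfl⟩
    -- the comparison vector with absolute-value entries
    set y : EuclideanSpace ℂ (Fin n) := WithLp.toLp 2 (fun i => ((‖x i‖ : ℝ) : ℂ)) with hy
    have hynorm : ‖y‖ = 1 := by
      rw [← hx, EuclideanSpace.norm_eq, EuclideanSpace.norm_eq]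
      congr 1
      refine Finset.sum_congr rfl fun i _ => ?_
      simp [hy]
    set S : ℝ := ∑ i, ∑ j, ‖x i‖ * (a i j * ‖x j‖) with hS
    have hyA : (inner ℂ y (Matrix.toEuclideanLin A y) : ℂ) = (S : ℂ) := by
      rw [inner_toEuclideanLin, hS]
      push_cast
      refine Finset.sum_congr rfl fun i _ => Finset.sum_congr rfl fun j _ => ?_
      rw [haA, hy]
      simp [Complex.conj_ofReal]
    have hSnn : 0 ≤ S := by
      refine Finset.sum_nonneg fun i _ => Finset.sum_nonneg fun j _ => ?_
      have := haNN i j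
      positivity
    have hyB : ‖(inner ℂ y (Matrix.toEuclideanLin B y) : ℂ)‖ = S := by
      rw [hB, inner_re_part, hyA]
      simp [Complex.norm_real, abs_of_nonneg hSnn]
    have hxA : ‖(inner ℂ x (Matrix.toEuclideanLin A x) : ℂ)‖ ≤ S := by
      rw [inner_toEuclideanLin, hS]
      refine (norm_sum_le _ _).trans (Finset.sum_le_sum fun i _ => ?_)
      refine (norm_sum_le _ _).trans (Finset.sum_le_sum fun j _ => ?_)
      rw [haA, norm_mul, norm_mul, RingHomIsometric.norm_map, Complex.norm_real,
        Real.norm_of_nonneg (haNN i j)]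
    exact le_csSup_of_le (numSet_bddAbove B) ⟨y, hynorm, rfl⟩ (hyB ▸ hxA)
  · -- w(B) ≤ w(A)
    apply csSup_le (numSet_nonempty hn0 B)
    rintro r ⟨x, hx, rfl⟩
    refine le_csSup_of_le (numSet_bddAbove A) ⟨x, hx, rfl⟩ ?_
    rw [hB, inner_re_part]
    rw [Complex.norm_real]
    exact (Complex.abs_re_le_norm _)
end

section
/- For 0 ≤ α < 1, the numerical radius of the 3×3 matrix J_3(α) = [[0, α, α²],[0, 0, α],[0, 0, 0]] equals α(√(α²+8) − 3α) / (4 + 2α² − 2α√(α²+8)). -/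
private lemma key_ineq (α s a b c : ℝ) (hα : 0 ≤ α) (hs2 : s ^ 2 = α ^ 2 + 8)
    (hsα : α + 1 ≤ s) (hn : a ^ 2 + b ^ 2 + c ^ 2 = 1) :
    α * (a * b) + α * (b * c) + α ^ 2 * (a * c) ≤ α * (α + s) / 4 := by
  have key : 8 * (s - α) * (α * (α + s) / 4
      - (α * (a*b) + α * (b*c) + α^2 * (a*c)))
      = α * (3*α+s) * (s-α) * (a-c)^2 + α * ((α-s)*(a+c)+4*b)^2 := by
    linear_combination (2*α*b^2)*hs2 - 2*(s-α)*(α*(α+s))*hn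
  nlinarith [key, mul_nonneg (mul_nonneg (mul_nonneg hα (show (0:ℝ) ≤ 3*α+s by nlinarith))
      (show (0:ℝ) ≤ s - α by nlinarith)) (sq_nonneg (a-c)),
    mul_nonneg hα (sq_nonneg ((α-s)*(a+c)+4*b))]

private lemma inner_J3 (α : ℝ) (x : EuclideanSpace ℂ (Fin 3)) :
    (inner ℂ x (Matrix.toEuclideanLin !![0, (α : ℂ), ((α : ℂ)) ^ 2; 0, 0, (α : ℂ); 0, 0, 0] x) : ℂ)
      = (starRingEnd ℂ) (x 0) * ((α:ℂ) * x 1 + (α:ℂ)^2 * x 2)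
        + (starRingEnd ℂ) (x 1) * ((α:ℂ) * x 2) := by
  simp [Matrix.toEuclideanLin_apply, PiLp.inner_apply, RCLike.inner_apply, Fin.sum_univ_three,
    Matrix.mulVec, dotProduct]
  ring

/-- For `0 ≤ α < 1`, the numerical radius of
`J_3(α) = [[0, α, α²],[0, 0, α],[0, 0, 0]]` equals
`α(√(α²+8) − 3α)/(4 + 2α² − 2α√(α²+8))`. -/
theorem numRadius_J3 (α : ℝ) (hα0 : 0 ≤ α) (hα1 : α < 1) :
    numRadius !![0, (α : ℂ), ((α : ℂ)) ^ 2; 0, 0, (α : ℂ); 0, 0, 0]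
      = α * (Real.sqrt (α ^ 2 + 8) - 3 * α)
          / (4 + 2 * α ^ 2 - 2 * α * Real.sqrt (α ^ 2 + 8)) := by
  set s := Real.sqrt (α ^ 2 + 8) with hs_def
  have hs0 : 0 ≤ s := Real.sqrt_nonneg _
  have hs2 : s ^ 2 = α ^ 2 + 8 := Real.sq_sqrt (by positivity)
  have hsα : α + 1 ≤ s := by nlinarith
  set lam : ℝ := α * (α + s) / 4 with hlam_def
  have hlam0 : 0 ≤ lam := by positivity
  -- the RHS equals lam
  have hden : 0 < 4 + 2 * α ^ 2 - 2 * α * s := by nlinarith [mul_nonneg hα0 hs0]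
  have hRHS : α * (s - 3 * α) / (4 + 2 * α ^ 2 - 2 * α * s) = lam := by
    rw [div_eq_iff hden.ne']
    linear_combination (α^2/2) * hs2
  rw [hRHS]
  -- it suffices to prove the sSup equals lam
  apply IsGreatest.csSup_eq
  constructor
  · -- membership: exhibit a unit vector achieving lam
    rcases eq_or_lt_of_le hα0 with h0 | h0
    · -- α = 0 : lam = 0, take a basis vector
      refine ⟨EuclideanSpace.single 0 1, ?_, ?_⟩
      · simp [EuclideanSpace.norm_single]
      · rw [inner_J3]
        simp [← h0, hlam_def]
    · -- α > 0 : the Perron eigenvector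
      have hchar : 2 * lam ^ 2 = α ^ 2 * lam + α ^ 2 := by
        rw [hlam_def]; linear_combination (α^2/8) * hs2
      set N : ℝ := Real.sqrt (2 * lam ^ 2 + α ^ 2) with hN_def
      have hNsq : N ^ 2 = 2 * lam ^ 2 + α ^ 2 := Real.sq_sqrt (by positivity)
      have hN0 : 0 < N := Real.sqrt_pos.2 (by positivity)
      refine ⟨(WithLp.equiv 2 (Fin 3 → ℂ)).symm
        ![((lam / N : ℝ) : ℂ), ((α / N : ℝ) : ℂ), ((lam / N : ℝ) : ℂ)], ?_, ?_⟩
      · rw [EuclideanSpace.norm_eq]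
        simp only [WithLp.equiv_symm_apply, PiLp.toLp_apply, Fin.sum_univ_three]
        rw [show ((1:ℝ)) = Real.sqrt 1 from (Real.sqrt_one).symm]
        congr 1
        simp only [Matrix.cons_val_zero, Matrix.cons_val_one, Matrix.head_cons,
          Matrix.cons_val_two, Matrix.tail_cons, Complex.norm_real, Real.norm_eq_abs,
          sq_abs]
        field_simp
        linear_combination -hNsq
      · rw [inner_J3]
        simp only [WithLp.equiv_symm_apply, PiLp.toLp_apply, Matrix.cons_val_zero, Matrix.cons_val_one,
          Matrix.head_cons, Matrix.cons_val_two, Matrix.tail_cons, Complex.conj_ofReal]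
        have hreal : lam/N * (α*(α/N) + α^2*(lam/N)) + (α/N)*(α*(lam/N)) = lam := by
          field_simp
          linear_combination lam*hNsq - hchar + (-α*s/2 - α^2/2)*hNsq + (α^2/8 - α^3*s/32 - α^4/32)*hs2
        have : ((lam / N : ℝ) : ℂ) * ((α:ℂ) * ((α / N : ℝ) : ℂ) + (α:ℂ)^2 * ((lam / N : ℝ) : ℂ))
            + ((α / N : ℝ) : ℂ) * ((α:ℂ) * ((lam / N : ℝ) : ℂ)) = ((lam : ℝ) : ℂ) := by
          exact_mod_cast congrArg Complex.ofReal hreal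
        rw [this, Complex.norm_real, Real.norm_eq_abs, abs_of_nonneg hlam0]
  · -- upper bound
    rintro r ⟨x, hx, rfl⟩
    rw [inner_J3]
    have hsum : ‖x 0‖ ^ 2 + ‖x 1‖ ^ 2 + ‖x 2‖ ^ 2 = 1 := by
      have h := EuclideanSpace.norm_eq x
      rw [hx, Fin.sum_univ_three] at h
      nlinarith [Real.sq_sqrt (show (0:ℝ) ≤ ‖x 0‖^2 + ‖x 1‖^2 + ‖x 2‖^2 by positivity), h.symm]
    set a := ‖x 0‖; set b := ‖x 1‖; set c := ‖x 2‖
    have hb : ‖(starRingEnd ℂ) (x 0) * ((α:ℂ) * x 1 + (α:ℂ)^2 * x 2)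
        + (starRingEnd ℂ) (x 1) * ((α:ℂ) * x 2)‖
        ≤ α * (a * b) + α * (b * c) + α ^ 2 * (a * c) := by
      calc _ ≤ ‖(starRingEnd ℂ) (x 0) * ((α:ℂ) * x 1 + (α:ℂ)^2 * x 2)‖
            + ‖(starRingEnd ℂ) (x 1) * ((α:ℂ) * x 2)‖ := norm_add_le _ _
        _ ≤ a * (α * b + α^2 * c) + b * (α * c) := by
            rw [norm_mul, norm_mul, RCLike.norm_conj, RCLike.norm_conj]
            gcongr
            calc ‖(α:ℂ) * x 1 + (α:ℂ)^2 * x 2‖ ≤ ‖(α:ℂ) * x 1‖ + ‖(α:ℂ)^2 * x 2‖ :=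
                  norm_add_le _ _
              _ ≤ α * b + α^2 * c := by
                  rw [norm_mul, norm_mul, norm_pow, Complex.norm_real, Real.norm_eq_abs,
                    abs_of_nonneg hα0]
              _ ≤ _ := le_refl _
            rw [norm_mul, Complex.norm_real, Real.norm_eq_abs, abs_of_nonneg hα0]
        _ = α * (a * b) + α * (b * c) + α ^ 2 * (a * c) := by ring
    exact hb.trans (key_ineq α s a b c hα0 hs2 hsα hsum)
end

section
/- Let n ≥ 4 be an integer and 0 ≤ α ≤ √(cos(2π/(n+1))). Let t₁^{(n)} be the smallest zero in (0, π) of q_{n,α}(t) = sin((n+1)t) − 2α·sin(nt) + α²·sin((n−1)t). Then w(J_n(α)) = α(cos t₁^{(n)} − α) / (1 − 2α·cos t₁^{(n)} + α²). -/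
open Finset Real Complex

namespace NumRadAux


lemma geom_trig (α t θ : ℝ) (m : ℕ) :
    (1 - 2*α*Real.cos t + α^2) * (∑ k ∈ Finset.range m, α^k * Real.sin (θ + k*t))
      = Real.sin θ - α * Real.sin (θ - t)
        - α^m * (Real.sin (θ + m*t) - α * Real.sin (θ + m*t - t)) := by
  induction m with
  | zero => simp
  | succ m ih =>
    rw [Finset.sum_range_succ, mul_add, ih]
    have h1 : θ + ((m:ℕ)+1 : ℕ)*t = (θ + (m:ℝ)*t) + t := by push_cast; ring
    have h2 : θ + ((m:ℕ)+1 : ℕ)*t - t = θ + (m:ℝ)*t := by push_cast; ring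
    rw [h2, h1, Real.sin_add (θ + (m:ℝ)*t) t, Real.sin_sub (θ + (m:ℝ)*t) t]
    ring

lemma key_eigen (α t φ : ℝ) (n : ℕ) (hkey : Real.sin (φ - t) = α * Real.sin φ)
    (hend : ((n:ℝ) - 1) * t + φ = Real.pi - φ)
    (i : ℕ) (hi : i < n) :
    (1 - 2*α*Real.cos t + α^2)
        * (∑ j ∈ Finset.range n, α^(Nat.dist i j) * Real.sin (j*t + φ))
      = (1 - α^2) * Real.sin (i*t + φ) := by
  have hsplit : ∑ j ∈ Finset.range n, α^(Nat.dist i j) * Real.sin (j*t + φ)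
      = (∑ j ∈ Finset.range (i+1), α^(Nat.dist i j) * Real.sin (j*t + φ))
        + ∑ j ∈ Finset.Ico (i+1) n, α^(Nat.dist i j) * Real.sin (j*t + φ) := by
    rw [Finset.range_eq_Ico, ← Finset.sum_Ico_consecutive _ (Nat.zero_le (i+1)) hi,
      ← Finset.range_eq_Ico]
  -- first sum
  have hA : (∑ j ∈ Finset.range (i+1), α^(Nat.dist i j) * Real.sin (j*t + φ))
      = ∑ k ∈ Finset.range (i+1), α^k * Real.sin ((i*t + φ) + k*(-t)) := by
    rw [← Finset.sum_range_reflect]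
    refine Finset.sum_congr rfl fun k hk => ?_
    have hk' : k ≤ i := Nat.lt_succ_iff.mp (Finset.mem_range.mp hk)
    have e1 : Nat.dist i (i + 1 - 1 - k) = k := by
      simp [Nat.dist_eq_sub_of_le_right (Nat.sub_le i k), Nat.sub_sub_self hk']
    have e2 : ((i + 1 - 1 - k : ℕ) : ℝ) * t + φ = (i*t + φ) + k*(-t) := by
      simp only [Nat.add_sub_cancel]
      rw [Nat.cast_sub hk']
      ring
    rw [e1, e2]
  -- second sum
  have hB : (∑ j ∈ Finset.Ico (i+1) n, α^(Nat.dist i j) * Real.sin (j*t + φ))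
      = α * ∑ k ∈ Finset.range (n - (i+1)), α^k * Real.sin (((i:ℝ)+1)*t + φ + k*t) := by
    rw [Finset.sum_Ico_eq_sum_range, Finset.mul_sum]
    refine Finset.sum_congr rfl fun k hk => ?_
    have e1 : Nat.dist i (i + 1 + k) = k + 1 := by
      rw [Nat.dist_eq_sub_of_le (by omega)]; omega
    have e2 : ((i + 1 + k : ℕ) : ℝ) * t + φ = ((i:ℝ)+1)*t + φ + k*t := by
      push_cast; ring
    rw [e1, e2, pow_succ]
    ring
  have hle : i + 1 ≤ n := hi
  have gA := geom_trig α (-t) ((i:ℝ)*t+φ) (i+1)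
  have gB := geom_trig α t (((i:ℝ)+1)*t+φ) (n-(i+1))
  rw [Real.cos_neg] at gA
  push_cast at gA
  rw [Nat.cast_sub hle] at gB
  push_cast at gB
  have a3 : (i:ℝ)*t+φ + ((i:ℝ)+1)*(-t) - -t = φ := by ring
  have a2 : (i:ℝ)*t+φ + ((i:ℝ)+1)*(-t) = φ - t := by ring
  have a1 : (i:ℝ)*t+φ - -t = ((i:ℝ)*t+φ) + t := by ring
  rw [a3, a2, a1, hkey] at gA
  have b2 : ((i:ℝ)+1)*t+φ + ((n:ℝ)-((i:ℝ)+1))*t = Real.pi - (φ - t) := by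
    have : ((i:ℝ)+1)*t+φ + ((n:ℝ)-((i:ℝ)+1))*t = (((n:ℝ)-1)*t + φ) + t := by ring
    rw [this, hend]; ring
  have b3 : ((i:ℝ)+1)*t+φ + ((n:ℝ)-((i:ℝ)+1))*t - t = Real.pi - φ := by
    rw [b2]; ring
  have b1 : ((i:ℝ)+1)*t+φ - t = (i:ℝ)*t+φ := by ring
  rw [b3, b2, b1, Real.sin_pi_sub, Real.sin_pi_sub, hkey] at gB
  rw [hsplit, hA, hB, mul_add, gA, mul_left_comm, gB]
  ring


lemma zmat_psd {ι : Type*} [Fintype ι] (N : ι → ι → ℝ) (u y : ι → ℝ)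
    (hsym : ∀ i j, N i j = N j i) (hoff : ∀ i j, i ≠ j → N i j ≤ 0)
    (hu : ∀ i, 0 < u i) (heig : ∀ i, ∑ j, N i j * u j = 0) :
    0 ≤ ∑ i, ∑ j, N i j * y i * y j := by
  set f : ι → ι → ℝ := fun i j => (-N i j) * (u j / u i * (y i)^2 - y i * y j) with hf
  have step1 : ∑ i, ∑ j, f i j = ∑ i, ∑ j, N i j * y i * y j := by
    refine Finset.sum_congr rfl fun i _ => ?_
    have : ∀ j, f i j = -((y i)^2 / u i) * (N i j * u j) + N i j * y i * y j := by
      intro j; simp only [hf]; ring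
    rw [Finset.sum_congr rfl (fun j _ => this j), Finset.sum_add_distrib,
      ← Finset.mul_sum, heig i, mul_zero, zero_add]
  have step3 : ∀ i j, f i j + f j i = (-N i j) * (u j * y i - u i * y j)^2 / (u i * u j) := by
    intro i j
    have hui := (hu i).ne'
    have huj := (hu j).ne'
    simp only [hf]
    rw [hsym j i]
    field_simp
    ring
  have step3' : ∀ i j, 0 ≤ f i j + f j i := by
    intro i j
    rw [step3 i j]
    rcases eq_or_ne i j with rfl | hij
    · simp
    · exact div_nonneg (mul_nonneg (by linarith [hoff i j hij]) (sq_nonneg _))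
        (mul_nonneg (hu i).le (hu j).le)
  have step2 : (0:ℝ) ≤ ∑ i, ∑ j, (f i j + f j i) :=
    Finset.sum_nonneg fun i _ => Finset.sum_nonneg fun j _ => step3' i j
  have comm : ∑ i, ∑ j, f j i = ∑ i, ∑ j, f i j := Finset.sum_comm
  rw [← step1]
  have expand : ∑ i, ∑ j, (f i j + f j i) = (∑ i, ∑ j, f i j) + ∑ i, ∑ j, f j i := by
    simp [Finset.sum_add_distrib]
  rw [expand, comm] at step2
  linarith


noncomputable def zz (α s : ℝ) : ℂ := Complex.exp (s * Complex.I) - (α:ℂ)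

lemma zz_im (α s : ℝ) : (zz α s).im = Real.sin s := by
  simp [zz, Complex.exp_ofReal_mul_I_im]

lemma zz_ne (α s : ℝ) (hα : α < 1) (hα0 : 0 ≤ α) : zz α s ≠ 0 := by
  intro h
  have h1 : Complex.exp (s * Complex.I) = (α:ℂ) := by
    rwa [zz, sub_eq_zero] at h
  have := Complex.norm_exp_ofReal_mul_I s
  rw [h1, Complex.norm_real, Real.norm_eq_abs] at this
  rw [_root_.abs_of_nonneg hα0] at this
  linarith

lemma q_eq (α s : ℝ) (n : ℕ) :
    Real.sin (((n:ℝ)+1)*s) - 2*α*Real.sin ((n:ℝ)*s) + α^2*Real.sin (((n:ℝ)-1)*s)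
      = (‖zz α s‖)^2
        * Real.sin (((n:ℝ)-1)*s + 2*Complex.arg (zz α s)) := by
  have key : (zz α s)^2 * Complex.exp (((((n:ℝ)-1)*s : ℝ)) * Complex.I)
      = Complex.exp (((((n:ℝ)+1)*s : ℝ)) * Complex.I)
        - (↑(2*α) : ℂ) * Complex.exp ((((n:ℝ)*s : ℝ)) * Complex.I)
        + (↑(α^2) : ℂ) * Complex.exp (((((n:ℝ)-1)*s : ℝ)) * Complex.I) := by
    have e1 : Complex.exp ((s:ℂ) * Complex.I) * Complex.exp (((((n:ℝ)-1)*s : ℝ)) * Complex.I)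
        = Complex.exp (((((n:ℝ))*s : ℝ)) * Complex.I) := by
      rw [← Complex.exp_add]; congr 1; push_cast; ring
    have e2 : Complex.exp ((s:ℂ) * Complex.I) * Complex.exp ((((n:ℝ)*s : ℝ)) * Complex.I)
        = Complex.exp (((((n:ℝ)+1)*s : ℝ)) * Complex.I) := by
      rw [← Complex.exp_add]; congr 1; push_cast; ring
    calc (zz α s)^2 * Complex.exp (((((n:ℝ)-1)*s : ℝ)) * Complex.I)
        = Complex.exp ((s:ℂ)*Complex.I) * (Complex.exp ((s:ℂ)*Complex.I)
            * Complex.exp (((((n:ℝ)-1)*s : ℝ)) * Complex.I))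
          - (↑(2*α) : ℂ) * (Complex.exp ((s:ℂ)*Complex.I)
            * Complex.exp (((((n:ℝ)-1)*s : ℝ)) * Complex.I))
          + (↑(α^2) : ℂ) * Complex.exp (((((n:ℝ)-1)*s : ℝ)) * Complex.I) := by
          rw [zz]; push_cast; ring
      _ = _ := by rw [e1, e2]
  have key2 : (zz α s)^2 * Complex.exp (((((n:ℝ)-1)*s : ℝ)) * Complex.I)
      = (↑((‖zz α s‖)^2) : ℂ)
        * Complex.exp ((((((n:ℝ)-1)*s + 2*Complex.arg (zz α s)) : ℝ)) * Complex.I) := by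
    conv_lhs => rw [← Complex.norm_mul_exp_arg_mul_I (zz α s)]
    rw [mul_pow, sq (Complex.exp ((Complex.arg (zz α s) : ℂ) * Complex.I)),
      ← Complex.exp_add, mul_assoc, ← Complex.exp_add]
    push_cast
    ring_nf
  have him := congrArg Complex.im (key2.symm.trans key)
  simp only [Complex.sub_im, Complex.add_im, Complex.im_ofReal_mul,
    Complex.exp_ofReal_mul_I_im] at him
  linarith [him]

lemma phi_exists (n : ℕ) (hn : 4 ≤ n) (α : ℝ) (hα0 : 0 ≤ α) (hα : α < 1) (t₁ : ℝ)
    (ht₁ : IsLeast {t : ℝ | t ∈ Set.Ioo 0 Real.pi ∧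
      Real.sin (((n : ℝ) + 1) * t) - 2 * α * Real.sin ((n : ℝ) * t)
        + α ^ 2 * Real.sin (((n : ℝ) - 1) * t) = 0} t₁) :
    ∃ φ : ℝ, 0 < φ ∧ Real.sin (φ - t₁) = α * Real.sin φ
      ∧ ((n:ℝ) - 1) * t₁ + φ = Real.pi - φ := by
  obtain ⟨⟨⟨ht0, htπ⟩, hq⟩, hmin⟩ := ht₁
  set φ := Complex.arg (zz α t₁) with hφ
  have hzim : (zz α t₁).im = Real.sin t₁ := zz_im α t₁
  have hsin_pos : 0 < Real.sin t₁ := Real.sin_pos_of_pos_of_lt_pi ht0 htπ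
  have hφpos : 0 < φ := by
    rcases lt_or_eq_of_le (Complex.arg_nonneg_iff.mpr (by rw [hzim]; positivity)) with h | h
    · exact h
    · exfalso
      have := Complex.arg_eq_zero_iff.mp h.symm
      rw [hzim] at this
      linarith [this.2]
  -- continuity of g on [0, t₁]
  set g : ℝ → ℝ := fun s => ((n:ℝ)-1)*s + 2*Complex.arg (zz α s) with hg
  have hg_cont : ContinuousOn g (Set.Icc 0 t₁) := by
    have hz_cont : Continuous (fun s : ℝ => zz α s) := by
      unfold zz
      fun_prop
    have harg : ∀ s ∈ Set.Icc 0 t₁, ContinuousAt (fun s => Complex.arg (zz α s)) s := by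
      intro s hs
      apply (Complex.continuousAt_arg _).comp hz_cont.continuousAt
      rcases eq_or_lt_of_le hs.1 with h0 | h0
      · left
        have : zz α 0 = ((1 - α : ℝ) : ℂ) := by
          simp [zz]
        rw [← h0, this]
        simp only [Complex.ofReal_re]
        linarith
      · right
        rw [zz_im]
        exact (Real.sin_pos_of_pos_of_lt_pi h0 (lt_of_le_of_lt hs.2 htπ)).ne'
    apply ContinuousOn.add
    · fun_prop
    · exact ContinuousOn.mul continuousOn_const
        (fun s hs => ((harg s hs).continuousWithinAt))
  have hg0 : g 0 = 0 := by
    have hz0 : zz α 0 = ((1 - α : ℝ) : ℂ) := by simp [zz]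
    have harg0 : Complex.arg (zz α 0) = 0 := by
      rw [hz0]; exact Complex.arg_ofReal_of_nonneg (by linarith : (0:ℝ) ≤ 1 - α)
    simp [hg, harg0]
  have habs_pos : 0 < (‖zz α t₁‖)^2 :=
    pow_pos (norm_pos_iff.mpr (zz_ne α t₁ hα hα0)) 2
  have hsg : Real.sin (g t₁) = 0 := by
    have := q_eq α t₁ n
    rw [hq] at this
    have h2 := this.symm
    rcases mul_eq_zero.mp h2 with h | h
    · exact absurd h habs_pos.ne'
    · exact h
  have hgt_pos : 0 < g t₁ := by
    have : 0 < ((n:ℝ)-1) * t₁ := by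
      apply mul_pos _ ht0
      have : (4:ℝ) ≤ (n:ℝ) := by exact_mod_cast hn
      linarith
    simp only [hg]
    linarith
  have hgt_lt : g t₁ < 2 * Real.pi := by
    by_contra hcon
    push_neg at hcon
    have hπmem : Real.pi ∈ Set.Ioo (g 0) (g t₁) := by
      rw [hg0]
      exact ⟨Real.pi_pos, by linarith [Real.pi_pos]⟩
    obtain ⟨s, hs, hgs⟩ := intermediate_value_Ioo ht0.le hg_cont hπmem
    have hq0 : Real.sin (((n : ℝ) + 1) * s) - 2 * α * Real.sin ((n : ℝ) * s)
        + α ^ 2 * Real.sin (((n : ℝ) - 1) * s) = 0 := by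
      rw [q_eq α s n]
      have : ((n:ℝ)-1)*s + 2*Complex.arg (zz α s) = Real.pi := hgs
      rw [this, Real.sin_pi, mul_zero]
    have : t₁ ≤ s := hmin ⟨⟨hs.1, lt_trans hs.2 htπ⟩, hq0⟩
    linarith [hs.2]
  obtain ⟨k, hk⟩ := Real.sin_eq_zero_iff.mp hsg
  have hk1 : k = 1 := by
    have hπ := Real.pi_pos
    have h1 : 0 < (k:ℝ) * Real.pi := by rw [hk]; exact hgt_pos
    have h2 : (k:ℝ) * Real.pi < 2 * Real.pi := by rw [hk]; exact hgt_lt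
    have hk0 : 0 < k := by
      by_contra h
      push_neg at h
      have : (k:ℝ) ≤ 0 := by exact_mod_cast h
      nlinarith
    have hk2 : k < 2 := by
      by_contra h
      push_neg at h
      have : (2:ℝ) ≤ (k:ℝ) := by exact_mod_cast h
      nlinarith
    omega
  have hgπ : g t₁ = Real.pi := by rw [← hk, hk1]; simp
  refine ⟨φ, hφpos, ?_, by simp only [hg] at hgπ; linarith⟩
  -- key: sin (φ - t₁) = α * sin φ
  have h1 : ‖zz α t₁‖ * Real.sin φ = Real.sin t₁ := by
    rw [hφ, Complex.norm_mul_sin_arg, hzim]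
  have h2 : ‖zz α t₁‖ * Real.sin (φ - t₁) = α * Real.sin t₁ := by
    have e1 : zz α t₁ * Complex.exp ((-t₁ : ℝ) * Complex.I)
        = 1 - (α:ℂ) * Complex.exp ((-t₁ : ℝ) * Complex.I) := by
      rw [zz, sub_mul, ← Complex.exp_add]
      have e0 : ((t₁:ℂ) * Complex.I + (↑(-t₁):ℝ) * Complex.I : ℂ) = 0 := by
        push_cast; ring
      rw [e0, Complex.exp_zero]
    have e2 : zz α t₁ * Complex.exp ((-t₁ : ℝ) * Complex.I)
        = (↑(‖zz α t₁‖) : ℂ) * Complex.exp ((↑(φ - t₁) : ℝ) * Complex.I) := by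
      conv_lhs => rw [← Complex.norm_mul_exp_arg_mul_I (zz α t₁)]
      rw [mul_assoc, ← Complex.exp_add, ← hφ]
      congr 2
      push_cast
      ring
    have him := congrArg Complex.im (e2.symm.trans e1)
    simp only [Complex.im_ofReal_mul, Complex.exp_ofReal_mul_I_im, Complex.sub_im,
      Complex.one_im, Complex.mul_im, Complex.ofReal_re, Complex.ofReal_im,
      Complex.exp_ofReal_mul_I_re, Real.sin_neg] at him
    linear_combination him
  have habs : 0 < ‖zz α t₁‖ := norm_pos_iff.mpr (zz_ne α t₁ hα hα0)
  have hfin : ‖zz α t₁‖ * Real.sin (φ - t₁)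
      = ‖zz α t₁‖ * (α * Real.sin φ) := by
    rw [h2, ← h1]; ring
  exact mul_left_cancel₀ habs.ne' hfin

end NumRadAux

open NumRadAux

/-- For `n ≥ 4` and `0 ≤ α ≤ √(cos(2π/(n+1)))`, with `t₁` the smallest zero
in `(0, π)` of `q_{n,α}(t) = sin((n+1)t) − 2α sin(nt) + α² sin((n−1)t)`,
the numerical radius of `J_n(α)` is `α(cos t₁ − α)/(1 − 2α cos t₁ + α²)`. -/
theorem numRadius_Jmat_small_alpha (n : ℕ) (hn : 4 ≤ n) (α : ℝ)
    (hα0 : 0 ≤ α) (hα1 : α ≤ Real.sqrt (Real.cos (2 * Real.pi / ((n : ℝ) + 1))))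
    (t₁ : ℝ)
    (ht₁ : IsLeast {t : ℝ | t ∈ Set.Ioo 0 Real.pi ∧
      Real.sin (((n : ℝ) + 1) * t) - 2 * α * Real.sin ((n : ℝ) * t)
        + α ^ 2 * Real.sin (((n : ℝ) - 1) * t) = 0} t₁) :
    numRadius (Jmat n α)
      = α * (Real.cos t₁ - α) / (1 - 2 * α * Real.cos t₁ + α ^ 2) := by
  classical
  have hπ := Real.pi_pos
  have hn4 : (4:ℝ) ≤ (n:ℝ) := by exact_mod_cast hn
  -- α < 1
  have hα : α < 1 := by
    have h0 : (0:ℝ) < 2*Real.pi/((n:ℝ)+1) := by positivity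
    have h1 : 2*Real.pi/((n:ℝ)+1) ≤ Real.pi := by
      rw [div_le_iff₀ (by linarith)]; nlinarith
    have hc1 : Real.cos (2*Real.pi/((n:ℝ)+1)) < 1 := by
      have := Real.cos_lt_cos_of_nonneg_of_le_pi (le_refl 0) h1 h0
      rwa [Real.cos_zero] at this
    have hsq : Real.sqrt (Real.cos (2*Real.pi/((n:ℝ)+1))) < 1 := by
      rcases le_or_gt (Real.cos (2*Real.pi/((n:ℝ)+1))) 0 with h | h
      · rw [Real.sqrt_eq_zero'.mpr h]; norm_num
      · have := (Real.sqrt_lt_sqrt_iff h.le).mpr hc1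
        rwa [Real.sqrt_one] at this
    exact lt_of_le_of_lt hα1 hsq
  obtain ⟨φ, hφpos, hkeyφ, hendφ⟩ := phi_exists n hn α hα0 hα t₁ ht₁
  have ht0 : 0 < t₁ := ht₁.1.1.1
  have htπ : t₁ < Real.pi := ht₁.1.1.2
  have hcos1 : Real.cos t₁ ≤ 1 := Real.cos_le_one t₁
  have hρ2pos : (0:ℝ) < 1 - 2*α*Real.cos t₁ + α^2 := by nlinarith
  set ρ2 : ℝ := 1 - 2*α*Real.cos t₁ + α^2 with hρ2
  set c : ℝ := (1 - α^2)/ρ2 with hc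
  set v : ℝ := α * (Real.cos t₁ - α) / ρ2 with hv
  have hvc : c = 2*v + 1 := by
    rw [hc, hv]; field_simp; ring
  -- the positive eigenvector
  set u : Fin n → ℝ := fun j => Real.sin ((j:ℕ) * t₁ + φ) with hu
  have hupos : ∀ j : Fin n, 0 < u j := by
    intro j
    have hjn : ((j:ℕ):ℝ) ≤ (n:ℝ) - 1 := by
      have : (j:ℕ) + 1 ≤ n := j.isLt
      have : ((j:ℕ):ℝ) + 1 ≤ (n:ℝ) := by exact_mod_cast this
      linarith
    have h1 : (0:ℝ) < (j:ℕ) * t₁ + φ := by positivity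
    have h2 : ((j:ℕ):ℝ) * t₁ + φ < Real.pi := by
      have : ((j:ℕ):ℝ) * t₁ ≤ ((n:ℝ)-1) * t₁ := by
        apply mul_le_mul_of_nonneg_right hjn ht0.le
      nlinarith [hφpos]
    exact Real.sin_pos_of_pos_of_lt_pi h1 h2
  have hKu : ∀ i : Fin n, ∑ j : Fin n, α^(Nat.dist (i:ℕ) (j:ℕ)) * u j = c * u i := by
    intro i
    have hke := key_eigen α t₁ φ n hkeyφ hendφ (i:ℕ) i.isLt
    have hconv : ∑ j : Fin n, α^(Nat.dist (i:ℕ) (j:ℕ)) * u j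
        = ∑ j ∈ Finset.range n, α^(Nat.dist (i:ℕ) j) * Real.sin (j*t₁ + φ) := by
      rw [← Fin.sum_univ_eq_sum_range (fun j => α^(Nat.dist (i:ℕ) j) * Real.sin (j*t₁ + φ)) n]
    rw [hconv, hc, div_mul_eq_mul_div, eq_div_iff hρ2pos.ne', hρ2]
    simp only [hu]
    linear_combination hke
  -- quadratic form bound
  have hdiag : ∀ (w : Fin n → ℝ) (i : Fin n),
      ∑ j : Fin n, (if i = j then c else 0) * w j = c * w i := by
    intro w i
    simp [ite_mul, zero_mul, Finset.sum_ite_eq]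
  have hquad : ∀ y : Fin n → ℝ,
      ∑ i : Fin n, ∑ j : Fin n, α^(Nat.dist (i:ℕ) (j:ℕ)) * (y i * y j)
        ≤ c * ∑ i : Fin n, (y i)^2 := by
    intro y
    set P : Fin n → Fin n → ℝ :=
      fun i j => (if i = j then c else 0) - α^(Nat.dist (i:ℕ) (j:ℕ)) with hP
    have hsym : ∀ i j, P i j = P j i := by
      intro i j
      by_cases h : i = j
      · subst h; rfl
      · simp only [hP, if_neg h, if_neg (Ne.symm h), Nat.dist_comm]
    have hoff : ∀ i j, i ≠ j → P i j ≤ 0 := by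
      intro i j hij
      simp only [hP, if_neg hij]
      have : (0:ℝ) ≤ α^(Nat.dist (i:ℕ) (j:ℕ)) := pow_nonneg hα0 _
      linarith
    have heig : ∀ i, ∑ j : Fin n, P i j * u j = 0 := by
      intro i
      simp only [hP, sub_mul, Finset.sum_sub_distrib]
      rw [hKu i, hdiag u i]
      ring
    have hpsd := zmat_psd P u y hsym hoff hupos heig
    have hexp : ∑ i : Fin n, ∑ j : Fin n, P i j * y i * y j
        = c * ∑ i : Fin n, (y i)^2
          - ∑ i : Fin n, ∑ j : Fin n, α^(Nat.dist (i:ℕ) (j:ℕ)) * (y i * y j) := by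
      rw [Finset.mul_sum, ← Finset.sum_sub_distrib]
      refine Finset.sum_congr rfl fun i _ => ?_
      have e1 : ∀ j : Fin n, P i j * y i * y j
          = (if i = j then c else 0) * (fun k => y i * y k) j
            - α^(Nat.dist (i:ℕ) (j:ℕ)) * (y i * y j) := by
        intro j; simp only [hP]; ring
      rw [Finset.sum_congr rfl fun j _ => e1 j, Finset.sum_sub_distrib, hdiag (fun k => y i * y k) i]
      ring
    rw [hexp] at hpsd
    linarith
  -- entrywise norms of J
  have hJnorm : ∀ i j : Fin n, ‖Jmat n α i j‖ = (if i < j then α^((j:ℕ)-(i:ℕ)) else 0) := by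
    intro i j
    by_cases h : i < j
    · simp only [Jmat, Matrix.of_apply, if_pos h]
      rw [norm_pow, Complex.norm_real, Real.norm_eq_abs, _root_.abs_of_nonneg hα0]
    · simp [Jmat, h]
  set Jr : Fin n → Fin n → ℝ := fun i j => if i < j then α^((j:ℕ)-(i:ℕ)) else 0 with hJr
  have hJr0 : ∀ i j, 0 ≤ Jr i j := by
    intro i j
    simp only [hJr]
    by_cases h : i < j
    · rw [if_pos h]; exact pow_nonneg hα0 _
    · rw [if_neg h]
  have hJof : ∀ i j : Fin n, Jmat n α i j = ((Jr i j : ℝ) : ℂ) := by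
    intro i j
    simp only [hJr, Jmat, Matrix.of_apply]
    by_cases h : i < j
    · rw [if_pos h, if_pos h]; push_cast; ring
    · rw [if_neg h, if_neg h]; norm_num
  -- pointwise splitting of the symmetric kernel
  have hpoint : ∀ (y : Fin n → ℝ) (i j : Fin n), α^(Nat.dist (i:ℕ) (j:ℕ)) * (y i * y j)
      = Jr i j * (y i * y j) + Jr j i * (y i * y j)
        + (if i = j then (y i)^2 else 0) := by
    intro y i j
    rcases lt_trichotomy i j with h | h | h
    · have hn' : (i:ℕ) ≤ (j:ℕ) := le_of_lt h
      rw [Nat.dist_eq_sub_of_le hn']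
      simp only [hJr, if_pos h, if_neg (asymm h), if_neg (ne_of_lt h)]
      ring
    · subst h
      rw [Nat.dist_self, pow_zero, if_pos rfl]
      simp only [hJr, if_neg (lt_irrefl i)]
      ring
    · have hn' : (j:ℕ) ≤ (i:ℕ) := le_of_lt h
      rw [Nat.dist_eq_sub_of_le_right hn']
      simp only [hJr, if_pos h, if_neg (asymm h), if_neg (ne_of_gt h)]
      ring
  have hdouble : ∀ y : Fin n → ℝ,
      ∑ i : Fin n, ∑ j : Fin n, α^(Nat.dist (i:ℕ) (j:ℕ)) * (y i * y j)
        = 2 * (∑ i : Fin n, ∑ j : Fin n, Jr i j * (y i * y j)) + ∑ i : Fin n, (y i)^2 := by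
    intro y
    have step : ∑ i : Fin n, ∑ j : Fin n, α^(Nat.dist (i:ℕ) (j:ℕ)) * (y i * y j)
        = (∑ i : Fin n, ∑ j : Fin n, Jr i j * (y i * y j))
          + (∑ i : Fin n, ∑ j : Fin n, Jr j i * (y i * y j))
          + ∑ i : Fin n, ∑ j : Fin n, (if i = j then (y i)^2 else 0) := by
      simp only [← Finset.sum_add_distrib]
      exact Finset.sum_congr rfl fun i _ => Finset.sum_congr rfl fun j _ => hpoint y i j
    rw [step]
    have e2 : ∑ i : Fin n, ∑ j : Fin n, Jr j i * (y i * y j)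
        = ∑ i : Fin n, ∑ j : Fin n, Jr i j * (y i * y j) := by
      rw [Finset.sum_comm]
      exact Finset.sum_congr rfl fun i _ => Finset.sum_congr rfl fun j _ => by ring
    have e3 : ∑ i : Fin n, ∑ j : Fin n, (if i = j then (y i)^2 else 0) = ∑ i : Fin n, (y i)^2 := by
      refine Finset.sum_congr rfl fun i _ => ?_
      simp [Finset.sum_ite_eq]
    rw [e2, e3]
    ring
  -- bound for nonnegative vectors of unit square-norm
  have hJsum : ∀ y : Fin n → ℝ, (∑ i : Fin n, (y i)^2 = 1) →
      ∑ i : Fin n, ∑ j : Fin n, Jr i j * (y i * y j) ≤ v := by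
    intro y hy1
    have h1 := hquad y
    have h2 := hdouble y
    rw [hy1] at h1 h2
    rw [h2] at h1
    rw [hvc] at h1
    linarith
  -- unit vectors give values ≤ v
  have hub : ∀ r : ℝ, (∃ x : EuclideanSpace ℂ (Fin n), ‖x‖ = 1 ∧
      r = ‖(inner ℂ x (Matrix.toEuclideanLin (Jmat n α) x) : ℂ)‖) → r ≤ v := by
    rintro r ⟨x, hx, rfl⟩
    set y : Fin n → ℝ := fun i => ‖x i‖ with hy
    have hy1 : ∑ i : Fin n, (y i)^2 = 1 := by
      have hne := EuclideanSpace.norm_eq x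
      rw [hx] at hne
      have := congrArg (fun r : ℝ => r^2) hne
      simp only [one_pow] at this
      rw [Real.sq_sqrt (Finset.sum_nonneg fun i _ => sq_nonneg _)] at this
      exact this.symm
    have hinner : (inner ℂ x (Matrix.toEuclideanLin (Jmat n α) x) : ℂ)
        = ∑ i : Fin n, (starRingEnd ℂ) (x i) * ∑ j : Fin n, Jmat n α i j * x j := by
      rw [PiLp.inner_apply]
      refine Finset.sum_congr rfl fun i _ => ?_
      rw [RCLike.inner_apply, mul_comm]
      congr 1
    rw [hinner]
    calc ‖∑ i : Fin n, (starRingEnd ℂ) (x i) * ∑ j : Fin n, Jmat n α i j * x j‖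
        ≤ ∑ i : Fin n, ‖(starRingEnd ℂ) (x i) * ∑ j : Fin n, Jmat n α i j * x j‖ :=
          norm_sum_le _ _
      _ ≤ ∑ i : Fin n, ∑ j : Fin n, Jr i j * (y i * y j) := by
          refine Finset.sum_le_sum fun i _ => ?_
          rw [norm_mul, RCLike.norm_conj]
          have hSi : ‖∑ j : Fin n, Jmat n α i j * x j‖ ≤ ∑ j : Fin n, Jr i j * y j := by
            refine le_trans (norm_sum_le _ _) (Finset.sum_le_sum fun j _ => ?_)
            rw [norm_mul, hJnorm i j]
          calc ‖x i‖ * ‖∑ j : Fin n, Jmat n α i j * x j‖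
              ≤ ‖x i‖ * ∑ j : Fin n, Jr i j * y j := by
                exact mul_le_mul_of_nonneg_left hSi (norm_nonneg _)
            _ = ∑ j : Fin n, Jr i j * (y i * y j) := by
                rw [Finset.mul_sum]
                exact Finset.sum_congr rfl fun j _ => by simp only [hy]; ring
      _ ≤ v := hJsum y hy1
  -- the witness
  haveI : NeZero n := ⟨by omega⟩
  have hU2pos : 0 < ∑ i : Fin n, (u i)^2 := by
    refine Finset.sum_pos (fun i _ => pow_pos (hupos i) 2) ?_
    exact ⟨⟨0, by omega⟩, Finset.mem_univ _⟩
  set U : ℝ := Real.sqrt (∑ i : Fin n, (u i)^2) with hUdef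
  have hUpos : 0 < U := Real.sqrt_pos.mpr hU2pos
  have hUsq : U^2 = ∑ i : Fin n, (u i)^2 := Real.sq_sqrt hU2pos.le
  set a : Fin n → ℝ := fun i => u i / U with ha
  have ha1 : ∑ i : Fin n, (a i)^2 = 1 := by
    simp only [ha, div_pow, ← Finset.sum_div, ← hUsq]
    field_simp
  have haKu : ∀ i : Fin n, ∑ j : Fin n, α^(Nat.dist (i:ℕ) (j:ℕ)) * a j = c * a i := by
    intro i
    calc ∑ j : Fin n, α^(Nat.dist (i:ℕ) (j:ℕ)) * a j
        = (∑ j : Fin n, α^(Nat.dist (i:ℕ) (j:ℕ)) * u j) / U := by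
          rw [Finset.sum_div]
          exact Finset.sum_congr rfl fun j _ => by simp only [ha]; ring
      _ = c * u i / U := by rw [hKu i]
      _ = c * a i := by simp only [ha]; ring
  have ha0 : ∀ i : Fin n, 0 ≤ a i := fun i => div_nonneg (hupos i).le hUpos.le
  set xw : EuclideanSpace ℂ (Fin n) := WithLp.toLp 2 (fun i => ((a i : ℝ) : ℂ)) with hxw
  have hxwnorm : ‖xw‖ = 1 := by
    rw [EuclideanSpace.norm_eq]
    have hni : ∀ i : Fin n, ‖xw i‖^2 = (a i)^2 := by
      intro i
      simp only [hxw]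
      rw [Complex.norm_real, Real.norm_eq_abs, _root_.sq_abs]
    rw [Finset.sum_congr rfl fun i _ => hni i, ha1, Real.sqrt_one]
  set W : ℝ := ∑ i : Fin n, a i * ∑ j : Fin n, Jr i j * a j with hW
  have hW2 : W = ∑ i : Fin n, ∑ j : Fin n, Jr i j * (a i * a j) := by
    rw [hW]
    refine Finset.sum_congr rfl fun i _ => ?_
    rw [Finset.mul_sum]
    exact Finset.sum_congr rfl fun j _ => by ring
  have hWv : W = v := by
    have h2 := hdouble a
    rw [ha1] at h2
    have h3 : ∑ i : Fin n, ∑ j : Fin n, α^(Nat.dist (i:ℕ) (j:ℕ)) * (a i * a j) = c := by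
      calc ∑ i : Fin n, ∑ j : Fin n, α^(Nat.dist (i:ℕ) (j:ℕ)) * (a i * a j)
          = ∑ i : Fin n, a i * ∑ j : Fin n, α^(Nat.dist (i:ℕ) (j:ℕ)) * a j := by
            refine Finset.sum_congr rfl fun i _ => ?_
            rw [Finset.mul_sum]
            exact Finset.sum_congr rfl fun j _ => by ring
        _ = ∑ i : Fin n, a i * (c * a i) := by
            exact Finset.sum_congr rfl fun i _ => by rw [haKu i]
        _ = c * ∑ i : Fin n, (a i)^2 := by
            rw [Finset.mul_sum]
            exact Finset.sum_congr rfl fun i _ => by ring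
        _ = c := by rw [ha1, mul_one]
    rw [h3, hvc, ← hW2] at h2
    linarith
  have hWnonneg : 0 ≤ W := by
    rw [hW2]
    exact Finset.sum_nonneg fun i _ => Finset.sum_nonneg fun j _ =>
      mul_nonneg (hJr0 i j) (mul_nonneg (ha0 i) (ha0 j))
  have hval : (inner ℂ xw (Matrix.toEuclideanLin (Jmat n α) xw) : ℂ) = ((W:ℝ):ℂ) := by
    rw [PiLp.inner_apply]
    have hterm : ∀ i : Fin n, (inner ℂ (xw i) ((Matrix.toEuclideanLin (Jmat n α) xw) i) : ℂ)
        = ((a i * ∑ j : Fin n, Jr i j * a j : ℝ) : ℂ) := by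
      intro i
      rw [RCLike.inner_apply]
      have hmv : (Matrix.toEuclideanLin (Jmat n α) xw) i = ∑ j : Fin n, Jmat n α i j * xw j := rfl
      rw [hmv, Finset.sum_congr rfl fun j _ => by rw [hJof i j]]
      simp only [hxw, Complex.conj_ofReal]
      push_cast
      ring
    rw [Finset.sum_congr rfl fun i _ => hterm i, hW]
    push_cast
    ring
  have hnorm_val : ‖(inner ℂ xw (Matrix.toEuclideanLin (Jmat n α) xw) : ℂ)‖ = W := by
    rw [hval, Complex.norm_real, Real.norm_eq_abs, _root_.abs_of_nonneg hWnonneg]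
  have hGreatest : IsGreatest { r : ℝ | ∃ x : EuclideanSpace ℂ (Fin n), ‖x‖ = 1 ∧
      r = ‖(inner ℂ x (Matrix.toEuclideanLin (Jmat n α) x) : ℂ)‖ } v := by
    constructor
    · exact ⟨xw, hxwnorm, by rw [hnorm_val, hWv]⟩
    · rintro r hr
      exact hub r hr
  show numRadius (Jmat n α) = v
  unfold numRadius
  exact hGreatest.csSup_eq
end

section
/- Let n ≥ 2 and let α ∈ ℂ with |α| < 1. Then the numerical radius of T_n(α) depends only on |α|: w(T_n(α)) = w(T_n(|α|)). -/
/-- The matrix `T_n(α)` of the compressed adjoint shift `S*(φ)` for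
`φ(z) = ((z−α)/(1−ᾱz))ⁿ`: its `(l,k)` entry is `ᾱ` if `l = k`,
`(1 − |α|²)(−α)^{k−l−1}` if `k > l`, and `0` otherwise. -/
noncomputable def Tmat (n : ℕ) (α : ℂ) : Matrix (Fin n) (Fin n) ℂ :=
  Matrix.of fun l k : Fin n =>
    if l = k then (starRingEnd ℂ) α
    else if l < k then ((1 - ‖α‖ ^ 2 : ℝ) : ℂ) * (-α) ^ ((k : ℕ) - (l : ℕ) - 1)
    else 0

lemma inner_toEuclideanLin_eq {n : ℕ} (A : Matrix (Fin n) (Fin n) ℂ)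
    (x : EuclideanSpace ℂ (Fin n)) :
    (inner ℂ x (Matrix.toEuclideanLin A x) : ℂ)
      = ∑ i, ∑ j, (starRingEnd ℂ) (x i) * A i j * x j := by
  have h : ∀ i, (Matrix.toEuclideanLin A x) i = ∑ j, A i j * x j := by
    intro i
    simp [Matrix.toEuclideanLin_apply, Matrix.mulVec, dotProduct]
  rw [PiLp.inner_apply]
  simp only [h, RCLike.inner_apply, Finset.mul_sum, mul_assoc]
  refine Finset.sum_congr rfl fun i _ => ?_
  rw [Finset.sum_mul]
  refine Finset.sum_congr rfl fun j _ => ?_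
  ring

lemma key_entry (n : ℕ) (α : ℂ) (hα0 : α ≠ 0) (u : ℂ) (hu : u = α / (‖α‖ : ℝ))
    (i j : Fin n) (x : Fin n → ℂ) :
    (starRingEnd ℂ) (x i) * Tmat n α i j * x j =
      (starRingEnd ℂ) u *
        ((starRingEnd ℂ) (u ^ (i:ℕ) * x i) * Tmat n ((‖α‖ : ℝ) : ℂ) i j
          * (u ^ (j:ℕ) * x j)) := by
  have hr : (0:ℝ) < ‖α‖ := by
    exact norm_pos_iff.mpr hα0
  have habs : ‖((‖α‖ : ℝ) : ℂ)‖ = ‖α‖ := by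
    simp [Complex.norm_real, abs_of_pos hr]
  have hu1 : ‖u‖ = 1 := by
    rw [hu]; simp [norm_div, Complex.norm_real, abs_of_pos hr, div_self hr.ne']
  have hu0 : u ≠ 0 := by
    intro h; rw [h] at hu1; simp at hu1
  have hcu : (starRingEnd ℂ) u = u⁻¹ := by
    rw [Complex.inv_def]
    simp [Complex.normSq_eq_norm_sq, hu1]
  have hRne : ((‖α‖ : ℝ) : ℂ) ≠ 0 := by exact_mod_cast hr.ne'
  have hα : α = ((‖α‖ : ℝ) : ℂ) * u := by
    rw [hu]; field_simp
  have hC : ((1 - ‖((‖α‖ : ℝ) : ℂ)‖ ^ 2 : ℝ) : ℂ)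
      = ((1 - ‖α‖ ^ 2 : ℝ) : ℂ) := by rw [habs]
  rcases lt_trichotomy i j with h | h | h
  · obtain ⟨m, hm⟩ : ∃ m : ℕ, (j:ℕ) = (i:ℕ) + 1 + m := ⟨(j:ℕ) - (i:ℕ) - 1, by omega⟩
    have hij : i ≠ j := Fin.ne_of_lt h
    have hsub : (j:ℕ) - (i:ℕ) - 1 = m := by omega
    simp only [Tmat, Matrix.of_apply, if_neg hij, if_pos h, hC, hsub]
    have hneg : -α = (-((‖α‖ : ℝ):ℂ)) * u := by
      conv_lhs => rw [hα]
      ring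
    have hpow : (-α) ^ m = (-((‖α‖ : ℝ):ℂ)) ^ m * u ^ m := by
      rw [← mul_pow, hneg]
    rw [hpow, hm, map_mul, map_pow, hcu]
    rw [pow_add, pow_add, pow_one]
    simp only [inv_pow]
    field_simp
  · have hij : i = j := Fin.le_antisymm (le_of_eq h) (ge_of_eq h)
    subst hij
    simp only [Tmat, Matrix.of_apply, if_pos rfl]
    have hconjα : (starRingEnd ℂ) α = ((‖α‖ : ℝ):ℂ) * u⁻¹ := by
      conv_lhs => rw [hα]
      rw [map_mul, Complex.conj_ofReal, hcu]
    rw [hconjα, Complex.conj_ofReal, map_mul, map_pow, hcu]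
    simp only [inv_pow, if_true]
    field_simp
  · have hij : i ≠ j := Fin.ne_of_gt h
    have hij2 : ¬ (i < j) := not_lt_of_gt h
    simp [Tmat, Matrix.of_apply, if_neg hij, if_neg hij2]

noncomputable def scaleVec (n : ℕ) (v : ℂ) (x : EuclideanSpace ℂ (Fin n)) :
    EuclideanSpace ℂ (Fin n) := WithLp.toLp 2 (fun j => v ^ (j:ℕ) * x j)

lemma key_inner (n : ℕ) (α : ℂ) (hα0 : α ≠ 0) (u : ℂ) (hu : u = α / (‖α‖ : ℝ))
    (x : EuclideanSpace ℂ (Fin n)) :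
    (inner ℂ x (Matrix.toEuclideanLin (Tmat n α) x) : ℂ)
      = (starRingEnd ℂ) u *
        (inner ℂ (scaleVec n u x)
          (Matrix.toEuclideanLin (Tmat n ((‖α‖ : ℝ) : ℂ)) (scaleVec n u x)) : ℂ) := by
  rw [inner_toEuclideanLin_eq, inner_toEuclideanLin_eq, Finset.mul_sum]
  refine Finset.sum_congr rfl fun i _ => ?_
  rw [Finset.mul_sum]
  refine Finset.sum_congr rfl fun j _ => ?_
  simpa [scaleVec] using key_entry n α hα0 u hu i j x

/-- For `n ≥ 2` and `|α| < 1`, the numerical radius of `T_n(α)` depends only on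
`|α|`: one has `w(T_n(α)) = w(T_n(|α|))`. -/
theorem numRadius_Tmat_abs (n : ℕ) (hn : 2 ≤ n) (α : ℂ) (hα : ‖α‖ < 1) :
    numRadius (Tmat n α) = numRadius (Tmat n ((‖α‖ : ℝ) : ℂ)) := by
  rcases eq_or_ne α 0 with rfl | hα0
  · norm_num
  set u : ℂ := α / (‖α‖ : ℝ) with hu
  have hr : (0:ℝ) < ‖α‖ := by
    exact norm_pos_iff.mpr hα0
  have hu1 : ‖u‖ = 1 := by
    rw [hu]; simp [norm_div, Complex.norm_real, abs_of_pos hr, div_self hr.ne']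
  have hu0 : u ≠ 0 := by
    intro h; rw [h] at hu1; simp at hu1
  have hnormmap : ∀ (v : ℂ) (_ : ‖v‖ = 1) (x : EuclideanSpace ℂ (Fin n)),
      ‖scaleVec n v x‖ = ‖x‖ := by
    intro v hv x
    rw [EuclideanSpace.norm_eq, EuclideanSpace.norm_eq]
    congr 1
    refine Finset.sum_congr rfl fun j _ => ?_
    have : ‖(scaleVec n v x) j‖ = ‖x j‖ := by
      show ‖v ^ (j:ℕ) * x j‖ = ‖x j‖
      rw [norm_mul, norm_pow]
      simp [hv]
    rw [this]
  have hcu1 : ‖(starRingEnd ℂ) u‖ = 1 := by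
    simp [hu1]
  unfold numRadius
  congr 1
  ext r
  constructor
  · rintro ⟨x, hx, rfl⟩
    refine ⟨scaleVec n u x, by rw [hnormmap u hu1 x, hx], ?_⟩
    rw [key_inner n α hα0 u hu x, norm_mul, hcu1, one_mul]
  · rintro ⟨y, hy, rfl⟩
    set x : EuclideanSpace ℂ (Fin n) := scaleVec n u⁻¹ y with hxdef
    have hxy : scaleVec n u x = y := by
      ext j
      show u ^ (j:ℕ) * (u⁻¹ ^ (j:ℕ) * y j) = y j
      field_simp
      rw [← mul_pow, mul_one_div_cancel hu0, one_pow, one_mul]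
    refine ⟨x, ?_, ?_⟩
    · have hiu : ‖u⁻¹‖ = 1 := by rw [norm_inv, hu1]; norm_num
      rw [hxdef, hnormmap u⁻¹ hiu y, hy]
    · rw [key_inner n α hα0 u hu x, norm_mul, hcu1, one_mul, hxy]
end
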